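/- arXiv:math/0507264 — 3 statements merged into one kernel-verified Lean document; each statement's English description precedes it below -/
import Mathlib

section
/- Let a < b and α < β be real numbers. Let u be C² on (a,b) and C¹ on [a,b], with u'(b) = 0 and u'(t) < 0 for all t ∈ (a,b). Let v be C² on (α,β) and C¹ on [α,β], with v(α) ≤ u(a), v(β) = u(b), v(β) < v(s) < v(α) for all s ∈ (α,β), and v'(α) = 0. Suppose that whenever u(t) = v(s) for some t ∈ (a,b) and s ∈ (α,β), one has u''(t) ≤ v''(s). Then β − α = b − a and v(s) = u(s + b − β) for all s ∈ [α,β]; in particular v is a translate of u and v(α) = u(a). -/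
set_option linter.unusedSectionVars false
set_option maxHeartbeats 2000000
open Set Filter Topology MeasureTheory intervalIntegral

namespace LiNirenberg

structure Setup (a b α β : ℝ) (u v : ℝ → ℝ) : Prop where
  hab : a < b
  hαβ : α < β
  hu2 : ContDiffOn ℝ 2 u (Set.Ioo a b)
  hu1 : ContDiffOn ℝ 1 u (Set.Icc a b)
  hu'b : derivWithin u (Set.Icc a b) b = 0
  hu' : ∀ t ∈ Set.Ioo a b, deriv u t < 0
  hv2 : ContDiffOn ℝ 2 v (Set.Ioo α β)
  hv1 : ContDiffOn ℝ 1 v (Set.Icc α β)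
  hvα : v α ≤ u a
  hvβ : v β = u b
  hvbet : ∀ s ∈ Set.Ioo α β, v β < v s ∧ v s < v α
  hv'α : derivWithin v (Set.Icc α β) α = 0
  hmain : ∀ t ∈ Set.Ioo a b, ∀ s ∈ Set.Ioo α β, u t = v s →
      deriv (deriv u) t ≤ deriv (deriv v) s

def IsLC (α β : ℝ) (v L : ℝ → ℝ) : Prop :=
  ∀ y ∈ Set.Ioo (v β) (v α), v (L y) = y ∧ L y ∈ Set.Ioo α β ∧
    ∀ s, L y < s → s ≤ β → v s < y

variable {a b α β : ℝ} {u v : ℝ → ℝ}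

section Basics

variable (H : Setup a b α β u v)
include H

lemma ucont : ContinuousOn u (Icc a b) := H.hu1.continuousOn

lemma vcont : ContinuousOn v (Icc α β) := H.hv1.continuousOn

lemma uanti : StrictAntiOn u (Icc a b) := by
  apply strictAntiOn_of_deriv_neg (convex_Icc a b) (ucont H)
  intro x hx
  rw [interior_Icc] at hx
  exact H.hu' x hx

lemma uba : u b < u a := uanti H (left_mem_Icc.2 H.hab.le) (right_mem_Icc.2 H.hab.le) H.hab

lemma vba : v β < v α := by
  have hm : (α + β)/2 ∈ Ioo α β := by
    constructor <;> linarith [H.hαβ]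
  have := H.hvbet _ hm
  linarith [this.1, this.2]

/-- interior agreement for u' -/
lemma u_deriv_int {t : ℝ} (ht : t ∈ Ioo a b) :
    derivWithin u (Icc a b) t = deriv u t :=
  derivWithin_of_mem_nhds (Icc_mem_nhds ht.1 ht.2)

lemma v_deriv_int {s : ℝ} (hs : s ∈ Ioo α β) :
    derivWithin v (Icc α β) s = deriv v s :=
  derivWithin_of_mem_nhds (Icc_mem_nhds hs.1 hs.2)

lemma u'cont : ContinuousOn (derivWithin u (Icc a b)) (Icc a b) :=
  H.hu1.continuousOn_derivWithin (uniqueDiffOn_Icc H.hab) le_rfl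

lemma v'cont : ContinuousOn (derivWithin v (Icc α β)) (Icc α β) :=
  H.hv1.continuousOn_derivWithin (uniqueDiffOn_Icc H.hαβ) le_rfl

lemma u_hasDeriv {t : ℝ} (ht : t ∈ Ioo a b) : HasDerivAt u (deriv u t) t := by
  have h1 : DifferentiableOn ℝ u (Ioo a b) := H.hu2.differentiableOn (by norm_num)
  exact ((h1 t ht).differentiableAt (Ioo_mem_nhds ht.1 ht.2)).hasDerivAt

lemma v_hasDeriv {s : ℝ} (hs : s ∈ Ioo α β) : HasDerivAt v (deriv v s) s := by
  have h1 : DifferentiableOn ℝ v (Ioo α β) := H.hv2.differentiableOn (by norm_num)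
  exact ((h1 s hs).differentiableAt (Ioo_mem_nhds hs.1 hs.2)).hasDerivAt

lemma u'_contOn : ContinuousOn (deriv u) (Ioo a b) := by
  have := (u'cont H).mono Ioo_subset_Icc_self
  exact this.congr (fun t ht => (u_deriv_int H ht).symm) |>.congr (fun t ht => rfl)

lemma v'_contOn : ContinuousOn (deriv v) (Ioo α β) := by
  have := (v'cont H).mono Ioo_subset_Icc_self
  exact this.congr (fun s hs => (v_deriv_int H hs).symm) |>.congr (fun s hs => rfl)

lemma u''_hasDeriv {t : ℝ} (ht : t ∈ Ioo a b) :
    HasDerivAt (deriv u) (deriv (deriv u) t) t := by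
  have h2 : ContDiffOn ℝ 1 (deriv u) (Ioo a b) :=
    (H.hu2.deriv_of_isOpen isOpen_Ioo (by norm_num))
  have h1 : DifferentiableOn ℝ (deriv u) (Ioo a b) := h2.differentiableOn (by norm_num)
  exact ((h1 t ht).differentiableAt (Ioo_mem_nhds ht.1 ht.2)).hasDerivAt

lemma v''_hasDeriv {s : ℝ} (hs : s ∈ Ioo α β) :
    HasDerivAt (deriv v) (deriv (deriv v) s) s := by
  have h2 : ContDiffOn ℝ 1 (deriv v) (Ioo α β) :=
    (H.hv2.deriv_of_isOpen isOpen_Ioo (by norm_num))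
  have h1 : DifferentiableOn ℝ (deriv v) (Ioo α β) := h2.differentiableOn (by norm_num)
  exact ((h1 s hs).differentiableAt (Ioo_mem_nhds hs.1 hs.2)).hasDerivAt

lemma u''_contOn : ContinuousOn (deriv (deriv u)) (Ioo a b) := by
  have h2 : ContDiffOn ℝ 1 (deriv u) (Ioo a b) :=
    (H.hu2.deriv_of_isOpen isOpen_Ioo (by norm_num))
  exact h2.continuousOn_deriv_of_isOpen isOpen_Ioo le_rfl

lemma v''_contOn : ContinuousOn (deriv (deriv v)) (Ioo α β) := by
  have h2 : ContDiffOn ℝ 1 (deriv v) (Ioo α β) :=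
    (H.hv2.deriv_of_isOpen isOpen_Ioo (by norm_num))
  exact h2.continuousOn_deriv_of_isOpen isOpen_Ioo le_rfl

end Basics


section Rho

variable {a b : ℝ} {u : ℝ → ℝ}

/-- Generic construction of a continuous global inverse for a function strictly
decreasing on `[a,b]`. -/
lemma exists_inverse (hab : a < b) (hcont : ContinuousOn u (Icc a b))
    (hanti : StrictAntiOn u (Icc a b)) :
    ∃ ρ : ℝ → ℝ, Continuous ρ ∧ Antitone ρ ∧ (∀ t ∈ Icc a b, ρ (u t) = t) ∧
      (∀ y ∈ Icc (u b) (u a), u (ρ y) = y ∧ ρ y ∈ Icc a b) := by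
  classical
  -- extend u to a globally strictly decreasing continuous surjection
  set g : ℝ → ℝ := fun t => u (min b (max a t)) + (max (a - t) 0) - (max (t - b) 0) with hg
  have hgeq : ∀ t ∈ Icc a b, g t = u t := by
    intro t ht
    simp only [hg]
    rw [max_eq_right ht.1, min_eq_right ht.2,
      max_eq_right (by linarith [ht.1] : a - t ≤ 0),
      max_eq_right (by linarith [ht.2] : t - b ≤ 0)]
    ring
  have hcg : Continuous g := by
    apply Continuous.sub
    apply Continuous.add
    · apply hcont.comp_continuous
        (continuous_const.min (continuous_const.max continuous_id))
      intro t
      constructor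
      · exact le_min hab.le (le_max_left _ _)
      · exact min_le_left _ _
    · exact (continuous_const.sub continuous_id).max continuous_const
    · exact (continuous_id.sub continuous_const).max continuous_const
  have hmono : StrictAnti g := by
    intro s t hst
    rcases le_total s a with hsa | has
    · rcases le_total t a with hta | hat
      · -- both ≤ a
        have h1 : min b (max a s) = a := by rw [max_eq_left hsa, min_eq_right hab.le]
        have h2 : min b (max a t) = a := by rw [max_eq_left hta, min_eq_right hab.le]
        simp only [hg, h1, h2]
        have : max (a-s) 0 = a - s := max_eq_left (by linarith)
        have h4 : max (a-t) 0 = a - t := max_eq_left (by linarith)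
        have h5 : max (s-b) 0 = 0 := max_eq_right (by linarith)
        have h6 : max (t-b) 0 = 0 := max_eq_right (by linarith)
        rw [this, h4, h5, h6]; linarith
      · -- s ≤ a < t
        have h1 : min b (max a s) = a := by rw [max_eq_left hsa, min_eq_right hab.le]
        have h5 : max (s-b) 0 = 0 := max_eq_right (by linarith)
        have h3 : max (a-s) 0 = a - s := max_eq_left (by linarith)
        have h4 : max (a-t) 0 = 0 := max_eq_right (by linarith)
        simp only [hg, h1, h3, h5, h4]
        rcases le_total t b with htb | hbt
        · have h2 : min b (max a t) = t := by rw [max_eq_right hat, min_eq_right htb]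
          have h6 : max (t-b) 0 = 0 := max_eq_right (by linarith)
          rw [h2, h6]
          have := hanti (left_mem_Icc.2 hab.le) (mem_Icc.2 ⟨hat, htb⟩)
          rcases eq_or_lt_of_le hat with rfl | hat'
          · linarith
          · have := this hat'; linarith
        · have h2 : min b (max a t) = b := by
            rw [min_eq_left]; exact le_max_of_le_right hbt
          have h6 : max (t-b) 0 = t - b := max_eq_left (by linarith)
          rw [h2, h6]
          have := hanti (left_mem_Icc.2 hab.le) (right_mem_Icc.2 hab.le) hab
          linarith
    · -- a ≤ s
      have h3 : max (a-s) 0 = 0 := max_eq_right (by linarith)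
      have h4 : max (a-t) 0 = 0 := max_eq_right (by linarith)
      have hat : a ≤ t := le_trans has hst.le
      rcases le_total s b with hsb | hbs
      · have h1 : min b (max a s) = s := by rw [max_eq_right has, min_eq_right hsb]
        have h5 : max (s-b) 0 = 0 := max_eq_right (by linarith)
        simp only [hg, h1, h3, h5, h4]
        rcases le_total t b with htb | hbt
        · have h2 : min b (max a t) = t := by rw [max_eq_right hat, min_eq_right htb]
          have h6 : max (t-b) 0 = 0 := max_eq_right (by linarith)
          rw [h2, h6]
          have := hanti (mem_Icc.2 ⟨has, hsb⟩) (mem_Icc.2 ⟨hat, htb⟩) hst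
          linarith
        · have h2 : min b (max a t) = b := by
            rw [min_eq_left]; exact le_max_of_le_right hbt
          have h6 : max (t-b) 0 = t - b := max_eq_left (by linarith)
          rw [h2, h6]
          rcases eq_or_lt_of_le hsb with rfl | hsb'
          · linarith
          · have := hanti (mem_Icc.2 ⟨has, hsb⟩) (right_mem_Icc.2 hab.le) hsb'
            linarith
      · have h1 : min b (max a s) = b := by
          rw [min_eq_left]; exact le_max_of_le_right hbs
        have h2 : min b (max a t) = b := by
          rw [min_eq_left]; exact le_max_of_le_right (le_trans hbs hst.le)
        have h5 : max (s-b) 0 = s - b := max_eq_left (by linarith)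
        have h6 : max (t-b) 0 = t - b := max_eq_left (by linarith)
        simp only [hg, h1, h2, h5, h6]
        linarith
  have hsurj : Function.Surjective g := by
    intro y
    rcases le_total y (u b) with hy | hy
    · refine ⟨b + (u b - y), ?_⟩
      have h1 : min b (max a (b + (u b - y))) = b := by
        rw [min_eq_left]; exact le_max_of_le_right (by linarith)
      simp only [hg, h1]
      have h3 : max (a - (b + (u b - y))) 0 = 0 := max_eq_right (by linarith)
      have h5 : max ((b + (u b - y)) - b) 0 = u b - y := by
        rw [max_eq_left (by linarith)]; ring
      rw [h3, h5]; ring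
    · rcases le_total (u a) y with hy2 | hy2
      · refine ⟨a - (y - u a), ?_⟩
        have h1 : min b (max a (a - (y - u a))) = a := by
          rw [max_eq_left (by linarith), min_eq_right hab.le]
        simp only [hg, h1]
        have h3 : max (a - (a - (y - u a))) 0 = y - u a := by
          rw [max_eq_left (by linarith)]; ring
        have h5 : max ((a - (y - u a)) - b) 0 = 0 := max_eq_right (by linarith)
        rw [h3, h5]; ring
      · -- y ∈ [u b, u a] : IVT
        have : y ∈ u '' Icc a b := intermediate_value_Icc' hab.le hcont ⟨hy, hy2⟩
        obtain ⟨t, ht, rfl⟩ := this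
        exact ⟨t, hgeq t ht⟩
  -- order iso from -g
  have hmono' : StrictMono (fun t => -(g t)) := fun s t hst => neg_lt_neg (hmono hst)
  have hsurj' : Function.Surjective (fun t => -(g t)) := by
    intro y; obtain ⟨t, ht⟩ := hsurj (-y); exact ⟨t, by simp [ht]⟩
  set e := StrictMono.orderIsoOfSurjective _ hmono' hsurj' with he
  have hecoe : ∀ t, e t = -(g t) := fun t => rfl
  set ρ : ℝ → ℝ := fun y => e.symm (-y) with hρ
  have hρc : Continuous ρ := e.symm.continuous.comp continuous_neg
  have hρa : Antitone ρ := fun y y' h => e.symm.monotone (neg_le_neg h)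
  have hρu : ∀ t ∈ Icc a b, ρ (u t) = t := by
    intro t ht
    have h1 : e t = -(u t) := by rw [hecoe, hgeq t ht]
    show e.symm (-(u t)) = t
    rw [← h1, e.symm_apply_apply]
  have huρ : ∀ y, u b ≤ y → y ≤ u a → (u (ρ y) = y ∧ ρ y ∈ Icc a b) := by
    intro y h1 h2
    have hmem : ρ y ∈ Icc a b := by
      constructor
      · have := hρa h2
        rwa [hρu a (left_mem_Icc.2 hab.le)] at this
      · have := hρa h1
        rwa [hρu b (right_mem_Icc.2 hab.le)] at this
    refine ⟨?_, hmem⟩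
    have hg1 : g (ρ y) = y := by
      have h3 : e (ρ y) = -y := by
        show e (e.symm (-y)) = -y
        exact e.apply_symm_apply _
      rw [hecoe] at h3
      linarith
    rw [← hgeq _ hmem, hg1]
  exact ⟨ρ, hρc, hρa, hρu, fun y hy => huρ y hy.1 hy.2⟩

end Rho

section LastCrossing

variable (H : Setup a b α β u v)
include H

lemma vcont' : ContinuousOn v (Icc α β) := H.hv1.continuousOn

lemma v_hasDeriv' {s : ℝ} (hs : s ∈ Ioo α β) : HasDerivAt v (deriv v s) s := by
  have h1 : DifferentiableOn ℝ v (Ioo α β) := H.hv2.differentiableOn (by norm_num)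
  exact ((h1 s hs).differentiableAt (Ioo_mem_nhds hs.1 hs.2)).hasDerivAt

omit H in
lemma exists_LC (H : Setup a b α β u v) : ∃ L : ℝ → ℝ, IsLC α β v L := by
  classical
  refine ⟨fun y => sSup {s | s ∈ Icc α β ∧ v s = y}, ?_⟩
  intro y hy
  set T : Set ℝ := {s | s ∈ Icc α β ∧ v s = y} with hT
  have hTsub : T ⊆ Icc α β := fun s hs => hs.1
  have hTne : T.Nonempty := by
    have : y ∈ v '' Icc α β := by
      apply intermediate_value_Icc' H.hαβ.le (vcont' H)
      exact ⟨hy.1.le, hy.2.le⟩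
    obtain ⟨s, hs, hvs⟩ := this
    exact ⟨s, hs, hvs⟩
  have hTclosed : IsClosed T := by
    have : T = Icc α β ∩ v ⁻¹' {y} := by
      ext s; simp [hT, mem_Icc]
    rw [this]
    exact (vcont' H).preimage_isClosed_of_isClosed isClosed_Icc isClosed_singleton
  have hbdd : BddAbove T := BddAbove.mono hTsub bddAbove_Icc
  have hmem : sSup T ∈ T := hTclosed.csSup_mem hTne hbdd
  have hvL : v (sSup T) = y := hmem.2
  have hLIcc : sSup T ∈ Icc α β := hmem.1
  have hne1 : sSup T ≠ α := by
    intro h; rw [h] at hvL; exact absurd hvL (by linarith [hy.2])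
  have hne2 : sSup T ≠ β := by
    intro h; rw [h] at hvL; exact absurd hvL (by linarith [hy.1])
  have hLoo : sSup T ∈ Ioo α β :=
    ⟨lt_of_le_of_ne hLIcc.1 (Ne.symm hne1), lt_of_le_of_ne hLIcc.2 hne2⟩
  refine ⟨hvL, hLoo, ?_⟩
  intro s hs1 hs2
  by_contra hcon
  push_neg at hcon
  rcases eq_or_lt_of_le hcon with heq | hlt
  · have : s ∈ T := ⟨⟨le_trans hLIcc.1 hs1.le, hs2⟩, heq.symm⟩
    exact absurd (le_csSup hbdd this) (not_le.2 hs1)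
  · -- v s > y : IVT on [s, β]
    have hsβ : s ≤ β := hs2
    have : y ∈ v '' Icc s β := by
      apply intermediate_value_Icc' hsβ ((vcont' H).mono ?_)
      · exact ⟨hy.1.le, hlt.le⟩
      · exact Icc_subset_Icc (le_trans hLIcc.1 hs1.le) le_rfl
    obtain ⟨s', hs', hvs'⟩ := this
    have : s' ∈ T := ⟨⟨le_trans hLIcc.1 (le_trans hs1.le hs'.1), hs'.2⟩, hvs'⟩
    have h1 := le_csSup hbdd this
    have h2 := hs'.1
    linarith [hs1]

variable {L : ℝ → ℝ} (hL : IsLC α β v L)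
include hL

lemma L_lt {y₁ y₂ : ℝ} (h1 : y₁ ∈ Ioo (v β) (v α)) (h2 : y₂ ∈ Ioo (v β) (v α))
    (h12 : y₁ < y₂) : L y₂ < L y₁ := by
  obtain ⟨hv2, hoo2, haf2⟩ := hL y₂ h2
  obtain ⟨hv1, hoo1, haf1⟩ := hL y₁ h1
  -- find a crossing of y₁ after L y₂
  have : y₁ ∈ v '' Icc (L y₂) β := by
    apply intermediate_value_Icc' hoo2.2.le ((vcont' H).mono ?_)
    · rw [hv2]; exact ⟨h1.1.le, h12.le⟩
    · exact Icc_subset_Icc hoo2.1.le le_rfl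
  obtain ⟨s', hs', hvs'⟩ := this
  have hne : s' ≠ L y₂ := by
    intro h; rw [h, hv2] at hvs'; linarith
  have hgt : L y₂ < s' := lt_of_le_of_ne hs'.1 (Ne.symm hne)
  by_contra hcon
  push_neg at hcon
  have := haf1 s' (lt_of_le_of_lt hcon hgt) hs'.2
  linarith

lemma L_antitone {y₁ y₂ : ℝ} (h1 : y₁ ∈ Ioo (v β) (v α)) (h2 : y₂ ∈ Ioo (v β) (v α))
    (h12 : y₁ ≤ y₂) : L y₂ ≤ L y₁ := by
  rcases eq_or_lt_of_le h12 with rfl | h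
  · exact le_rfl
  · exact (L_lt H hL h1 h2 h).le

lemma v'_L_nonpos {y : ℝ} (hy : y ∈ Ioo (v β) (v α)) : deriv v (L y) ≤ 0 := by
  obtain ⟨hvy, hoo, haf⟩ := hL y hy
  by_contra hcon
  push_neg at hcon
  have hd := v_hasDeriv' H hoo
  have hslope := hasDerivAt_iff_tendsto_slope.1 hd
  have hev : ∀ᶠ s in 𝓝[>] (L y), 0 < slope v (L y) s := by
    have h2 : Tendsto (slope v (L y)) (𝓝[>] (L y)) (𝓝 (deriv v (L y))) :=
      hslope.mono_left (nhdsWithin_mono _ (fun s hs => ne_of_gt hs))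
    exact h2.eventually (eventually_gt_nhds hcon)
  have hev2 : ∀ᶠ s in 𝓝[>] (L y), s < β := eventually_nhdsWithin_of_eventually_nhds
    (tendsto_id.eventually_lt_const hoo.2)
  obtain ⟨s, hs1, hs2⟩ := ((hev.and hev2).and self_mem_nhdsWithin).exists
  have hslope_pos : 0 < (v s - v (L y)) / (s - L y) := by
    have := hs1.1
    rwa [slope_def_field] at this
  have hgt : L y < s := hs2
  have hnum : 0 < v s - v (L y) := by
    rcases div_pos_iff.1 hslope_pos with ⟨h1, _⟩ | ⟨_, h2⟩
    · exact h1
    · linarith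
  have := haf s hgt hs1.2.le
  linarith [hvy]

lemma L_left_cont {y : ℝ} (hy : y ∈ Ioo (v β) (v α)) :
    Tendsto L (𝓝[<] y) (𝓝 (L y)) := by
  obtain ⟨hvy, hoo, haf⟩ := hL y hy
  rw [Metric.tendsto_nhdsWithin_nhds]
  intro ε hε
  set ε' := min ε ((β - L y)/2) with hε'
  have hε'pos : 0 < ε' := lt_min hε (by linarith [hoo.2])
  have hε'le : L y + ε' ≤ β := by
    have : ε' ≤ (β - L y)/2 := min_le_right _ _
    linarith [hoo.2]
  -- max of v on [L y + ε', β]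
  have hKne : (Icc (L y + ε') β).Nonempty := ⟨β, by constructor <;> linarith⟩
  have hKcont : ContinuousOn v (Icc (L y + ε') β) :=
    (vcont' H).mono (Icc_subset_Icc (by linarith [hoo.1, hε'pos]) le_rfl)
  obtain ⟨sm, hsm, hmax⟩ := isCompact_Icc.exists_isMaxOn hKne hKcont
  set m := v sm with hm
  have hmlt : m < y := by
    rcases eq_or_lt_of_le hsm.2 with heq | hlt
    · rw [hm, heq]; exact hy.1
    · exact haf sm (by linarith [hsm.1]) hsm.2
  have hmge : v β ≤ m := hmax ⟨by linarith, le_rfl⟩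
  refine ⟨y - max m (v β), by have := max_lt hmlt hy.1; linarith, ?_⟩
  intro y' hy'mem hy'dist
  have hy'lt : y' < y := hy'mem
  have hy'gt : max m (v β) < y' := by
    rw [Real.dist_eq, abs_of_neg (by linarith)] at hy'dist
    linarith
  have hy'Λ : y' ∈ Ioo (v β) (v α) :=
    ⟨lt_of_le_of_lt (le_max_right _ _) hy'gt, lt_trans hy'lt hy.2⟩
  obtain ⟨hvy', hoo', haf'⟩ := hL y' hy'Λ
  have hgt : L y < L y' := L_lt H hL hy'Λ hy hy'lt
  have hnotK : L y' ∉ Icc (L y + ε') β := by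
    intro hmem
    have h7 : v (L y') ≤ m := hmax hmem
    rw [hvy'] at h7
    have h2 : m < y' := lt_of_le_of_lt (le_max_left _ _) hy'gt
    exact absurd h7 (not_le.2 h2)
  have hlt2 : L y' < L y + ε' := by
    by_contra hcon
    push_neg at hcon
    exact hnotK ⟨hcon, hoo'.2.le⟩
  rw [Real.dist_eq, abs_of_pos (by linarith)]
  have : ε' ≤ ε := min_le_left _ _
  linarith

lemma L_right_cont_regular {y : ℝ} (hy : y ∈ Ioo (v β) (v α))
    (hreg : deriv v (L y) < 0) :
    Tendsto L (𝓝[>] y) (𝓝 (L y)) := by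
  obtain ⟨hvy, hoo, haf⟩ := hL y hy
  rw [Metric.tendsto_nhdsWithin_nhds]
  intro ε hε
  set ε' := min ε ((L y - α)/2) with hε'
  have hε'pos : 0 < ε' := lt_min hε (by linarith [hoo.1])
  -- find s₀ ∈ (L y - ε', L y) with v s₀ > y
  have hd := v_hasDeriv' H hoo
  have hslope := hasDerivAt_iff_tendsto_slope.1 hd
  have hev : ∀ᶠ s in 𝓝[<] (L y), slope v (L y) s < 0 := by
    have h2 : Tendsto (slope v (L y)) (𝓝[<] (L y)) (𝓝 (deriv v (L y))) :=
      hslope.mono_left (nhdsWithin_mono _ (fun s hs => ne_of_lt hs))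
    exact h2.eventually (eventually_lt_nhds hreg)
  have hev2 : ∀ᶠ s in 𝓝[<] (L y), L y - ε' < s := eventually_nhdsWithin_of_eventually_nhds
    (tendsto_id.eventually_const_lt (by linarith))
  obtain ⟨s₀, hs₀a, hs₀b⟩ := ((hev.and hev2).and self_mem_nhdsWithin).exists
  have hs₀lt : s₀ < L y := hs₀b
  have hvs₀ : y < v s₀ := by
    have hslope_neg : (v s₀ - v (L y)) / (s₀ - L y) < 0 := by
      have := hs₀a.1
      rwa [slope_def_field] at this
    have h2 : 0 < v s₀ - v (L y) := by
      rcases div_neg_iff.1 hslope_neg with ⟨_, h⟩ | ⟨h, _⟩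
      · linarith
      · linarith
    linarith [hvy]
  have hs₀α : α < s₀ := by linarith [hs₀a.2, hε'pos, hoo.1,
    (min_le_right ε ((L y - α)/2) : ε' ≤ (L y - α)/2)]
  refine ⟨v s₀ - y, by linarith, ?_⟩
  intro y'' hy''mem hy''dist
  have hy''gt : y < y'' := hy''mem
  have hy''lt : y'' < v s₀ := by
    rw [Real.dist_eq, abs_of_pos (by linarith)] at hy''dist
    linarith
  have hy''Λ : y'' ∈ Ioo (v β) (v α) := by
    constructor
    · linarith [hy.1]
    · have : v s₀ < v α := (H.hvbet s₀ ⟨hs₀α, by linarith [hoo.2]⟩).2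
      linarith
  obtain ⟨hvy'', hoo'', haf''⟩ := hL y'' hy''Λ
  have hlt : L y'' < L y := L_lt H hL hy hy''Λ hy''gt
  -- crossing of y'' in [s₀, L y]
  have : y'' ∈ v '' Icc s₀ (L y) := by
    apply intermediate_value_Icc' hs₀lt.le ((vcont' H).mono ?_)
    · rw [hvy]; exact ⟨hy''gt.le, hy''lt.le⟩
    · exact Icc_subset_Icc hs₀α.le hoo.2.le
  obtain ⟨s', hs', hvs'⟩ := this
  -- s' ≤ L y''
  have hs'le : s' ≤ L y'' := by
    by_contra hcon
    push_neg at hcon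
    have := haf'' s' hcon (le_trans hs'.2 hoo.2.le)
    rw [hvs'] at this
    linarith
  rw [Real.dist_eq, abs_of_neg (by linarith)]
  have h5 : L y - ε' < s₀ := hs₀a.2
  have : ε' ≤ ε := min_le_left _ _
  linarith [hs'.1]

lemma L_contAt_regular {y : ℝ} (hy : y ∈ Ioo (v β) (v α))
    (hreg : deriv v (L y) < 0) : ContinuousAt L y := by
  have h1 := L_left_cont H hL hy
  have h2 := L_right_cont_regular H hL hy hreg
  rw [Metric.continuousAt_iff]
  intro ε hε
  obtain ⟨δ₁, hδ₁, hp₁⟩ := Metric.tendsto_nhdsWithin_nhds.1 h1 ε hε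
  obtain ⟨δ₂, hδ₂, hp₂⟩ := Metric.tendsto_nhdsWithin_nhds.1 h2 ε hε
  refine ⟨min δ₁ δ₂, lt_min hδ₁ hδ₂, ?_⟩
  intro x hx
  rcases lt_trichotomy x y with hlt | heq | hgt
  · exact hp₁ hlt (lt_of_lt_of_le hx (min_le_left _ _))
  · rw [heq]
    simpa using hε
  · exact hp₂ hgt (lt_of_lt_of_le hx (min_le_right _ _))

omit hL in
lemma v''_hasDeriv' {s : ℝ} (hs : s ∈ Ioo α β) :
    HasDerivAt (deriv v) (deriv (deriv v) s) s := by
  have h2 : ContDiffOn ℝ 1 (deriv v) (Ioo α β) :=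
    (H.hv2.deriv_of_isOpen isOpen_Ioo (by norm_num))
  have h1 : DifferentiableOn ℝ (deriv v) (Ioo α β) := h2.differentiableOn (by norm_num)
  exact ((h1 s hs).differentiableAt (Ioo_mem_nhds hs.1 hs.2)).hasDerivAt

omit hL in
lemma v'_contOn' : ContinuousOn (deriv v) (Ioo α β) := by
  have h0 : ContinuousOn (derivWithin v (Icc α β)) (Icc α β) :=
    H.hv1.continuousOn_derivWithin (uniqueDiffOn_Icc H.hαβ) le_rfl
  have := h0.mono (Ioo_subset_Icc_self : Ioo α β ⊆ Icc α β)
  exact this.congr (fun s hs =>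
    (derivWithin_of_mem_nhds (Icc_mem_nhds hs.1 hs.2)).symm)

/-- at a regular level, nearby levels are regular -/
lemma regular_eventually {y : ℝ} (hy : y ∈ Ioo (v β) (v α))
    (hreg : deriv v (L y) < 0) :
    ∀ᶠ y' in 𝓝 y, y' ∈ Ioo (v β) (v α) ∧ deriv v (L y') < 0 := by
  have hcL := L_contAt_regular H hL hy hreg
  have hoo := (hL y hy).2.1
  have hv' : ContinuousAt (deriv v) (L y) :=
    (v'_contOn' H).continuousAt (isOpen_Ioo.mem_nhds hoo)
  have hcomp : ContinuousAt (fun y' => deriv v (L y')) y := hv'.comp hcL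
  have h1 : ∀ᶠ y' in 𝓝 y, deriv v (L y') < 0 :=
    hcomp.eventually_lt_const hreg |>.mono (fun _ h => h)
  have h2 : ∀ᶠ y' in 𝓝 y, y' ∈ Ioo (v β) (v α) :=
    isOpen_Ioo.eventually_mem hy
  exact h2.and h1 |>.mono (fun y' h => ⟨h.1, h.2⟩)

/-- at a cap level the second derivative at the last crossing is ≤ 0 -/
lemma cap_v''_nonpos {y : ℝ} (hy : y ∈ Ioo (v β) (v α))
    (hcap : deriv v (L y) = 0) : deriv (deriv v) (L y) ≤ 0 := by
  obtain ⟨hvy, hoo, haf⟩ := hL y hy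
  by_contra hcon
  push_neg at hcon
  -- deriv v > 0 just right of L y
  have hd2 := v''_hasDeriv' H hoo
  have hslope := hasDerivAt_iff_tendsto_slope.1 hd2
  have hev : ∀ᶠ s in 𝓝[>] (L y), 0 < slope (deriv v) (L y) s := by
    have h2 : Tendsto (slope (deriv v) (L y)) (𝓝[>] (L y)) (𝓝 (deriv (deriv v) (L y))) :=
      hslope.mono_left (nhdsWithin_mono _ (fun s hs => ne_of_gt hs))
    exact h2.eventually (eventually_gt_nhds hcon)
  have hposd : ∀ᶠ s in 𝓝[>] (L y), 0 < deriv v s := by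
    filter_upwards [hev, self_mem_nhdsWithin] with s hs hmem
    rw [slope_def_field, hcap, sub_zero] at hs
    rcases div_pos_iff.1 hs with ⟨h1, _⟩ | ⟨_, h2⟩
    · exact h1
    · exfalso
      have : L y < s := hmem
      linarith
  obtain ⟨w, hw, hsub⟩ := mem_nhdsGT_iff_exists_Ioo_subset.1 hposd
  set d := min w β with hd
  have hLd : L y < d := lt_min hw hoo.2
  set c := (L y + d)/2 with hc
  have hc1 : L y < c := by simp only [hc]; linarith
  have hc2 : c < d := by simp only [hc]; linarith
  have hcβ : c ≤ β := by
    have : d ≤ β := min_le_right _ _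
    linarith
  have hmono : StrictMonoOn v (Icc (L y) c) := by
    apply strictMonoOn_of_deriv_pos (convex_Icc _ _)
    · exact (vcont' H).mono (Icc_subset_Icc hoo.1.le hcβ)
    · intro x hx
      rw [interior_Icc] at hx
      apply hsub
      constructor
      · exact hx.1
      · have : d ≤ w := min_le_left _ _
        linarith [hx.2]
  have h8 : v (L y) < v c := hmono (left_mem_Icc.2 (by linarith)) 
    (right_mem_Icc.2 (by linarith)) hc1
  have h9 := haf c hc1 hcβ
  linarith [hvy]

/-- derivative of h(y) = (v'(L y))² at regular points -/
lemma hasDerivAt_h_regular {y : ℝ} (hy : y ∈ Ioo (v β) (v α))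
    (hreg : deriv v (L y) < 0) :
    HasDerivAt (fun y' => (deriv v (L y'))^2) (2 * deriv (deriv v) (L y)) y := by
  obtain ⟨hvy, hoo, haf⟩ := hL y hy
  have hcL : ContinuousAt L y := L_contAt_regular H hL hy hreg
  have hner : deriv v (L y) ≠ 0 := ne_of_lt hreg
  have hinv : ∀ᶠ y' in 𝓝 y, v (L y') = y' := by
    filter_upwards [isOpen_Ioo.eventually_mem hy] with y' hy'
    exact (hL y' hy').1
  have hdL : HasDerivAt L (deriv v (L y))⁻¹ y :=
    HasDerivAt.of_local_left_inverse hcL (v_hasDeriv' H hoo) hner hinv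
  have hdvL : HasDerivAt (fun y' => deriv v (L y'))
      (deriv (deriv v) (L y) * (deriv v (L y))⁻¹) y :=
    (v''_hasDeriv' H hoo).comp y hdL
  have := hdvL.pow 2
  refine this.congr_deriv ?_
  have : ((2:ℕ):ℝ) = 2 := by norm_num
  field_simp
  ring

lemma h_left_cont {y : ℝ} (hy : y ∈ Ioo (v β) (v α)) :
    Tendsto (fun y' => (deriv v (L y'))^2) (𝓝[<] y) (𝓝 ((deriv v (L y))^2)) := by
  have h1 := L_left_cont H hL hy
  have h2 : ContinuousAt (deriv v) (L y) :=
    (v'_contOn' H).continuousAt (isOpen_Ioo.mem_nhds (hL y hy).2.1)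
  exact ((continuous_pow 2).continuousAt.tendsto.comp (h2.tendsto.comp h1))

lemma h_cont_regular {y : ℝ} (hy : y ∈ Ioo (v β) (v α)) (hreg : deriv v (L y) < 0) :
    ContinuousAt (fun y' => (deriv v (L y'))^2) y := by
  have h1 := L_contAt_regular H hL hy hreg
  have h2 : ContinuousAt (deriv v) (L y) :=
    (v'_contOn' H).continuousAt (isOpen_Ioo.mem_nhds (hL y hy).2.1)
  exact (continuous_pow 2).continuousAt.comp (h2.comp h1)

end LastCrossing


section Component

variable (H : Setup a b α β u v) {L : ℝ → ℝ} (hL : IsLC α β v L)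

-- the final assembled file)
variable
  (hasDerivAt_h_regular : ∀ {y : ℝ}, y ∈ Ioo (v β) (v α) → deriv v (L y) < 0 →
    HasDerivAt (fun y' => (deriv v (L y'))^2) (2 * deriv (deriv v) (L y)) y)
  (h_left_cont : ∀ {y : ℝ}, y ∈ Ioo (v β) (v α) →
    Tendsto (fun y' => (deriv v (L y'))^2) (𝓝[<] y) (𝓝 ((deriv v (L y))^2)))
  (h_cont_regular : ∀ {y : ℝ}, y ∈ Ioo (v β) (v α) → deriv v (L y) < 0 →
    ContinuousAt (fun y' => (deriv v (L y'))^2) y)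
  (v'_L_nonpos' : ∀ {y : ℝ}, y ∈ Ioo (v β) (v α) → deriv v (L y) ≤ 0)

include hasDerivAt_h_regular h_left_cont h_cont_regular v'_L_nonpos'

/-- Integral bound over a single "regular component" (A,B). -/
lemma component_integral {y₁ y₂ : ℝ}
    (hy₁ : y₁ ∈ Ioo (v β) (v α)) (hy₂ : y₂ ∈ Ioo (v β) (v α))
    {f : ℝ → ℝ}
    (hf1 : ∀ y ∈ Icc y₁ y₂, f y = 2 * deriv (deriv v) (L y))
    (hfi : IntegrableOn f (Icc y₁ y₂) volume)
    (hfc : ∀ y ∈ Ioo y₁ y₂, deriv v (L y) < 0 → ContinuousAt f y)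
    {A B : ℝ} (hA1 : y₁ ≤ A) (hAB : A < B) (hB2 : B ≤ y₂)
    (hreg : ∀ y ∈ Ioo A B, deriv v (L y) < 0) :
    (∫ y in Ioo A B, f y) ≤ (deriv v (L B))^2 -
      (if A = y₁ then (deriv v (L y₁))^2 else 0) := by
  have hsubΛ : Icc y₁ y₂ ⊆ Ioo (v β) (v α) := Icc_subset_Ioo hy₁.1 hy₂.2
  have hIccAB : Icc A B ⊆ Icc y₁ y₂ := Icc_subset_Icc hA1 hB2
  have hBΛ : B ∈ Ioo (v β) (v α) := hsubΛ ⟨le_trans hA1 hAB.le, hB2⟩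
  have hintble : ∀ c d : ℝ, c ∈ Icc y₁ y₂ → d ∈ Icc y₁ y₂ →
      IntervalIntegrable f volume c d := by
    intro c d hc hd
    apply IntegrableOn.intervalIntegrable
    apply hfi.mono_set
    intro t ht
    rcases le_total c d with h | h
    · rw [uIcc_of_le h] at ht
      exact ⟨le_trans hc.1 ht.1, le_trans ht.2 hd.2⟩
    · rw [uIcc_of_ge h] at ht
      exact ⟨le_trans hd.1 ht.1, le_trans ht.2 hc.2⟩
  have hy₁mem : y₁ ∈ Icc y₁ y₂ := ⟨le_rfl, le_trans hA1 (le_trans hAB.le hB2)⟩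
  have hy₂mem : y₂ ∈ Icc y₁ y₂ := ⟨le_trans hA1 (le_trans hAB.le hB2), le_rfl⟩
  set F : ℝ → ℝ := fun z => ∫ t in y₁..z, f t with hF
  set h : ℝ → ℝ := fun y' => (deriv v (L y'))^2 with hh
  -- continuity of F on Icc y₁ y₂
  have hFcont : ContinuousOn F (Icc y₁ y₂) := by
    have h0 := intervalIntegral.continuousOn_primitive_interval'
      (hintble y₁ y₂ hy₁mem hy₂mem)
      (by rw [uIcc_of_le hy₁mem.2]; exact hy₁mem)
    rwa [uIcc_of_le hy₁mem.2] at h0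
  -- derivative facts on Ioo A B
  have hmemIoo : ∀ y ∈ Ioo A B, y ∈ Icc y₁ y₂ := fun y hy => hIccAB ⟨hy.1.le, hy.2.le⟩
  have hmemΛ : ∀ y ∈ Ioo A B, y ∈ Ioo (v β) (v α) := fun y hy => hsubΛ (hmemIoo y hy)
  have hFd : ∀ y ∈ Ioo A B, HasDerivAt (fun z => F z - h z) 0 y := by
    intro y hy
    have hyI : y ∈ Icc y₁ y₂ := hmemIoo y hy
    have hyIoo : y ∈ Ioo y₁ y₂ := by
      constructor
      · exact lt_of_le_of_lt hA1 hy.1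
      · exact lt_of_lt_of_le hy.2 hB2
    have h1 : HasDerivAt F (f y) y := by
      apply intervalIntegral.integral_hasDerivAt_right
        (hintble y₁ y hy₁mem hyI)
      · exact ⟨Ioo y₁ y₂, isOpen_Ioo.mem_nhds hyIoo,
          ((hfi.mono_set Ioo_subset_Icc_self).aestronglyMeasurable)⟩
      · exact hfc y hyIoo (hreg y hy)
    have h2 : HasDerivAt h (f y) y := by
      have := hasDerivAt_h_regular (hmemΛ y hy) (hreg y hy)
      rwa [← hf1 y hyI] at this
    have := h1.sub h2; rwa [sub_self] at this
  -- F - h constant on Ioo A B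
  have hconst : ∀ c ∈ Ioo A B, ∀ d ∈ Ioo A B, F c - h c = F d - h d := by
    intro c hc d hd
    have := Convex.is_const_of_fderivWithin_eq_zero (𝕜 := ℝ)
      (f := fun y => F y - h y) (convex_Ioo A B)
      (fun y hy => ((hFd y hy).differentiableAt).differentiableWithinAt)
      (fun y hy => by
        rw [fderivWithin_of_isOpen isOpen_Ioo hy]
        have h0 := ((hFd y hy).hasFDerivAt).fderiv
        rw [h0]
        ext z
        simp) hc hd
    exact this
  set m := (A + B)/2 with hm
  have hmmem : m ∈ Ioo A B := ⟨by simp [hm]; linarith, by simp [hm]; linarith⟩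
  set c₁ := F m - h m with hc₁
  -- limit at B from the left
  have hne1 : (𝓝[<] B).NeBot := nhdsLT_neBot B
  have hevB : ∀ᶠ d in 𝓝[<] B, F d - h d = c₁ := by
    filter_upwards [Ioo_mem_nhdsLT_of_mem (⟨hmmem.2, le_rfl⟩ : B ∈ Ioc m B)] with d hd
    exact (hconst d ⟨lt_trans hmmem.1 hd.1, hd.2⟩ m hmmem).trans rfl
  have hFtendB : Tendsto (fun d => F d - h d) (𝓝[<] B) (𝓝 (F B - h B)) := by
    apply Tendsto.sub
    · have hcw : ContinuousWithinAt F (Icc y₁ y₂) B := hFcont B ⟨le_trans hA1 hAB.le, hB2⟩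
      apply hcw.tendsto.mono_left
      apply nhdsWithin_le_of_mem
      apply mem_of_superset (Ioo_mem_nhdsLT_of_mem (⟨lt_of_le_of_lt hA1 hAB, le_rfl⟩ : B ∈ Ioc y₁ B))
      intro t ht
      exact ⟨ht.1.le, le_trans ht.2.le hB2⟩
    · exact h_left_cont hBΛ
  have hc₁B : c₁ = F B - h B := by
    have h2 : Tendsto (fun _ : ℝ => c₁) (𝓝[<] B) (𝓝 c₁) := tendsto_const_nhds
    exact tendsto_nhds_unique (h2.congr' (hevB.mono (fun d hd => hd.symm))) hFtendB
  -- limit at A from the right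
  have hne2 : (𝓝[>] A).NeBot := nhdsGT_neBot A
  have hevA : ∀ᶠ c in 𝓝[>] A, h c = F c - c₁ := by
    filter_upwards [Ioo_mem_nhdsGT_of_mem (⟨le_rfl, hmmem.1⟩ : A ∈ Ico A m)] with d hd
    have := hconst d ⟨hd.1, lt_trans hd.2 hmmem.2⟩ m hmmem
    simp only [← hc₁] at this
    linarith [this]
  have hFtendA : Tendsto F (𝓝[>] A) (𝓝 (F A)) := by
    have hcw : ContinuousWithinAt F (Icc y₁ y₂) A := hFcont A ⟨hA1, le_trans hAB.le hB2⟩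
    apply hcw.tendsto.mono_left
    apply nhdsWithin_le_of_mem
    apply mem_of_superset (Ioo_mem_nhdsGT_of_mem (⟨le_rfl, lt_of_lt_of_le hAB hB2⟩ : A ∈ Ico A y₂))
    intro t ht
    exact ⟨le_trans hA1 ht.1.le, ht.2.le⟩
  have hhtendA : Tendsto h (𝓝[>] A) (𝓝 (F A - c₁)) := by
    apply Tendsto.congr' (hevA.mono (fun d hd => hd.symm))
    exact hFtendA.sub tendsto_const_nhds
  have hℓA_nonneg : 0 ≤ F A - c₁ := by
    apply ge_of_tendsto hhtendA
    filter_upwards with d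
    positivity
  -- the value of ∫ over Ioo A B
  have hintAB : (∫ y in Ioo A B, f y) = F B - F A := by
    have h1 : F A + ∫ t in A..B, f t = F B := by
      apply intervalIntegral.integral_add_adjacent_intervals
      · exact hintble y₁ A hy₁mem ⟨hA1, le_trans hAB.le hB2⟩
      · exact hintble A B ⟨hA1, le_trans hAB.le hB2⟩ ⟨le_trans hA1 hAB.le, hB2⟩
    have h2 : (∫ t in A..B, f t) = ∫ y in Ioo A B, f y := by
      rw [intervalIntegral.integral_of_le hAB.le, MeasureTheory.integral_Ioc_eq_integral_Ioo]
    linarith [h1, h2]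
  rw [hintAB]
  have hFBFA : F B - F A = h B - (F A - c₁) := by
    rw [hc₁B]; ring
  rw [hFBFA]
  -- final case analysis
  by_cases hAy₁ : A = y₁
  · rw [if_pos hAy₁]
    rcases lt_or_eq_of_le (v'_L_nonpos' hy₁) with hregy₁ | hcapy₁
    · have hcA : ContinuousAt h y₁ := h_cont_regular hy₁ hregy₁
      have h5 : Tendsto h (𝓝[>] y₁) (𝓝 (h y₁)) := hcA.tendsto.mono_left nhdsWithin_le_nhds
      have heq : F A - c₁ = h y₁ := by
        subst hAy₁
        exact tendsto_nhds_unique hhtendA h5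
      rw [heq]
    · have h6 : (deriv v (L y₁))^2 = 0 := by rw [hcapy₁]; norm_num
      rw [h6]
      have h7 : h B = (deriv v (L B))^2 := rfl
      linarith [hℓA_nonneg]
  · rw [if_neg hAy₁]
    have h7 : h B = (deriv v (L B))^2 := rfl
    linarith [hℓA_nonneg]

end Component


section Master

variable (H : Setup a b α β u v) {L ρ : ℝ → ℝ} (hL : IsLC α β v L)
  (hρ : ∀ y ∈ Icc (u b) (u a), u (ρ y) = y ∧ ρ y ∈ Icc a b)
  -- facts proved elsewhere:
  (L_antitone' : ∀ {y₁ y₂ : ℝ}, y₁ ∈ Ioo (v β) (v α) → y₂ ∈ Ioo (v β) (v α) →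
    y₁ ≤ y₂ → L y₂ ≤ L y₁)
  (v'_L_nonpos' : ∀ {y : ℝ}, y ∈ Ioo (v β) (v α) → deriv v (L y) ≤ 0)
  (regular_eventually' : ∀ {y : ℝ}, y ∈ Ioo (v β) (v α) → deriv v (L y) < 0 →
    ∀ᶠ y' in 𝓝 y, y' ∈ Ioo (v β) (v α) ∧ deriv v (L y') < 0)
  (cap_v''_nonpos' : ∀ {y : ℝ}, y ∈ Ioo (v β) (v α) → deriv v (L y) = 0 →
    deriv (deriv v) (L y) ≤ 0)
  (L_contAt_regular' : ∀ {y : ℝ}, y ∈ Ioo (v β) (v α) → deriv v (L y) < 0 →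
    ContinuousAt L y)
  (v''_contOn' : ContinuousOn (deriv (deriv v)) (Ioo α β))
  (hasDerivAt_G : ∀ {y : ℝ}, y ∈ Ioo (u b) (u a) →
    HasDerivAt (fun y' => (deriv u (ρ y'))^2) (2 * deriv (deriv u) (ρ y)) y)
  (G2cont : ContinuousOn (fun y => 2 * deriv (deriv u) (ρ y)) (Ioo (u b) (u a)))
  (component_integral' : ∀ {y₁ y₂ : ℝ},
    y₁ ∈ Ioo (v β) (v α) → y₂ ∈ Ioo (v β) (v α) →
    ∀ {f : ℝ → ℝ}, (∀ y ∈ Icc y₁ y₂, f y = 2 * deriv (deriv v) (L y)) →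
    IntegrableOn f (Icc y₁ y₂) volume →
    (∀ y ∈ Ioo y₁ y₂, deriv v (L y) < 0 → ContinuousAt f y) →
    ∀ {A B : ℝ}, y₁ ≤ A → A < B → B ≤ y₂ →
    (∀ y ∈ Ioo A B, deriv v (L y) < 0) →
    (∫ y in Ioo A B, f y) ≤ (deriv v (L B))^2 -
      (if A = y₁ then (deriv v (L y₁))^2 else 0))

include H hL hρ L_antitone' v'_L_nonpos' regular_eventually' cap_v''_nonpos'
  L_contAt_regular' v''_contOn' hasDerivAt_G G2cont component_integral'

lemma master {y₁ y₂ : ℝ} (hy₁ : y₁ ∈ Ioo (v β) (v α)) (hy₂ : y₂ ∈ Ioo (v β) (v α))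
    (h12 : y₁ ≤ y₂) :
    (deriv v (L y₁))^2 - (deriv u (ρ y₁))^2 ≤
      (deriv v (L y₂))^2 - (deriv u (ρ y₂))^2 := by

  rcases eq_or_lt_of_le h12 with rfl | hlt
  · exact le_rfl
  have hΛΛ : Ioo (v β) (v α) ⊆ Ioo (u b) (u a) := by
    intro y hy
    exact ⟨by rw [← H.hvβ]; exact hy.1, lt_of_lt_of_le hy.2 H.hvα⟩
  have hsubΛ : Icc y₁ y₂ ⊆ Ioo (v β) (v α) := Icc_subset_Ioo hy₁.1 hy₂.2
  -- clamped version of L, for measurability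
  set clamp : ℝ → ℝ := fun y => max y₁ (min y₂ y) with hclamp
  have hclampmem : ∀ y, clamp y ∈ Icc y₁ y₂ := by
    intro y
    constructor
    · exact le_max_left _ _
    · simp only [hclamp]
      rw [max_le_iff]
      exact ⟨h12, min_le_left _ _⟩
  have hclampeq : ∀ y ∈ Icc y₁ y₂, clamp y = y := by
    intro y hy
    simp only [hclamp]
    rw [min_eq_right hy.2, max_eq_right hy.1]
  have hclampmono : Monotone clamp := fun c d hcd =>
    max_le_max le_rfl (min_le_min le_rfl hcd)
  set Lc : ℝ → ℝ := fun y => L (clamp y) with hLcdef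
  have hLc_eq : ∀ y ∈ Icc y₁ y₂, Lc y = L y := fun y hy => by
    simp only [hLcdef]; rw [hclampeq y hy]
  have hLc_anti : Antitone Lc := by
    intro c d hcd
    exact L_antitone' (hsubΛ (hclampmem c)) (hsubΛ (hclampmem d)) (hclampmono hcd)
  set f : ℝ → ℝ := fun y => 2 * deriv (deriv v) (Lc y) with hfdef
  have hLcmem : ∀ y, Lc y ∈ Icc (L y₂) (L y₁) := by
    intro y
    constructor
    · exact L_antitone' (hsubΛ (hclampmem y)) hy₂ (hclampmem y).2
    · exact L_antitone' hy₁ (hsubΛ (hclampmem y)) (hclampmem y).1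
  have hKsub : Icc (L y₂) (L y₁) ⊆ Ioo α β := by
    intro t ht
    exact ⟨lt_of_lt_of_le (hL y₂ hy₂).2.1.1 ht.1, lt_of_le_of_lt ht.2 (hL y₁ hy₁).2.1.2⟩
  obtain ⟨M, hM⟩ := isCompact_Icc.exists_bound_of_continuousOn (v''_contOn'.mono hKsub)
  have hfbound : ∀ y, ‖f y‖ ≤ 2 * M := by
    intro y
    simp only [hfdef]
    rw [norm_mul]
    have h1 := hM (Lc y) (hLcmem y)
    have h2 : ‖(2:ℝ)‖ = 2 := by norm_num
    rw [h2]
    nlinarith [norm_nonneg (deriv (deriv v) (Lc y))]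
  have hfmeas : Measurable f :=
    measurable_const.mul ((measurable_deriv (deriv v)).comp hLc_anti.measurable)
  have hfint : IntegrableOn f (Icc y₁ y₂) volume := by
    refine Integrable.mono' (g := fun _ => 2*M) ?_ ?_ ?_
    · exact integrableOn_const measure_Icc_lt_top.ne
    · exact hfmeas.aestronglyMeasurable
    · exact ae_of_all _ (fun y => hfbound y)
  have hf1 : ∀ y ∈ Icc y₁ y₂, f y = 2 * deriv (deriv v) (L y) := by
    intro y hy
    simp only [hfdef]
    rw [hLc_eq y hy]
  have hfc : ∀ y ∈ Ioo y₁ y₂, deriv v (L y) < 0 → ContinuousAt f y := by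
    intro y hy hreg
    have hyΛ : y ∈ Ioo (v β) (v α) := hsubΛ (Ioo_subset_Icc_self hy)
    have h1 : ContinuousAt (fun y' => 2 * deriv (deriv v) (L y')) y := by
      have h2 : ContinuousAt (deriv (deriv v)) (L y) :=
        v''_contOn'.continuousAt (isOpen_Ioo.mem_nhds (hL y hyΛ).2.1)
      exact continuousAt_const.mul (h2.comp (L_contAt_regular' hyΛ hreg))
    apply h1.congr
    filter_upwards [isOpen_Ioo.eventually_mem hy] with y' hy'
    rw [hf1 y' (Ioo_subset_Icc_self hy')]
  -- caps set
  set S : Set ℝ := {y | y ∈ Icc y₁ y₂ ∧ deriv v (L y) = 0} with hSdef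
  have hRegOpen : IsOpen {y | y ∈ Ioo (v β) (v α) ∧ deriv v (L y) < 0} := by
    rw [isOpen_iff_mem_nhds]
    intro y hy
    exact eventually_iff.1 (regular_eventually' hy.1 hy.2)
  have hSclosed : IsClosed S := by
    have hSeq : S = Icc y₁ y₂ ∩ {y | y ∈ Ioo (v β) (v α) ∧ deriv v (L y) < 0}ᶜ := by
      ext y
      simp only [hSdef, mem_setOf_eq, mem_inter_iff, mem_compl_iff]
      constructor
      · rintro ⟨h1, h2⟩
        exact ⟨h1, fun h3 => absurd h3.2 (by rw [h2]; exact lt_irrefl 0)⟩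
      · rintro ⟨h1, h2⟩
        refine ⟨h1, ?_⟩
        rcases lt_or_eq_of_le (v'_L_nonpos' (hsubΛ h1)) with h3 | h3
        · exact absurd ⟨hsubΛ h1, h3⟩ h2
        · exact h3
    rw [hSeq]
    exact isClosed_Icc.inter hRegOpen.isClosed_compl
  set CC : Set ℝ := S ∪ (Iic y₁ ∪ Ici y₂) with hCCdef
  have hCCclosed : IsClosed CC := hSclosed.union (isClosed_Iic.union isClosed_Ici)
  set U : Set ℝ := Ioo y₁ y₂ \ S with hUdef
  have hUmeas : MeasurableSet U := measurableSet_Ioo.diff hSclosed.measurableSet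
  have hUC : ∀ x ∈ U, x ∉ CC := by
    intro x hx
    simp only [hCCdef, mem_union, not_or]
    exact ⟨hx.2, by rw [mem_Iic]; push_neg; exact hx.1.1, by rw [mem_Ici]; push_neg; exact hx.1.2⟩
  set Af : ℝ → ℝ := fun x => sSup (CC ∩ Iic x) with hAfdef
  set Bf : ℝ → ℝ := fun x => sInf (CC ∩ Ici x) with hBfdef
  have hbddA : ∀ x : ℝ, BddAbove (CC ∩ Iic x) := fun x =>
    BddAbove.mono inter_subset_right bddAbove_Iic
  have hbddB : ∀ x : ℝ, BddBelow (CC ∩ Ici x) := fun x =>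
    BddBelow.mono inter_subset_right bddBelow_Ici
  have hcompA : ∀ x ∈ U, Af x ∈ CC ∧ y₁ ≤ Af x ∧ Af x < x := by
    intro x hx
    have hne : (CC ∩ Iic x).Nonempty :=
      ⟨y₁, Or.inr (Or.inl (mem_Iic.2 le_rfl)), mem_Iic.2 hx.1.1.le⟩
    have hmem := (hCCclosed.inter isClosed_Iic).csSup_mem hne (hbddA x)
    refine ⟨hmem.1, le_csSup (hbddA x) ⟨Or.inr (Or.inl (mem_Iic.2 le_rfl)), mem_Iic.2 hx.1.1.le⟩, ?_⟩
    rcases lt_or_eq_of_le (mem_Iic.1 hmem.2) with h | h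
    · exact h
    · exact absurd (h ▸ hmem.1) (hUC x hx)
  have hcompB : ∀ x ∈ U, Bf x ∈ CC ∧ Bf x ≤ y₂ ∧ x < Bf x := by
    intro x hx
    have hne : (CC ∩ Ici x).Nonempty :=
      ⟨y₂, Or.inr (Or.inr (mem_Ici.2 le_rfl)), mem_Ici.2 hx.1.2.le⟩
    have hmem := (hCCclosed.inter isClosed_Ici).csInf_mem hne (hbddB x)
    refine ⟨hmem.1, csInf_le (hbddB x) ⟨Or.inr (Or.inr (mem_Ici.2 le_rfl)), mem_Ici.2 hx.1.2.le⟩, ?_⟩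
    rcases lt_or_eq_of_le (mem_Ici.1 hmem.2) with h | h
    · exact h
    · exact absurd (h ▸ hmem.1) (hUC x hx)
  have hgapC : ∀ x ∈ U, ∀ z ∈ Ioo (Af x) (Bf x), z ∉ CC := by
    intro x hx z hz hzC
    rcases le_total z x with h | h
    · have : z ≤ Af x := le_csSup (hbddA x) ⟨hzC, mem_Iic.2 h⟩
      linarith [hz.1]
    · have : Bf x ≤ z := csInf_le (hbddB x) ⟨hzC, mem_Ici.2 h⟩
      linarith [hz.2]
  have hgapU : ∀ x ∈ U, Ioo (Af x) (Bf x) ⊆ U := by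
    intro x hx z hz
    have h1 : z ∈ Ioo y₁ y₂ :=
      ⟨lt_of_le_of_lt (hcompA x hx).2.1 hz.1, lt_of_lt_of_le hz.2 (hcompB x hx).2.1⟩
    exact ⟨h1, fun hzS => hgapC x hx z hz (Or.inl hzS)⟩
  have hagree : ∀ x ∈ U, ∀ z ∈ Ioo (Af x) (Bf x), Af z = Af x ∧ Bf z = Bf x := by
    intro x hx z hz
    have hzU : z ∈ U := hgapU x hx hz
    constructor
    · apply le_antisymm
      · by_contra hcon
        push_neg at hcon
        exact hgapC x hx (Af z)
          ⟨hcon, lt_trans (hcompA z hzU).2.2 hz.2⟩ (hcompA z hzU).1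
      · exact le_csSup (hbddA z) ⟨(hcompA x hx).1, mem_Iic.2 (le_of_lt hz.1)⟩
    · apply le_antisymm
      · exact csInf_le (hbddB z) ⟨(hcompB x hx).1, mem_Ici.2 (le_of_lt hz.2)⟩
      · by_contra hcon
        push_neg at hcon
        exact hgapC x hx (Bf z)
          ⟨lt_trans hz.1 (hcompB z hzU).2.2, hcon⟩ (hcompB z hzU).1
  have hregU : ∀ z ∈ U, deriv v (L z) < 0 := by
    intro z hz
    rcases lt_or_eq_of_le (v'_L_nonpos' (hsubΛ (Ioo_subset_Icc_self hz.1))) with h | h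
    · exact h
    · exact absurd ⟨Ioo_subset_Icc_self hz.1, h⟩ hz.2
  -- canonical rational components
  classical
  set cond : ℚ → Prop := fun q => ((q:ℝ) ∈ U) ∧ ∀ q' : ℚ,
    (q':ℝ) ∈ Ioo (Af (q:ℝ)) (Bf (q:ℝ)) → Encodable.encode q ≤ Encodable.encode q' with hconddef
  set K : ℚ → Set ℝ := fun q => if cond q then Ioo (Af (q:ℝ)) (Bf (q:ℝ)) else ∅ with hKdef
  have hKmeas : ∀ q, MeasurableSet (K q) := by
    intro q
    by_cases h : cond q
    · simp only [hKdef, if_pos h]; exact measurableSet_Ioo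
    · simp only [hKdef, if_neg h]; exact MeasurableSet.empty
  have hKsubU : ∀ q, K q ⊆ U := by
    intro q
    by_cases h : cond q
    · simp only [hKdef, if_pos h]; exact hgapU _ h.1
    · simp only [hKdef, if_neg h]; exact empty_subset _
  have hcanon : ∀ x ∈ U, ∃ q : ℚ, cond q ∧ Af (q:ℝ) = Af x ∧ Bf (q:ℝ) = Bf x := by
    intro x hx
    obtain ⟨qr, hqr⟩ := exists_rat_btwn (lt_trans (hcompA x hx).2.2 (hcompB x hx).2.2)
    set N : Set ℕ := Encodable.encode '' {q : ℚ | (q:ℝ) ∈ Ioo (Af x) (Bf x)} with hNdef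
    have hNne : N.Nonempty := ⟨Encodable.encode qr, qr, hqr, rfl⟩
    obtain ⟨q0, hq0mem, hq0enc⟩ := Nat.sInf_mem hNne
    have hq0min : ∀ q' : ℚ, (q':ℝ) ∈ Ioo (Af x) (Bf x) →
        Encodable.encode q0 ≤ Encodable.encode q' := by
      intro q' hq'
      rw [hq0enc]
      exact Nat.sInf_le ⟨q', hq', rfl⟩
    have hagr := hagree x hx (q0:ℝ) hq0mem
    refine ⟨q0, ⟨hgapU x hx hq0mem, ?_⟩, hagr.1, hagr.2⟩
    intro q' hq'
    apply hq0min
    rwa [hagr.1, hagr.2] at hq'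
  have hKU : (⋃ q : ℚ, K q) = U := by
    apply subset_antisymm
    · exact iUnion_subset hKsubU
    · intro x hx
      obtain ⟨q0, hc, hA, hB⟩ := hcanon x hx
      apply mem_iUnion.2
      refine ⟨q0, ?_⟩
      simp only [hKdef, if_pos hc]
      rw [hA, hB]
      exact ⟨(hcompA x hx).2.2, (hcompB x hx).2.2⟩
  have hint_eq : ∀ q q' : ℚ, cond q → cond q' →
      (Ioo (Af (q:ℝ)) (Bf (q:ℝ)) ∩ Ioo (Af (q':ℝ)) (Bf (q':ℝ))).Nonempty → q = q' := by
    intro q q' h h' hne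
    obtain ⟨z, hz1, hz2⟩ := hne
    have ha1 := hagree _ h.1 z hz1
    have ha2 := hagree _ h'.1 z hz2
    have hAB : Af (q:ℝ) = Af (q':ℝ) ∧ Bf (q:ℝ) = Bf (q':ℝ) :=
      ⟨by rw [← ha1.1, ha2.1], by rw [← ha1.2, ha2.2]⟩
    have hq'mem : (q':ℝ) ∈ Ioo (Af (q:ℝ)) (Bf (q:ℝ)) := by
      rw [hAB.1, hAB.2]
      exact ⟨(hcompA _ h'.1).2.2, (hcompB _ h'.1).2.2⟩
    have hqmem : (q:ℝ) ∈ Ioo (Af (q':ℝ)) (Bf (q':ℝ)) := by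
      rw [← hAB.1, ← hAB.2]
      exact ⟨(hcompA _ h.1).2.2, (hcompB _ h.1).2.2⟩
    exact Encodable.encode_injective (le_antisymm (h.2 q' hq'mem) (h'.2 q hqmem))
  have hKdisj : Pairwise (Function.onFun Disjoint K) := by
    intro q q' hqq'
    rw [Function.onFun]
    by_cases h : cond q
    · by_cases h' : cond q'
      · rw [disjoint_iff_inter_eq_empty]
        by_contra hcon
        have hne := nonempty_iff_ne_empty.2 hcon
        simp only [hKdef, if_pos h, if_pos h'] at hne
        exact hqq' (hint_eq q q' h h' hne)
      · simp only [hKdef, if_neg h']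
        exact disjoint_empty _
    · simp only [hKdef, if_neg h]
      exact empty_disjoint _
  have hfiU : IntegrableOn f U volume := hfint.mono_set (fun z hz => Ioo_subset_Icc_self hz.1)
  have hsum : HasSum (fun q => ∫ y in K q, f y) (∫ y in U, f y) := by
    have h0 := MeasureTheory.hasSum_integral_iUnion hKmeas hKdisj (by rw [hKU]; exact hfiU)
    rwa [hKU] at h0
  set hY2 : ℝ := (deriv v (L y₂))^2 with hhY2
  set hY1 : ℝ := (deriv v (L y₁))^2 with hhY1
  set bB : ℚ → ℝ := fun q => if cond q ∧ Bf (q:ℝ) = y₂ then hY2 else 0 with hbBdef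
  set bA : ℚ → ℝ := fun q => if cond q ∧ Af (q:ℝ) = y₁ then hY1 else 0 with hbAdef
  have hqb : ∀ q, (∫ y in K q, f y) ≤ bB q - bA q := by
    intro q
    by_cases h : cond q
    · have hA := hcompA _ h.1
      have hB := hcompB _ h.1
      have hABlt : Af (q:ℝ) < Bf (q:ℝ) := lt_trans hA.2.2 hB.2.2
      have hci := component_integral' hy₁ hy₂ hf1 hfint hfc hA.2.1 hABlt hB.2.1
        (fun z hz => hregU z (hgapU _ h.1 hz))
      simp only [hKdef, if_pos h]
      apply le_trans hci
      have hBb : (deriv v (L (Bf (q:ℝ))))^2 ≤ bB q := by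
        by_cases hBy2 : Bf (q:ℝ) = y₂
        · have he : bB q = hY2 := by
            simp only [hbBdef]
            rw [if_pos (show cond q ∧ Bf (q:ℝ) = y₂ from ⟨h, hBy2⟩)]
          rw [he, hBy2, hhY2]
        · have hBS : Bf (q:ℝ) ∈ S := by
            rcases hB.1 with hS' | h1 | h2
            · exact hS'
            · exfalso
              have := mem_Iic.1 h1
              have h3 : y₁ < Bf (q:ℝ) := lt_of_le_of_lt hA.2.1 hABlt
              linarith
            · exact absurd (le_antisymm hB.2.1 (mem_Ici.1 h2)) hBy2
          have he : bB q = 0 := by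
            simp only [hbBdef]
            rw [if_neg (show ¬(cond q ∧ Bf (q:ℝ) = y₂) from fun hc => hBy2 hc.2)]
          rw [he, hBS.2]
          norm_num
      have hAb : bA q ≤ (if Af (q:ℝ) = y₁ then (deriv v (L y₁))^2 else 0) := by
        by_cases hAy1 : Af (q:ℝ) = y₁
        · have he : bA q = hY1 := by
            simp only [hbAdef]
            rw [if_pos (show cond q ∧ Af (q:ℝ) = y₁ from ⟨h, hAy1⟩)]
          rw [he, if_pos hAy1, hhY1]
        · have he : bA q = 0 := by
            simp only [hbAdef]
            rw [if_neg (show ¬(cond q ∧ Af (q:ℝ) = y₁) from fun hc => hAy1 hc.2)]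
          rw [he, if_neg hAy1]
      linarith
    · have h1 : K q = ∅ := by simp only [hKdef]; rw [if_neg h]
      have h2 : bB q = 0 := by
        simp only [hbBdef]
        rw [if_neg (show ¬(cond q ∧ Bf (q:ℝ) = y₂) from fun hc => h hc.1)]
      have h3 : bA q = 0 := by
        simp only [hbAdef]
        rw [if_neg (show ¬(cond q ∧ Af (q:ℝ) = y₁) from fun hc => h hc.1)]
      rw [h1, h2, h3]
      simp
  have hbBsum : ∃ SB, HasSum bB SB ∧ SB ≤ hY2 := by
    have hY2nn : 0 ≤ hY2 := by rw [hhY2]; positivity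
    by_cases hex : ∃ q, cond q ∧ Bf (q:ℝ) = y₂
    · obtain ⟨q0, hq0⟩ := hex
      have hbeq : bB = fun q => if q = q0 then hY2 else 0 := by
        funext q
        by_cases h : cond q ∧ Bf (q:ℝ) = y₂
        · have heq : q = q0 := by
            apply hint_eq q q0 h.1 hq0.1
            have h1 : Af (q:ℝ) < y₂ := by
              rw [← h.2]; exact lt_trans (hcompA _ h.1.1).2.2 (hcompB _ h.1.1).2.2
            have h2 : Af (q0:ℝ) < y₂ := by
              rw [← hq0.2]; exact lt_trans (hcompA _ hq0.1.1).2.2 (hcompB _ hq0.1.1).2.2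
            refine ⟨(max (Af (q:ℝ)) (Af (q0:ℝ)) + y₂)/2, ?_, ?_⟩
            · constructor
              · have := le_max_left (Af (q:ℝ)) (Af (q0:ℝ))
                have := max_lt h1 h2
                linarith
              · rw [h.2]
                have := max_lt h1 h2
                linarith
            · constructor
              · have := le_max_right (Af (q:ℝ)) (Af (q0:ℝ))
                have := max_lt h1 h2
                linarith
              · rw [hq0.2]
                have := max_lt h1 h2
                linarith
          simp only [hbBdef, if_pos h, if_pos heq]
        · have hne : q ≠ q0 := by
            intro heq
            rw [heq] at h
            exact h hq0
          simp only [hbBdef, if_neg h, if_neg hne]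
      rw [hbeq]
      exact ⟨hY2, hasSum_ite_eq q0 hY2, le_rfl⟩
    · have hbeq : bB = fun _ => 0 := by
        funext q
        simp only [hbBdef, if_neg (fun hc => hex ⟨q, hc⟩)]
      rw [hbeq]
      exact ⟨0, hasSum_zero, hY2nn⟩
  have hbAsum : ∃ SA, HasSum bA SA ∧ hY1 ≤ SA := by
    by_cases hex : ∃ q, cond q ∧ Af (q:ℝ) = y₁
    · obtain ⟨q1, hq1⟩ := hex
      have hbeq : bA = fun q => if q = q1 then hY1 else 0 := by
        funext q
        by_cases h : cond q ∧ Af (q:ℝ) = y₁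
        · have heq : q = q1 := by
            apply hint_eq q q1 h.1 hq1.1
            have h1 : y₁ < Bf (q:ℝ) := by
              rw [← h.2]; exact lt_trans (hcompA _ h.1.1).2.2 (hcompB _ h.1.1).2.2
            have h2 : y₁ < Bf (q1:ℝ) := by
              rw [← hq1.2]; exact lt_trans (hcompA _ hq1.1.1).2.2 (hcompB _ hq1.1.1).2.2
            refine ⟨(y₁ + min (Bf (q:ℝ)) (Bf (q1:ℝ)))/2, ?_, ?_⟩
            · constructor
              · rw [h.2]
                have := lt_min h1 h2
                linarith
              · have := min_le_left (Bf (q:ℝ)) (Bf (q1:ℝ))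
                have := lt_min h1 h2
                linarith
            · constructor
              · rw [hq1.2]
                have := lt_min h1 h2
                linarith
              · have := min_le_right (Bf (q:ℝ)) (Bf (q1:ℝ))
                have := lt_min h1 h2
                linarith
          simp only [hbAdef, if_pos h, if_pos heq]
        · have hne : q ≠ q1 := by
            intro heq
            rw [heq] at h
            exact h hq1
          simp only [hbAdef, if_neg h, if_neg hne]
      rw [hbeq]
      exact ⟨hY1, hasSum_ite_eq q1 hY1, le_rfl⟩
    · -- no component starts at y₁ : then y₁ is a cap, so hY1 = 0
      have hcap : deriv v (L y₁) = 0 := by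
        by_contra hne
        have hreg : deriv v (L y₁) < 0 := lt_of_le_of_ne (v'_L_nonpos' hy₁) hne
        have hy₁S : y₁ ∉ S := fun hS' => hne hS'.2
        have hmem : Sᶜ ∈ 𝓝 y₁ := hSclosed.isOpen_compl.mem_nhds hy₁S
        obtain ⟨δ, hδpos, hball⟩ := Metric.mem_nhds_iff.1 hmem
        set x₀ := y₁ + min (δ/2) ((y₂ - y₁)/2) with hx₀def
        have hminpos : 0 < min (δ/2) ((y₂ - y₁)/2) := lt_min (by linarith) (by linarith)
        have hx₀mem : x₀ ∈ Ioo y₁ y₂ := by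
          constructor
          · simp only [hx₀def]; linarith
          · simp only [hx₀def]
            have := min_le_right (δ/2) ((y₂ - y₁)/2)
            linarith
        have hballmem : ∀ t, y₁ < t → t ≤ x₀ → t ∈ Metric.ball y₁ δ := by
          intro t h1 h2
          rw [Metric.mem_ball, Real.dist_eq, abs_of_pos (by linarith)]
          have := min_le_left (δ/2) ((y₂ - y₁)/2)
          simp only [hx₀def] at h2
          linarith
        have hx₀U : x₀ ∈ U := by
          refine ⟨hx₀mem, fun hS' => ?_⟩
          exact (hball (hballmem x₀ hx₀mem.1 le_rfl)) hS'
        have hAx₀ : Af x₀ = y₁ := by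
          apply le_antisymm
          · have hne0 : (CC ∩ Iic x₀).Nonempty :=
              ⟨y₁, Or.inr (Or.inl (mem_Iic.2 le_rfl)), mem_Iic.2 hx₀mem.1.le⟩
            apply csSup_le hne0
            rintro t ⟨htC, htle⟩
            rcases htC with hS' | h1 | h2
            · by_contra hcon
              push_neg at hcon
              exact (hball (hballmem t hcon (mem_Iic.1 htle))) hS'
            · exact mem_Iic.1 h1
            · exfalso
              have := mem_Ici.1 h2
              have := mem_Iic.1 htle
              have := hx₀mem.2
              linarith
          · exact le_csSup (hbddA x₀) ⟨Or.inr (Or.inl (mem_Iic.2 le_rfl)), mem_Iic.2 hx₀mem.1.le⟩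
        obtain ⟨q1, hq1c, hq1A, _⟩ := hcanon x₀ hx₀U
        exact hex ⟨q1, hq1c, by rw [hq1A, hAx₀]⟩
      have hbeq : bA = fun _ => 0 := by
        funext q
        by_cases h : cond q ∧ Af (q:ℝ) = y₁
        · simp only [hbAdef, if_pos h, hhY1, hcap]
          norm_num
        · simp only [hbAdef, if_neg h]
      refine ⟨0, by rw [hbeq]; exact hasSum_zero, ?_⟩
      rw [hhY1, hcap]
      norm_num
  obtain ⟨SB, hSB, hSBle⟩ := hbBsum
  obtain ⟨SA, hSA, hSAle⟩ := hbAsum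
  have hsum_le : (∫ y in U, f y) ≤ SB - SA := hasSum_le hqb hsum (hSB.sub hSA)
  have hScap_int : (∫ y in Ioo y₁ y₂ ∩ S, f y) ≤ 0 := by
    apply setIntegral_nonpos (measurableSet_Ioo.inter hSclosed.measurableSet)
    intro z hz
    rw [hf1 z hz.2.1]
    have := cap_v''_nonpos' (hsubΛ hz.2.1) hz.2.2
    linarith
  have hsplit : (∫ y in Ioo y₁ y₂, f y) =
      (∫ y in Ioo y₁ y₂ ∩ S, f y) + (∫ y in U, f y) := by
    have hd : Disjoint (Ioo y₁ y₂ ∩ S) U := by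
      rw [hUdef]
      exact disjoint_sdiff_self_right.mono_left inter_subset_right
    have he : Ioo y₁ y₂ ∩ S ∪ U = Ioo y₁ y₂ := by
      rw [hUdef]
      exact inter_union_diff _ _
    rw [← he, setIntegral_union hd hUmeas
      (hfint.mono_set (fun z hz => Ioo_subset_Icc_self hz.1)) hfiU]
    simp [hUdef]
  have hsubU2 : Icc y₁ y₂ ⊆ Ioo (u b) (u a) := fun y hy => hΛΛ (hsubΛ hy)
  have hFTCu : (∫ y in y₁..y₂, 2 * deriv (deriv u) (ρ y)) =
      (deriv u (ρ y₂))^2 - (deriv u (ρ y₁))^2 := by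
    apply intervalIntegral.integral_eq_sub_of_hasDerivAt
    · intro y hy
      rw [uIcc_of_le h12] at hy
      exact hasDerivAt_G (hsubU2 hy)
    · apply ContinuousOn.intervalIntegrable
      apply G2cont.mono
      rw [uIcc_of_le h12]
      exact hsubU2
  have hptw : ∀ y ∈ Icc y₁ y₂, 2 * deriv (deriv u) (ρ y) ≤ f y := by
    intro y hy
    have hyΛ := hsubΛ hy
    have hyI : y ∈ Icc (u b) (u a) := Ioo_subset_Icc_self (hΛΛ hyΛ)
    obtain ⟨hyu, hyρ⟩ := hρ y hyI
    have hρoo : ρ y ∈ Ioo a b := by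
      constructor
      · rcases lt_or_eq_of_le hyρ.1 with h | h
        · exact h
        · exfalso
          rw [← h] at hyu
          have h9 : y < u a := lt_of_lt_of_le hyΛ.2 H.hvα
          rw [hyu] at h9
          exact lt_irrefl _ h9
      · rcases lt_or_eq_of_le hyρ.2 with h | h
        · exact h
        · exfalso
          rw [h] at hyu
          have h9 : u b < y := by rw [← H.hvβ]; exact hyΛ.1
          rw [hyu] at h9
          exact lt_irrefl _ h9
    have hcomp := H.hmain (ρ y) hρoo (L y) (hL y hyΛ).2.1 (by rw [hyu, (hL y hyΛ).1])
    rw [hf1 y hy]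
    linarith
  have hmono_int : (∫ y in y₁..y₂, 2 * deriv (deriv u) (ρ y)) ≤ ∫ y in y₁..y₂, f y := by
    apply intervalIntegral.integral_mono_on h12
    · apply ContinuousOn.intervalIntegrable
      apply G2cont.mono
      rw [uIcc_of_le h12]
      exact hsubU2
    · exact IntegrableOn.intervalIntegrable (by rw [uIcc_of_le h12]; exact hfint)
    · exact hptw
  have hIoc : (∫ y in y₁..y₂, f y) = ∫ y in Ioo y₁ y₂, f y := by
    rw [intervalIntegral.integral_of_le h12, MeasureTheory.integral_Ioc_eq_integral_Ioo]
  have hfinal : (deriv u (ρ y₂))^2 - (deriv u (ρ y₁))^2 ≤ hY2 - hY1 := by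
    calc (deriv u (ρ y₂))^2 - (deriv u (ρ y₁))^2
        = ∫ y in y₁..y₂, 2 * deriv (deriv u) (ρ y) := hFTCu.symm
      _ ≤ ∫ y in y₁..y₂, f y := hmono_int
      _ = ∫ y in Ioo y₁ y₂, f y := hIoc
      _ = (∫ y in Ioo y₁ y₂ ∩ S, f y) + (∫ y in U, f y) := hsplit
      _ ≤ 0 + (SB - SA) := add_le_add hScap_int hsum_le
      _ ≤ hY2 - hY1 := by linarith
  simp only [hhY2, hhY1] at hfinal
  linarith


end Master


section RhoDeriv

variable (H : Setup a b α β u v) {ρ : ℝ → ℝ}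
  (hρc : Continuous ρ)
  (huρ : ∀ y ∈ Icc (u b) (u a), u (ρ y) = y ∧ ρ y ∈ Icc a b)
include H huρ

lemma u_hasDeriv'' {t : ℝ} (ht : t ∈ Ioo a b) : HasDerivAt u (deriv u t) t := by
  have h1 : DifferentiableOn ℝ u (Ioo a b) := H.hu2.differentiableOn (by norm_num)
  exact ((h1 t ht).differentiableAt (Ioo_mem_nhds ht.1 ht.2)).hasDerivAt

lemma u''_hasDeriv'' {t : ℝ} (ht : t ∈ Ioo a b) :
    HasDerivAt (deriv u) (deriv (deriv u) t) t := by
  have h2 : ContDiffOn ℝ 1 (deriv u) (Ioo a b) :=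
    (H.hu2.deriv_of_isOpen isOpen_Ioo (by norm_num))
  have h1 : DifferentiableOn ℝ (deriv u) (Ioo a b) := h2.differentiableOn (by norm_num)
  exact ((h1 t ht).differentiableAt (Ioo_mem_nhds ht.1 ht.2)).hasDerivAt

lemma rho_int {y : ℝ} (hy : y ∈ Ioo (u b) (u a)) : ρ y ∈ Ioo a b := by
  obtain ⟨hyu, hyρ⟩ := huρ y (Ioo_subset_Icc_self hy)
  constructor
  · rcases lt_or_eq_of_le hyρ.1 with h | h
    · exact h
    · exfalso
      rw [← h] at hyu
      rw [hyu] at hy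
      exact lt_irrefl _ hy.2
  · rcases lt_or_eq_of_le hyρ.2 with h | h
    · exact h
    · exfalso
      rw [h] at hyu
      rw [hyu] at hy
      exact lt_irrefl _ hy.1

include hρc

lemma hasDerivAt_rho {y : ℝ} (hy : y ∈ Ioo (u b) (u a)) :
    HasDerivAt ρ (deriv u (ρ y))⁻¹ y := by
  have hoo := rho_int H huρ hy
  apply HasDerivAt.of_local_left_inverse hρc.continuousAt
    (u_hasDeriv'' H huρ hoo) (ne_of_lt (H.hu' _ hoo))
  filter_upwards [isOpen_Ioo.eventually_mem hy] with y' hy'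
  exact (huρ y' (Ioo_subset_Icc_self hy')).1

lemma hasDerivAt_G' {y : ℝ} (hy : y ∈ Ioo (u b) (u a)) :
    HasDerivAt (fun y' => (deriv u (ρ y'))^2) (2 * deriv (deriv u) (ρ y)) y := by
  have hoo := rho_int H huρ hy
  have h1 : HasDerivAt (fun y' => deriv u (ρ y'))
      (deriv (deriv u) (ρ y) * (deriv u (ρ y))⁻¹) y :=
    (u''_hasDeriv'' H huρ hoo).comp y (hasDerivAt_rho H hρc huρ hy)
  have h2 := h1.pow 2
  refine h2.congr_deriv ?_
  have hne : deriv u (ρ y) ≠ 0 := ne_of_lt (H.hu' _ hoo)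
  field_simp
  ring

lemma G2cont' : ContinuousOn (fun y => 2 * deriv (deriv u) (ρ y)) (Ioo (u b) (u a)) := by
  have h2 : ContDiffOn ℝ 1 (deriv u) (Ioo a b) :=
    (H.hu2.deriv_of_isOpen isOpen_Ioo (by norm_num))
  have hu'' : ContinuousOn (deriv (deriv u)) (Ioo a b) :=
    h2.continuousOn_deriv_of_isOpen isOpen_Ioo le_rfl
  apply ContinuousOn.mul continuousOn_const
  exact hu''.comp hρc.continuousOn (fun y hy => rho_int H huρ hy)

end RhoDeriv


section Limits

variable (H : Setup a b α β u v) {L ρ : ℝ → ℝ} (hL : IsLC α β v L)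
include H hL

/-- L tends to α at the top level -/
lemma L_tendsto_top : Tendsto L (𝓝[<] (v α)) (𝓝 α) := by
  rw [Metric.tendsto_nhdsWithin_nhds]
  intro ε hε
  set ε' := min ε ((β - α)/2) with hε'def
  have hε'pos : 0 < ε' := lt_min hε (by linarith [H.hαβ])
  have hε'le : α + ε' ≤ β := by
    have : ε' ≤ (β - α)/2 := min_le_right _ _
    linarith [H.hαβ]
  have hKne : (Icc (α + ε') β).Nonempty := ⟨β, by constructor <;> linarith⟩
  obtain ⟨sm, hsm, hmax⟩ := isCompact_Icc.exists_isMaxOn hKne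
    ((vcont H).mono (Icc_subset_Icc (by linarith) le_rfl))
  set m := v sm with hmdef
  have hmlt : m < v α := by
    rcases eq_or_lt_of_le hsm.2 with heq | hlt
    · rw [hmdef, heq]; exact vba H
    · exact (H.hvbet sm ⟨by linarith [hsm.1], hlt⟩).2
  have hmge : v β ≤ m := hmax ⟨by linarith, le_rfl⟩
  refine ⟨v α - m, by linarith, ?_⟩
  intro y' hy'mem hy'dist
  have hy'lt : y' < v α := hy'mem
  have hy'gt : m < y' := by
    rw [Real.dist_eq, abs_of_neg (by linarith)] at hy'dist
    linarith
  have hy'Λ : y' ∈ Ioo (v β) (v α) := ⟨lt_of_le_of_lt hmge hy'gt, hy'lt⟩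
  obtain ⟨hvy', hoo', haf'⟩ := hL y' hy'Λ
  have hnotK : L y' ∉ Icc (α + ε') β := by
    intro hmem
    have h7 : v (L y') ≤ m := hmax hmem
    rw [hvy'] at h7
    linarith
  have hlt2 : L y' < α + ε' := by
    by_contra hcon
    push_neg at hcon
    exact hnotK ⟨hcon, hoo'.2.le⟩
  rw [Real.dist_eq, abs_of_pos (by linarith [hoo'.1])]
  have : ε' ≤ ε := min_le_left _ _
  linarith [hoo'.1]

omit hL in
/-- v' tends to 0 within Ioo at α -/
lemma v'_tendsto_α : Tendsto (deriv v) (𝓝[Ioo α β] α) (𝓝 0) := by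
  have h1 : ContinuousWithinAt (derivWithin v (Icc α β)) (Icc α β) α :=
    (v'cont H) α (left_mem_Icc.2 H.hαβ.le)
  have h2 : Tendsto (derivWithin v (Icc α β)) (𝓝[Icc α β] α) (𝓝 0) := by
    rw [← H.hv'α]; exact h1
  have h3 := h2.mono_left (nhdsWithin_mono α Ioo_subset_Icc_self)
  apply h3.congr'
  filter_upwards [self_mem_nhdsWithin] with s hs
  exact v_deriv_int H hs

omit hL in
lemma u'_tendsto_b : Tendsto (deriv u) (𝓝[Ioo a b] b) (𝓝 0) := by
  have h1 : ContinuousWithinAt (derivWithin u (Icc a b)) (Icc a b) b :=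
    (u'cont H) b (right_mem_Icc.2 H.hab.le)
  have h2 : Tendsto (derivWithin u (Icc a b)) (𝓝[Icc a b] b) (𝓝 0) := by
    rw [← H.hu'b]; exact h1
  have h3 := h2.mono_left (nhdsWithin_mono b Ioo_subset_Icc_self)
  apply h3.congr'
  filter_upwards [self_mem_nhdsWithin] with s hs
  exact u_deriv_int H hs

/-- h tends to 0 at the top level -/
lemma h_tendsto_top : Tendsto (fun y => (deriv v (L y))^2) (𝓝[<] (v α)) (𝓝 0) := by
  have h1 : Tendsto L (𝓝[<] (v α)) (𝓝[Ioo α β] α) := by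
    rw [tendsto_nhdsWithin_iff]
    refine ⟨L_tendsto_top H hL, ?_⟩
    filter_upwards [Ioo_mem_nhdsLT_of_mem
      (⟨vba H, le_rfl⟩ : v α ∈ Ioc (v β) (v α))] with y hy
    exact (hL y hy).2.1
  have h2 : Tendsto (fun y => deriv v (L y)) (𝓝[<] (v α)) (𝓝 0) :=
    (v'_tendsto_α H).comp h1
  have h3 := h2.pow 2
  simpa using h3

omit hL in
lemma G_tendsto_bot (hρc : Continuous ρ)
    (hρu : ∀ t ∈ Icc a b, ρ (u t) = t)
    (huρ : ∀ y ∈ Icc (u b) (u a), u (ρ y) = y ∧ ρ y ∈ Icc a b) :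
    Tendsto (fun y => (deriv u (ρ y))^2) (𝓝[>] (v β)) (𝓝 0) := by
  have hρb : ρ (v β) = b := by rw [H.hvβ]; exact hρu b (right_mem_Icc.2 H.hab.le)
  have h1 : Tendsto ρ (𝓝[>] (v β)) (𝓝[Ioo a b] b) := by
    rw [tendsto_nhdsWithin_iff]
    constructor
    · have := hρc.continuousAt (x := v β)
      rw [ContinuousAt, hρb] at this
      exact this.mono_left nhdsWithin_le_nhds
    · have hub : v β < u a := by rw [H.hvβ]; exact uba H
      filter_upwards [Ioo_mem_nhdsGT_of_mem (⟨le_rfl, hub⟩ : v β ∈ Ico (v β) (u a)),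
        self_mem_nhdsWithin] with y hy _
      exact rho_int H huρ ⟨by rw [← H.hvβ]; exact hy.1, hy.2⟩
  have h2 : Tendsto (fun y => deriv u (ρ y)) (𝓝[>] (v β)) (𝓝 0) :=
    (u'_tendsto_b H).comp h1
  have h3 := h2.pow 2
  simpa using h3

end Limits

theorem main_result (H : Setup a b α β u v) :
    β - α = b - a ∧ (∀ s ∈ Set.Icc α β, v s = u (s + b - β)) ∧ v α = u a := by
  obtain ⟨ρ, hρc, hρa, hρu, huρ⟩ := exists_inverse H.hab (ucont H) (uanti H)
  obtain ⟨L, hL⟩ := exists_LC H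
  have hmaster : ∀ {y₁ y₂ : ℝ}, y₁ ∈ Ioo (v β) (v α) → y₂ ∈ Ioo (v β) (v α) → y₁ ≤ y₂ →
      (deriv v (L y₁))^2 - (deriv u (ρ y₁))^2 ≤
        (deriv v (L y₂))^2 - (deriv u (ρ y₂))^2 := by
    intro y₁ y₂ h1 h2 h12
    exact master H hL (fun y hy => huρ y hy)
      (fun {c d} hc hd hcd => L_antitone H hL hc hd hcd)
      (fun {y} hy => v'_L_nonpos H hL hy)
      (fun {y} hy hr => regular_eventually H hL hy hr)
      (fun {y} hy hc => cap_v''_nonpos H hL hy hc)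
      (fun {y} hy hr => L_contAt_regular H hL hy hr)
      (v''_contOn H)
      (fun {y} hy => hasDerivAt_G' H hρc huρ hy)
      (G2cont' H hρc huρ)
      (fun {c d} hc hd {f} hf1 hfi hfc {A B} hA hAB hB2 hreg =>
        component_integral
          (fun {y} hy hr => hasDerivAt_h_regular H hL hy hr)
          (fun {y} hy => h_left_cont H hL hy)
          (fun {y} hy hr => h_cont_regular H hL hy hr)
          (fun {y} hy => v'_L_nonpos H hL hy)
          hc hd hf1 hfi hfc hA hAB hB2 hreg)
      h1 h2 h12
  have hzt : ∀ y ∈ Ioo (v β) (v α), (deriv v (L y))^2 = (deriv u (ρ y))^2 := by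
    intro y hy
    have hle : (deriv v (L y))^2 - (deriv u (ρ y))^2 ≤ 0 := by
      have hev : ∀ᶠ y' in 𝓝[<] (v α),
          (deriv v (L y))^2 - (deriv u (ρ y))^2 ≤ (deriv v (L y'))^2 := by
        filter_upwards [Ioo_mem_nhdsLT_of_mem (⟨hy.2, le_rfl⟩ : v α ∈ Ioc y (v α))]
          with y' hy'
        have hy'Λ : y' ∈ Ioo (v β) (v α) := ⟨lt_trans hy.1 hy'.1, hy'.2⟩
        have := hmaster hy hy'Λ hy'.1.le
        nlinarith [sq_nonneg (deriv u (ρ y'))]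
      exact ge_of_tendsto (h_tendsto_top H hL) hev
    have hge : 0 ≤ (deriv v (L y))^2 - (deriv u (ρ y))^2 := by
      have hev : ∀ᶠ y' in 𝓝[>] (v β),
          -((deriv u (ρ y'))^2) ≤ (deriv v (L y))^2 - (deriv u (ρ y))^2 := by
        filter_upwards [Ioo_mem_nhdsGT_of_mem (⟨le_rfl, hy.1⟩ : v β ∈ Ico (v β) y)]
          with y' hy'
        have hy'Λ : y' ∈ Ioo (v β) (v α) := ⟨hy'.1, lt_trans hy'.2 hy.2⟩
        have := hmaster hy'Λ hy hy'.2.le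
        nlinarith [sq_nonneg (deriv v (L y'))]
      have htend : Tendsto (fun y' => -((deriv u (ρ y'))^2)) (𝓝[>] (v β)) (𝓝 0) := by
        have := (G_tendsto_bot H hρc hρu huρ).neg
        simpa using this
      exact le_of_tendsto htend hev
    linarith
  have hΛsub : Ioo (v β) (v α) ⊆ Ioo (u b) (u a) := by
    intro y hy
    exact ⟨by rw [← H.hvβ]; exact hy.1, lt_of_lt_of_le hy.2 H.hvα⟩
  have hGpos : ∀ y ∈ Ioo (v β) (v α), 0 < (deriv u (ρ y))^2 := by
    intro y hy
    have h2 : deriv u (ρ y) < 0 := H.hu' _ (rho_int H huρ (hΛsub hy))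
    exact lt_of_le_of_ne (sq_nonneg _) (Ne.symm (pow_ne_zero 2 (ne_of_lt h2)))
  have hcap_imp : ∀ x₁ ∈ Icc α β, ∀ x₂ ∈ Icc α β, x₁ < x₂ → v x₁ < v x₂ → False := by
    intro x₁ hx₁ x₂ hx₂ hlt hvlt
    rcases eq_or_lt_of_le hx₂.2 with heqβ | hx₂β
    · rw [heqβ] at hvlt
      rcases eq_or_lt_of_le hx₁.1 with heqα | hx₁α
      · rw [← heqα] at hvlt
        exact absurd hvlt (not_lt.2 (vba H).le)
      · exact absurd hvlt (not_lt.2 (H.hvbet x₁ ⟨hx₁α, by rw [heqβ] at hlt; exact hlt⟩).1.le)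
    have hx₂oo : x₂ ∈ Ioo α β := ⟨lt_of_le_of_lt hx₁.1 hlt, hx₂β⟩
    have hx₁β : x₁ < β := lt_trans hlt hx₂β
    obtain ⟨sm, hsm, hmax⟩ := isCompact_Icc.exists_isMaxOn ⟨x₁, le_rfl, hx₁β.le⟩
      ((vcont H).mono (Icc_subset_Icc hx₁.1 le_rfl))
    set M := v sm with hMdef
    set T : Set ℝ := {s | s ∈ Icc x₁ β ∧ v s = M} with hTdef
    have hTne : T.Nonempty := ⟨sm, hsm, rfl⟩
    have hTc : IsClosed T := by
      have hTeq : T = Icc x₁ β ∩ v ⁻¹' {M} := by ext s; simp [hTdef]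
      rw [hTeq]
      exact ((vcont H).mono (Icc_subset_Icc hx₁.1 le_rfl)).preimage_isClosed_of_isClosed
        isClosed_Icc isClosed_singleton
    have hTbdd : BddAbove T := BddAbove.mono (fun s hs => hs.1) bddAbove_Icc
    set σ := sSup T with hσdef
    have hσT : σ ∈ T := hTc.csSup_mem hTne hTbdd
    have hvσ : v σ = M := hσT.2
    have hMx₂ : v x₂ ≤ M := hmax ⟨hlt.le, hx₂.2⟩
    have haft : ∀ s, σ < s → s ≤ β → v s < M := by
      intro s h1 h2
      have hs : s ∈ Icc x₁ β := ⟨le_trans hσT.1.1 h1.le, h2⟩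
      have h4 : v s ≤ M := hmax hs
      rcases lt_or_eq_of_le h4 with h3 | h3
      · exact h3
      · exact absurd (le_csSup hTbdd ⟨hs, h3⟩) (not_le.2 h1)
    have hσβ : σ < β := by
      rcases lt_or_eq_of_le hσT.1.2 with h | h
      · exact h
      · exfalso
        have hMβ : M = v β := by rw [← hvσ, h]
        have h8 := (H.hvbet x₂ hx₂oo).1
        rw [← hMβ] at h8
        linarith
    have hσx₁ : x₁ < σ := by
      rcases lt_or_eq_of_le hσT.1.1 with h | h
      · exact h
      · exfalso
        rw [← h] at hvσ
        linarith
    have hσoo : σ ∈ Ioo α β := ⟨lt_of_le_of_lt hx₁.1 hσx₁, hσβ⟩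
    have hMΛ : M ∈ Ioo (v β) (v α) := by
      rw [← hvσ]
      exact ⟨(H.hvbet σ hσoo).1, (H.hvbet σ hσoo).2⟩
    obtain ⟨hvLM, hLMoo, hafL⟩ := hL M hMΛ
    have hLM : L M = σ := by
      rcases lt_trichotomy (L M) σ with h | h | h
      · exfalso
        have h8 := hafL σ h hσoo.2.le
        rw [hvσ] at h8
        exact lt_irrefl _ h8
      · exact h
      · exfalso
        have h8 := haft (L M) h hLMoo.2.le
        rw [hvLM] at h8
        exact lt_irrefl _ h8
    have hloc : IsLocalMax v σ := by
      have hmem : Icc x₁ β ∈ 𝓝 σ := Icc_mem_nhds hσx₁ hσβ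
      filter_upwards [hmem] with s hs
      rw [hvσ]
      exact hmax hs
    have hd0 : deriv v σ = 0 := hloc.deriv_eq_zero
    have h9 := hzt M hMΛ
    rw [hLM, hd0] at h9
    have h10 := hGpos M hMΛ
    rw [← h9] at h10
    norm_num at h10
  have hanti : StrictAntiOn v (Icc α β) := by
    intro s₁ hs₁ s₂ hs₂ h12
    by_contra hcon
    push_neg at hcon
    rcases lt_or_eq_of_le hcon with h | heq
    · exact hcap_imp s₁ hs₁ s₂ hs₂ h12 h
    · by_cases hall : ∀ s'' ∈ Ioo s₁ s₂, v s'' = v s₁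
      · set σ₀ := (s₁ + s₂)/2 with hσ₀def
        have hσ₀mem : σ₀ ∈ Ioo s₁ s₂ := by
          constructor
          · simp only [hσ₀def]; linarith
          · simp only [hσ₀def]; linarith
        have hσ₀oo : σ₀ ∈ Ioo α β :=
          ⟨lt_of_le_of_lt hs₁.1 hσ₀mem.1, lt_of_lt_of_le hσ₀mem.2 hs₂.2⟩
        set yv := v σ₀ with hyvdef
        have hyveq : yv = v s₁ := hall σ₀ hσ₀mem
        have hyvΛ : yv ∈ Ioo (v β) (v α) := ⟨(H.hvbet σ₀ hσ₀oo).1, (H.hvbet σ₀ hσ₀oo).2⟩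
        have hmaxle : ∀ s ∈ Icc σ₀ β, v s ≤ yv := by
          intro s hs
          by_contra hcon2
          push_neg at hcon2
          have hne : σ₀ < s := by
            rcases lt_or_eq_of_le hs.1 with h' | h'
            · exact h'
            · exfalso; rw [← h', ← hyvdef] at hcon2; exact lt_irrefl _ hcon2
          exact hcap_imp σ₀ ⟨hσ₀oo.1.le, hσ₀oo.2.le⟩ s
            ⟨le_trans hσ₀oo.1.le hs.1, hs.2⟩ hne hcon2
        obtain ⟨hvLy, hLyoo, hafy⟩ := hL yv hyvΛ
        have hLyge : s₂ ≤ L yv := by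
          by_contra hcon2
          push_neg at hcon2
          have h8 := hafy s₂ hcon2 hs₂.2
          rw [← heq, hyveq] at h8
          exact lt_irrefl _ h8
        have hσ₀Ly : σ₀ < L yv := lt_of_lt_of_le hσ₀mem.2 hLyge
        have hloc : IsLocalMax v (L yv) := by
          have hmem : Ioo σ₀ β ∈ 𝓝 (L yv) := Ioo_mem_nhds hσ₀Ly hLyoo.2
          filter_upwards [hmem] with s hs
          rw [hvLy]
          exact hmaxle s ⟨hs.1.le, hs.2.le⟩
        have hd0 : deriv v (L yv) = 0 := hloc.deriv_eq_zero
        have h9 := hzt yv hyvΛ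
        rw [hd0] at h9
        have h10 := hGpos yv hyvΛ
        rw [← h9] at h10
        norm_num at h10
      · push_neg at hall
        obtain ⟨s'', hs'', hneq⟩ := hall
        have hs''Icc : s'' ∈ Icc α β :=
          ⟨le_trans hs₁.1 hs''.1.le, le_trans hs''.2.le hs₂.2⟩
        rcases lt_or_gt_of_ne hneq with h' | h'
        · exact hcap_imp s'' hs''Icc s₂ hs₂ hs''.2 (by rw [← heq]; exact h')
        · exact hcap_imp s₁ hs₁ s'' hs''Icc hs''.1 h'
  have hLinv : ∀ s ∈ Ioo α β, L (v s) = s := by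
    intro s hs
    have hyΛ : v s ∈ Ioo (v β) (v α) := ⟨(H.hvbet s hs).1, (H.hvbet s hs).2⟩
    obtain ⟨hvL, hLoo, haf⟩ := hL (v s) hyΛ
    rcases lt_trichotomy (L (v s)) s with h | h | h
    · exact absurd (haf s h hs.2.le) (lt_irrefl _)
    · exact h
    · exfalso
      have h8 := hanti (Ioo_subset_Icc_self hs) (Ioo_subset_Icc_self hLoo) h
      rw [hvL] at h8
      exact lt_irrefl _ h8
  have hode : ∀ s ∈ Ioo α β, deriv v s = deriv u (ρ (v s)) := by
    intro s hs
    have hyΛ : v s ∈ Ioo (v β) (v α) := ⟨(H.hvbet s hs).1, (H.hvbet s hs).2⟩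
    have h9 := hzt (v s) hyΛ
    rw [hLinv s hs] at h9
    have h1 : deriv v s ≤ 0 := by
      have h8 := v'_L_nonpos H hL hyΛ
      rwa [hLinv s hs] at h8
    have h2 : deriv u (ρ (v s)) < 0 := H.hu' _ (rho_int H huρ (hΛsub hyΛ))
    have h3 : deriv v s * deriv v s = deriv u (ρ (v s)) * deriv u (ρ (v s)) := by
      rw [pow_two, pow_two] at h9
      exact h9
    rcases mul_self_eq_mul_self_iff.1 h3 with h | h
    · exact h
    · exfalso
      rw [h] at h1
      linarith
  set τ : ℝ → ℝ := fun s => ρ (v s) - s with hτdef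
  have hτd : ∀ s ∈ Ioo α β, HasDerivAt τ 0 s := by
    intro s hs
    have hyΛ : v s ∈ Ioo (v β) (v α) := ⟨(H.hvbet s hs).1, (H.hvbet s hs).2⟩
    have h2' : deriv u (ρ (v s)) < 0 := H.hu' _ (rho_int H huρ (hΛsub hyΛ))
    have h1 : HasDerivAt (fun s' => ρ (v s'))
        ((deriv u (ρ (v s)))⁻¹ * deriv v s) s :=
      (hasDerivAt_rho H hρc huρ (hΛsub hyΛ)).comp s (v_hasDeriv H hs)
    have h2 : (deriv u (ρ (v s)))⁻¹ * deriv v s = 1 := by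
      rw [hode s hs]
      exact inv_mul_cancel₀ (ne_of_lt h2')
    have h3 := h1.sub (hasDerivAt_id s)
    rw [h2, sub_self] at h3
    exact h3
  have hconst : ∀ s ∈ Ioo α β, ∀ s' ∈ Ioo α β, τ s = τ s' := by
    intro s hs s' hs'
    exact Convex.is_const_of_fderivWithin_eq_zero (𝕜 := ℝ) (convex_Ioo α β)
      (fun z hz => ((hτd z hz).differentiableAt).differentiableWithinAt)
      (fun z hz => by
        rw [fderivWithin_of_isOpen isOpen_Ioo hz]
        have h0 := ((hτd z hz).hasFDerivAt).fderiv
        rw [h0]; ext w; simp) hs hs'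
  set s₀ := (α + β)/2 with hs₀def
  have hs₀oo : s₀ ∈ Ioo α β := by
    constructor
    · simp only [hs₀def]; linarith [H.hαβ]
    · simp only [hs₀def]; linarith [H.hαβ]
  set c := τ s₀ with hcdef
  have hcval : c = b - β := by
    have h1 : Tendsto v (𝓝[<] β) (𝓝 (v β)) := by
      have h0 := (vcont H) β (right_mem_Icc.2 H.hαβ.le)
      apply h0.tendsto.mono_left
      apply nhdsWithin_le_of_mem
      exact mem_of_superset (Ioo_mem_nhdsLT_of_mem (⟨H.hαβ, le_rfl⟩ : β ∈ Ioc α β))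
        Ioo_subset_Icc_self
    have h2 : Tendsto (fun s => ρ (v s)) (𝓝[<] β) (𝓝 b) := by
      have h3 : Tendsto ρ (𝓝 (v β)) (𝓝 b) := by
        have h4 := hρc.continuousAt (x := v β)
        rw [ContinuousAt,
          show ρ (v β) = b by rw [H.hvβ]; exact hρu b (right_mem_Icc.2 H.hab.le)] at h4
        exact h4
      exact h3.comp h1
    have h5 : Tendsto τ (𝓝[<] β) (𝓝 (b - β)) := by
      simp only [hτdef]
      exact h2.sub (tendsto_id.mono_left nhdsWithin_le_nhds)
    have h6 : Tendsto τ (𝓝[<] β) (𝓝 c) := by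
      apply Tendsto.congr' _
        (tendsto_const_nhds : Tendsto (fun _ : ℝ => c) (𝓝[<] β) (𝓝 c))
      filter_upwards [Ioo_mem_nhdsLT_of_mem (⟨H.hαβ, le_rfl⟩ : β ∈ Ioc α β)] with s hs
      exact (hconst s hs s₀ hs₀oo).symm
    exact tendsto_nhds_unique h6 h5
  have hρvs : ∀ s ∈ Ioo α β, ρ (v s) = s + (b - β) := by
    intro s hs
    have h8 := hconst s hs s₀ hs₀oo
    rw [← hcdef, hcval] at h8
    simp only [hτdef] at h8
    linarith
  have hvsu : ∀ s ∈ Ioo α β, v s = u (s + (b - β)) := by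
    intro s hs
    have hyΛ : v s ∈ Ioo (v β) (v α) := ⟨(H.hvbet s hs).1, (H.hvbet s hs).2⟩
    have h1 := (huρ (v s) (Ioo_subset_Icc_self (hΛsub hyΛ))).1
    rw [hρvs s hs] at h1
    exact h1.symm
  have hρmem : ∀ s ∈ Ioo α β, s + (b - β) ∈ Icc a b := by
    intro s hs
    have hyΛ : v s ∈ Ioo (v β) (v α) := ⟨(H.hvbet s hs).1, (H.hvbet s hs).2⟩
    have h8 := (huρ (v s) (Ioo_subset_Icc_self (hΛsub hyΛ))).2
    rwa [hρvs s hs] at h8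
  have htα1 : a ≤ α + (b - β) := by
    by_contra hcon
    push_neg at hcon
    set s := α + min ((β - α)/2) ((a - (α + (b - β)))/2) with hsdef
    have hpos : 0 < min ((β - α)/2) ((a - (α + (b - β)))/2) :=
      lt_min (by linarith [H.hαβ]) (by linarith)
    have hsoo : s ∈ Ioo α β := by
      constructor
      · simp only [hsdef]; linarith
      · simp only [hsdef]
        have h8 := min_le_left ((β - α)/2) ((a - (α + (b - β)))/2)
        linarith [H.hαβ]
    have h7 := (hρmem s hsoo).1
    have h2 : s + (b - β) < a := by
      simp only [hsdef]
      have h8 := min_le_right ((β - α)/2) ((a - (α + (b - β)))/2)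
      linarith
    linarith
  have htα2 : α + (b - β) ≤ a := by
    by_contra hcon
    push_neg at hcon
    have htαoo : α + (b - β) ∈ Ioo a b := ⟨hcon, by linarith [H.hαβ]⟩
    have h1 : Tendsto (deriv v) (𝓝[>] α) (𝓝 0) := by
      have h2 := v'_tendsto_α H
      apply h2.mono_left
      apply nhdsWithin_le_of_mem
      exact Ioo_mem_nhdsGT_of_mem (⟨le_rfl, H.hαβ⟩ : α ∈ Ico α β)
    have h3 : Tendsto (fun s => deriv u (s + (b - β))) (𝓝[>] α)
        (𝓝 (deriv u (α + (b - β)))) := by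
      have h4 : ContinuousAt (deriv u) (α + (b - β)) :=
        (u'_contOn H).continuousAt (isOpen_Ioo.mem_nhds htαoo)
      apply h4.tendsto.comp
      have h5 : Tendsto (fun s : ℝ => s + (b - β)) (𝓝 α) (𝓝 (α + (b - β))) :=
        (continuous_id.add continuous_const).tendsto α
      exact h5.mono_left nhdsWithin_le_nhds
    have h6 : Tendsto (fun s => deriv u (s + (b - β))) (𝓝[>] α) (𝓝 0) := by
      apply Tendsto.congr' _ h1
      filter_upwards [Ioo_mem_nhdsGT_of_mem (⟨le_rfl, H.hαβ⟩ : α ∈ Ico α β)] with s hs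
      rw [hode s hs, hρvs s hs]
    have h7 : deriv u (α + (b - β)) = 0 := tendsto_nhds_unique h3 h6
    exact absurd h7 (ne_of_lt (H.hu' _ htαoo))
  have htα : α + (b - β) = a := le_antisymm htα2 htα1
  have hvαa : v α = u a := by
    have h1 : Tendsto v (𝓝[>] α) (𝓝 (v α)) := by
      have h0 := (vcont H) α (left_mem_Icc.2 H.hαβ.le)
      apply h0.tendsto.mono_left
      apply nhdsWithin_le_of_mem
      exact mem_of_superset (Ioo_mem_nhdsGT_of_mem (⟨le_rfl, H.hαβ⟩ : α ∈ Ico α β))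
        Ioo_subset_Icc_self
    have h2 : Tendsto (fun s => u (s + (b - β))) (𝓝[>] α) (𝓝 (u a)) := by
      have h3 : Tendsto u (𝓝[Icc a b] a) (𝓝 (u a)) :=
        ((ucont H) a (left_mem_Icc.2 H.hab.le)).tendsto
      apply h3.comp
      rw [tendsto_nhdsWithin_iff]
      constructor
      · have h5 : Tendsto (fun s : ℝ => s + (b - β)) (𝓝 α) (𝓝 (α + (b - β))) :=
          (continuous_id.add continuous_const).tendsto α
        rw [htα] at h5
        exact h5.mono_left nhdsWithin_le_nhds
      · filter_upwards [Ioo_mem_nhdsGT_of_mem (⟨le_rfl, H.hαβ⟩ : α ∈ Ico α β)] with s hs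
        exact hρmem s hs
    have h4 : Tendsto v (𝓝[>] α) (𝓝 (u a)) := by
      apply Tendsto.congr' _ h2
      filter_upwards [Ioo_mem_nhdsGT_of_mem (⟨le_rfl, H.hαβ⟩ : α ∈ Ico α β)] with s hs
      exact (hvsu s hs).symm
    exact tendsto_nhds_unique h1 h4
  refine ⟨by linarith [htα], ?_, hvαa⟩
  intro s hs
  rcases eq_or_lt_of_le hs.1 with heqα | hα
  · rw [← heqα, hvαa, show α + b - β = a by linarith [htα]]
  · rcases eq_or_lt_of_le hs.2 with heqβ | hβ
    · rw [heqβ, H.hvβ, show β + b - β = b by ring]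
    · rw [show s + b - β = s + (b - β) by ring]
      exact hvsu s ⟨hα, hβ⟩

end LiNirenberg

/-- Lemma 4.1′ of Li–Nirenberg: v is a translate of u. -/
theorem stmt_7 (a b α β : ℝ) (hab : a < b) (hαβ : α < β) (u v : ℝ → ℝ)
    (hu2 : ContDiffOn ℝ 2 u (Set.Ioo a b)) (hu1 : ContDiffOn ℝ 1 u (Set.Icc a b))
    (hu'b : derivWithin u (Set.Icc a b) b = 0)
    (hu' : ∀ t ∈ Set.Ioo a b, deriv u t < 0)
    (hv2 : ContDiffOn ℝ 2 v (Set.Ioo α β)) (hv1 : ContDiffOn ℝ 1 v (Set.Icc α β))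
    (hvα : v α ≤ u a) (hvβ : v β = u b)
    (hvbet : ∀ s ∈ Set.Ioo α β, v β < v s ∧ v s < v α)
    (hv'α : derivWithin v (Set.Icc α β) α = 0)
    (hmain : ∀ t ∈ Set.Ioo a b, ∀ s ∈ Set.Ioo α β, u t = v s →
      deriv (deriv u) t ≤ deriv (deriv v) s) :
    β - α = b - a ∧ (∀ s ∈ Set.Icc α β, v s = u (s + b - β)) ∧ v α = u a :=
  LiNirenberg.main_result
    ⟨hab, hαβ, hu2, hu1, hu'b, hu', hv2, hv1, hvα, hvβ, hvbet, hv'α, hmain⟩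
end

section
/- Let K : ℝ³ → ℝ be continuous, with partial derivatives ∂K/∂p and ∂K/∂q (in the second and third arguments) existing and continuous on ℝ³, and ∂K/∂q(s,p,q) > 0 for all (s,p,q) ∈ ℝ³. Let b > 0 and let u, v be real functions that are C² on (0,b) with u(t) ≥ v(t) for all t ∈ (0,b). Assume max{u'(t), v'(t)} > 0 for every t ∈ (0,b), and assume: whenever u(t) = v(s) with 0 < t < s < b, one has K(u(t), u'(t), u''(t)) ≤ K(v(s), v'(s), v''(s)). Then either u(t) > v(t) for all t ∈ (0,b), or u(t) = v(t) for all t ∈ (0,b). -/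
open Set

open Set

/-- Mean value theorem, equation form, any order of endpoints. -/
lemma LN.mvt_eq (f f' : ℝ → ℝ) (hf : ∀ x, HasDerivAt f (f' x) x) (a b : ℝ) :
    ∃ c ∈ Set.Icc (min a b) (max a b), f b - f a = f' c * (b - a) := by
  rcases lt_trichotomy a b with h | h | h
  · obtain ⟨c, hc, hc'⟩ := exists_hasDerivAt_eq_slope f f' h
      (fun x _ => (hf x).continuousAt.continuousWithinAt) (fun x _ => hf x)
    refine ⟨c, ⟨(min_le_left a b).trans hc.1.le, hc.2.le.trans (le_max_right a b)⟩, ?_⟩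
    rw [hc', div_mul_cancel₀ _ (sub_ne_zero.2 h.ne')]
  · exact ⟨a, ⟨min_le_left a b, le_max_left a b⟩, by rw [h]; ring⟩
  · obtain ⟨c, hc, hc'⟩ := exists_hasDerivAt_eq_slope f f' h
      (fun x _ => (hf x).continuousAt.continuousWithinAt) (fun x _ => hf x)
    refine ⟨c, ⟨(min_le_right a b).trans hc.1.le, hc.2.le.trans (le_max_left a b)⟩, ?_⟩
    rw [hc', eq_comm, div_mul_eq_mul_div, div_eq_iff (sub_ne_zero.2 h.ne')]; ring

/-- Inverse function package for a strictly monotone continuous function on `Icc a c`. -/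
lemma LN.inv_package (f : ℝ → ℝ) {a c : ℝ} (hac : a < c)
    (hcont : ContinuousOn f (Set.Icc a c)) (hmono : StrictMonoOn f (Set.Icc a c)) :
    ∃ g : ℝ → ℝ,
      (∀ y ∈ Set.Icc (f a) (f c), g y ∈ Set.Icc a c ∧ f (g y) = y) ∧
      (∀ t ∈ Set.Icc a c, g (f t) = t) ∧
      (∀ y ∈ Set.Ioo (f a) (f c), ContinuousAt g y) := by
  have hsurj : ∀ y ∈ Set.Icc (f a) (f c), ∃ t ∈ Set.Icc a c, f t = y := by
    intro y hy
    obtain ⟨t, ht, hty⟩ := intermediate_value_Icc hac.le hcont hy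
    exact ⟨t, ht, hty⟩
  classical
  set g : ℝ → ℝ := fun y => if h : ∃ t ∈ Set.Icc a c, f t = y then h.choose else a with hg
  have hbasic : ∀ y ∈ Set.Icc (f a) (f c), g y ∈ Set.Icc a c ∧ f (g y) = y := by
    intro y hy
    have h := hsurj y hy
    simp only [hg, dif_pos h]
    exact ⟨h.choose_spec.1, h.choose_spec.2⟩
  have hleft : ∀ t ∈ Set.Icc a c, g (f t) = t := by
    intro t ht
    have hft : f t ∈ Set.Icc (f a) (f c) :=
      ⟨hmono.monotoneOn (left_mem_Icc.2 hac.le) ht ht.1,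
       hmono.monotoneOn ht (right_mem_Icc.2 hac.le) ht.2⟩
    obtain ⟨hg1, hg2⟩ := hbasic (f t) hft
    exact hmono.injOn hg1 ht hg2
  refine ⟨g, hbasic, hleft, ?_⟩
  intro y hy
  have hgmono : StrictMonoOn g (Set.Icc (f a) (f c)) := by
    intro y1 h1 y2 h2 h12
    by_contra hle
    push_neg at hle
    have := hmono.monotoneOn (hbasic y2 h2).1 (hbasic y1 h1).1 hle
    rw [(hbasic y1 h1).2, (hbasic y2 h2).2] at this
    exact absurd this (not_le.2 h12)
  have himg : Set.Icc a c ⊆ g '' Set.Icc (f a) (f c) := by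
    intro t ht
    refine ⟨f t, ⟨hmono.monotoneOn (left_mem_Icc.2 hac.le) ht ht.1,
      hmono.monotoneOn ht (right_mem_Icc.2 hac.le) ht.2⟩, hleft t ht⟩
  have hgy : g y ∈ Set.Icc a c := (hbasic y (Ioo_subset_Icc_self hy)).1
  have hgy1 : a < g y := by
    rcases hgy.1.lt_or_eq with h | h
    · exact h
    · exfalso; have := (hbasic y (Ioo_subset_Icc_self hy)).2
      rw [← h] at this; exact absurd this.symm hy.1.ne'
  have hgy2 : g y < c := by
    rcases hgy.2.lt_or_eq with h | h
    · exact h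
    · exfalso; have := (hbasic y (Ioo_subset_Icc_self hy)).2
      rw [h] at this; exact absurd this.symm hy.2.ne
  exact hgmono.continuousAt_of_image_mem_nhds (Icc_mem_nhds hy.1 hy.2)
    (Filter.mem_of_superset (Icc_mem_nhds hgy1 hgy2) himg)

open Set

lemma LN.touch_deriv_eq {b : ℝ} {u v : ℝ → ℝ}
    (hud : ∀ t ∈ Set.Ioo 0 b, HasDerivAt u (deriv u t) t)
    (hvd : ∀ t ∈ Set.Ioo 0 b, HasDerivAt v (deriv v t) t)
    (huv : ∀ t ∈ Set.Ioo 0 b, v t ≤ u t)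
    {t : ℝ} (ht : t ∈ Set.Ioo 0 b) (heq : u t = v t) :
    deriv u t = deriv v t := by
  have hmin : IsLocalMin (fun x => u x - v x) t := by
    filter_upwards [isOpen_Ioo.mem_nhds ht] with x hx
    have h1 : v x ≤ u x := huv x hx
    simp only [heq]
    linarith
  have hd : HasDerivAt (fun x => u x - v x) (deriv u t - deriv v t) t :=
    (hud t ht).sub (hvd t ht)
  have := hmin.hasDerivAt_eq_zero hd
  linarith

open Set

lemma LN.ode_zero {y1 y0 y2 M0 : ℝ} (hy1 : y1 < y0) (hy2 : y0 < y2) (hM0 : 0 ≤ M0)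
    (g g' h h' : ℝ → ℝ)
    (hg : ∀ y ∈ Set.Ioo y1 y2, HasDerivAt g (g' y) y)
    (hh : ∀ y ∈ Set.Ioo y1 y2, HasDerivAt h (h' y) y)
    (hgrow : ∀ y ∈ Set.Ioo y1 y2, g y ≠ 0 → -(M0 * |g y|) ≤ g' y)
    (hpos : ∀ y ∈ Set.Ioo y1 y2, 0 ≤ h y)
    (hsign : ∀ y ∈ Set.Ioo y1 y2,
      (0 < g y → h' y < 0) ∧ (g y < 0 → 0 < h' y) ∧ (g y = 0 → h' y = 0))
    (hg0 : g y0 = 0) (hh0 : h y0 = 0) :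
    ∀ y ∈ Set.Ioo y1 y2, g y = 0 := by
  have hgc : ∀ y ∈ Set.Ioo y1 y2, ContinuousAt g y := fun y hy => (hg y hy).continuousAt
  have hy0m : y0 ∈ Set.Ioo y1 y2 := ⟨hy1, hy2⟩
  -- Claim 1 : no positive value strictly left of y0
  have claim1 : ∀ y' ∈ Set.Ioo y1 y2, y' < y0 → ¬ (0 < g y') := by
    intro y' hy' hlt hposg
    have hsub : Set.Icc y' y0 ⊆ Set.Ioo y1 y2 := fun z hz =>
      ⟨lt_of_lt_of_le hy'.1 hz.1, lt_of_le_of_lt hz.2 hy2⟩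
    have hgcont : ContinuousOn g (Set.Icc y' y0) := fun z hz =>
      (hgc z (hsub hz)).continuousWithinAt
    set Z : Set ℝ := Set.Icc y' y0 ∩ g ⁻¹' {0} with hZ
    have hZcl : IsClosed Z :=
      hgcont.preimage_isClosed_of_isClosed isClosed_Icc isClosed_singleton
    have hZne : Z.Nonempty := ⟨y0, ⟨hlt.le, le_refl _⟩, hg0⟩
    have hZbdd : BddBelow Z := (bddBelow_Icc : BddBelow (Set.Icc y' y0)).mono inter_subset_left
    set w := sInf Z with hw
    have hwZ : w ∈ Z := hZcl.csInf_mem hZne hZbdd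
    have hgw : g w = 0 := hwZ.2
    have hy'w : y' < w := by
      rcases hwZ.1.1.lt_or_eq with h | h
      · exact h
      · exfalso; rw [← h] at hgw; exact absurd hgw (ne_of_gt hposg)
    have hwy0 : w ≤ y0 := hwZ.1.2
    have hkey : ∀ z ∈ Set.Ico y' w, 0 < g z := by
      intro z hz
      by_contra hc
      push_neg at hc
      have hy'z : y' < z := by
        rcases hz.1.lt_or_eq with h | h
        · exact h
        · exfalso; rw [← h] at hc; exact absurd hc (not_le.2 hposg)
      have h0 : (0 : ℝ) ∈ Set.Icc (g z) (g y') := ⟨hc, hposg.le⟩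
      obtain ⟨x, hx, hx0⟩ := intermediate_value_Icc' hy'z.le
        (hgcont.mono (Icc_subset_Icc le_rfl (hz.2.le.trans hwy0))) h0
      have hxZ : x ∈ Z := ⟨⟨hx.1, hx.2.trans (hz.2.le.trans hwy0)⟩, hx0⟩
      have : w ≤ x := csInf_le hZbdd hxZ
      exact absurd (hx.2.trans_lt hz.2) (not_lt.2 this)
    -- φ = exp (M0 y) * g y is monotone on [y', w]
    set φ : ℝ → ℝ := fun y => Real.exp (M0 * y) * g y with hφ
    have hφd : ∀ x ∈ Set.Ioo y' w, HasDerivAt φ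
        (Real.exp (M0 * x) * M0 * g x + Real.exp (M0 * x) * g' x) x := by
      intro x hx
      have hxm : x ∈ Set.Ioo y1 y2 := hsub ⟨hx.1.le, hx.2.le.trans hwy0⟩
      have he : HasDerivAt (fun y => Real.exp (M0 * y)) (Real.exp (M0 * x) * M0) x := by
        simpa using (((hasDerivAt_id x).const_mul M0).exp)
      exact he.mul (hg x hxm)
    have hφmono : MonotoneOn φ (Set.Icc y' w) := by
      apply monotoneOn_of_deriv_nonneg (convex_Icc y' w)
      · exact ((Real.continuous_exp.comp (continuous_const.mul continuous_id)).continuousOn).mul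
          (hgcont.mono (Icc_subset_Icc le_rfl hwy0))
      · rw [interior_Icc]
        exact fun x hx => (hφd x hx).differentiableAt.differentiableWithinAt
      · rw [interior_Icc]
        intro x hx
        rw [(hφd x hx).deriv]
        have hgx : 0 < g x := hkey x ⟨hx.1.le, hx.2⟩
        have hxm : x ∈ Set.Ioo y1 y2 := hsub ⟨hx.1.le, hx.2.le.trans hwy0⟩
        have := hgrow x hxm (ne_of_gt hgx)
        rw [abs_of_pos hgx] at this
        nlinarith [Real.exp_pos (M0 * x)]
    have h1 : φ y' ≤ φ w := hφmono (left_mem_Icc.2 hy'w.le) (right_mem_Icc.2 hy'w.le) hy'w.le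
    have h2 : φ w = 0 := by simp [hφ, hgw]
    have h3 : 0 < φ y' := mul_pos (Real.exp_pos _) hposg
    linarith
  -- Claim 2 : no negative value strictly right of y0
  have claim2 : ∀ y' ∈ Set.Ioo y1 y2, y0 < y' → ¬ (g y' < 0) := by
    intro y' hy' hlt hnegg
    have hsub : Set.Icc y0 y' ⊆ Set.Ioo y1 y2 := fun z hz =>
      ⟨lt_of_lt_of_le hy1 hz.1, lt_of_le_of_lt hz.2 hy'.2⟩
    have hgcont : ContinuousOn g (Set.Icc y0 y') := fun z hz =>
      (hgc z (hsub hz)).continuousWithinAt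
    set Z : Set ℝ := Set.Icc y0 y' ∩ g ⁻¹' {0} with hZ
    have hZcl : IsClosed Z :=
      hgcont.preimage_isClosed_of_isClosed isClosed_Icc isClosed_singleton
    have hZne : Z.Nonempty := ⟨y0, ⟨le_refl _, hlt.le⟩, hg0⟩
    have hZbdd : BddAbove Z := (bddAbove_Icc : BddAbove (Set.Icc y0 y')).mono inter_subset_left
    set w := sSup Z with hw
    have hwZ : w ∈ Z := hZcl.csSup_mem hZne hZbdd
    have hgw : g w = 0 := hwZ.2
    have hwy' : w < y' := by
      rcases hwZ.1.2.lt_or_eq with h | h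
      · exact h
      · exfalso; rw [h] at hgw; exact absurd hgw (ne_of_lt hnegg)
    have hy0w : y0 ≤ w := hwZ.1.1
    have hkey : ∀ z ∈ Set.Ioc w y', g z < 0 := by
      intro z hz
      by_contra hc
      push_neg at hc
      have hzy' : z < y' := by
        rcases hz.2.lt_or_eq with h | h
        · exact h
        · exfalso; rw [h] at hc; exact absurd hc (not_le.2 hnegg)
      have h0 : (0 : ℝ) ∈ Set.Icc (g y') (g z) := ⟨hnegg.le, hc⟩
      obtain ⟨x, hx, hx0⟩ := intermediate_value_Icc' hzy'.le
        (hgcont.mono (Icc_subset_Icc (hy0w.trans hz.1.le) le_rfl)) h0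
      have hxZ : x ∈ Z := ⟨⟨hy0w.trans (hz.1.le.trans hx.1), hx.2⟩, hx0⟩
      have : x ≤ w := le_csSup hZbdd hxZ
      exact absurd (hz.1.trans_le hx.1) (not_lt.2 this)
    set φ : ℝ → ℝ := fun y => Real.exp (-M0 * y) * g y with hφ
    have hφd : ∀ x ∈ Set.Ioo w y', HasDerivAt φ
        (Real.exp (-M0 * x) * (-M0) * g x + Real.exp (-M0 * x) * g' x) x := by
      intro x hx
      have hxm : x ∈ Set.Ioo y1 y2 := hsub ⟨hy0w.trans hx.1.le, hx.2.le⟩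
      have he : HasDerivAt (fun y => Real.exp (-M0 * y)) (Real.exp (-M0 * x) * (-M0)) x := by
        simpa using (((hasDerivAt_id x).const_mul (-M0)).exp)
      exact he.mul (hg x hxm)
    have hφmono : MonotoneOn φ (Set.Icc w y') := by
      apply monotoneOn_of_deriv_nonneg (convex_Icc w y')
      · exact ((Real.continuous_exp.comp (continuous_const.mul continuous_id)).continuousOn).mul
          (hgcont.mono (Icc_subset_Icc hy0w le_rfl))
      · rw [interior_Icc]
        exact fun x hx => (hφd x hx).differentiableAt.differentiableWithinAt
      · rw [interior_Icc]
        intro x hx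
        rw [(hφd x hx).deriv]
        have hgx : g x < 0 := hkey x ⟨hx.1, hx.2.le⟩
        have hxm : x ∈ Set.Ioo y1 y2 := hsub ⟨hy0w.trans hx.1.le, hx.2.le⟩
        have := hgrow x hxm (ne_of_lt hgx)
        rw [abs_of_neg hgx] at this
        nlinarith [Real.exp_pos (-M0 * x)]
    have h1 : φ w ≤ φ y' := hφmono (left_mem_Icc.2 hwy'.le) (right_mem_Icc.2 hwy'.le) hwy'.le
    have h2 : φ w = 0 := by simp [hφ, hgw]
    have h3 : φ y' < 0 := mul_neg_of_pos_of_neg (Real.exp_pos _) hnegg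
    linarith
  -- Claim 3 : no negative value strictly left of y0
  have claim3 : ∀ y' ∈ Set.Ioo y1 y2, y' < y0 → ¬ (g y' < 0) := by
    intro y' hy' hlt hnegg
    have hsub : Set.Icc y' y0 ⊆ Set.Ioo y1 y2 := fun z hz =>
      ⟨lt_of_lt_of_le hy'.1 hz.1, lt_of_le_of_lt hz.2 hy2⟩
    have hnopos : ∀ z ∈ Set.Ioo y' y0, ¬ (0 < g z) := fun z hz =>
      claim1 z (hsub ⟨hz.1.le, hz.2.le⟩) hz.2
    have hh'nn : ∀ z ∈ Set.Ioo y' y0, 0 ≤ h' z := by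
      intro z hz
      have hzm : z ∈ Set.Ioo y1 y2 := hsub ⟨hz.1.le, hz.2.le⟩
      rcases lt_trichotomy (g z) 0 with hc | hc | hc
      · exact ((hsign z hzm).2.1 hc).le
      · exact ((hsign z hzm).2.2 hc).ge
      · exact absurd hc (hnopos z hz)
    have hhmono : MonotoneOn h (Set.Icc y' y0) := by
      apply monotoneOn_of_deriv_nonneg (convex_Icc y' y0)
      · exact fun z hz => (hh z (hsub hz)).continuousAt.continuousWithinAt
      · rw [interior_Icc]
        exact fun z hz => (hh z (hsub ⟨hz.1.le, hz.2.le⟩)).differentiableAt.differentiableWithinAt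
      · rw [interior_Icc]
        intro z hz
        rw [(hh z (hsub ⟨hz.1.le, hz.2.le⟩)).deriv]
        exact hh'nn z hz
    have hzero : ∀ z ∈ Set.Ioo y' y0, h z = 0 := by
      intro z hz
      have h1 : h z ≤ 0 := by
        have := hhmono ⟨hz.1.le, hz.2.le⟩ (right_mem_Icc.2 hlt.le) hz.2.le
        rwa [hh0] at this
      exact le_antisymm h1 (hpos z (hsub ⟨hz.1.le, hz.2.le⟩))
    have hgzero : ∀ z ∈ Set.Ioo y' y0, g z = 0 := by
      intro z hz
      have hzm : z ∈ Set.Ioo y1 y2 := hsub ⟨hz.1.le, hz.2.le⟩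
      have hev : h =ᶠ[nhds z] fun _ => (0 : ℝ) := by
        filter_upwards [Ioo_mem_nhds hz.1 hz.2] with x hx
        exact hzero x hx
      have hd0 : HasDerivAt h 0 z := by
        rw [hev.hasDerivAt_iff]
        exact hasDerivAt_const z 0
      have hh'z : h' z = 0 := (hh z hzm).unique hd0
      rcases lt_trichotomy (g z) 0 with hc | hc | hc
      · exact absurd hh'z (ne_of_gt ((hsign z hzm).2.1 hc))
      · exact hc
      · exact absurd hh'z (ne_of_lt ((hsign z hzm).1 hc))
    have hlim : Filter.Tendsto g (nhdsWithin y' (Set.Ioi y')) (nhds (g y')) :=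
      ((hgc y' hy').continuousWithinAt)
    have hlim0 : Filter.Tendsto g (nhdsWithin y' (Set.Ioi y')) (nhds 0) := by
      have hev : g =ᶠ[nhdsWithin y' (Set.Ioi y')] fun _ => (0 : ℝ) := by
        filter_upwards [Ioo_mem_nhdsGT_of_mem ⟨le_refl y', hlt⟩] with x hx
        exact hgzero x hx
      rw [Filter.tendsto_congr' hev]
      exact tendsto_const_nhds
    have : g y' = 0 := tendsto_nhds_unique hlim hlim0
    exact absurd this (ne_of_lt hnegg)
  -- Claim 4 : no positive value strictly right of y0
  have claim4 : ∀ y' ∈ Set.Ioo y1 y2, y0 < y' → ¬ (0 < g y') := by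
    intro y' hy' hlt hposg
    have hsub : Set.Icc y0 y' ⊆ Set.Ioo y1 y2 := fun z hz =>
      ⟨lt_of_lt_of_le hy1 hz.1, lt_of_le_of_lt hz.2 hy'.2⟩
    have hnoneg : ∀ z ∈ Set.Ioo y0 y', ¬ (g z < 0) := fun z hz =>
      claim2 z (hsub ⟨hz.1.le, hz.2.le⟩) hz.1
    have hh'np : ∀ z ∈ Set.Ioo y0 y', h' z ≤ 0 := by
      intro z hz
      have hzm : z ∈ Set.Ioo y1 y2 := hsub ⟨hz.1.le, hz.2.le⟩
      rcases lt_trichotomy (g z) 0 with hc | hc | hc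
      · exact absurd hc (hnoneg z hz)
      · exact ((hsign z hzm).2.2 hc).le
      · exact ((hsign z hzm).1 hc).le
    have hhmono : AntitoneOn h (Set.Icc y0 y') := by
      apply antitoneOn_of_deriv_nonpos (convex_Icc y0 y')
      · exact fun z hz => (hh z (hsub hz)).continuousAt.continuousWithinAt
      · rw [interior_Icc]
        exact fun z hz => (hh z (hsub ⟨hz.1.le, hz.2.le⟩)).differentiableAt.differentiableWithinAt
      · rw [interior_Icc]
        intro z hz
        rw [(hh z (hsub ⟨hz.1.le, hz.2.le⟩)).deriv]
        exact hh'np z hz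
    have hzero : ∀ z ∈ Set.Ioo y0 y', h z = 0 := by
      intro z hz
      have h1 : h z ≤ 0 := by
        have := hhmono (left_mem_Icc.2 hlt.le) ⟨hz.1.le, hz.2.le⟩ hz.1.le
        rwa [hh0] at this
      exact le_antisymm h1 (hpos z (hsub ⟨hz.1.le, hz.2.le⟩))
    have hgzero : ∀ z ∈ Set.Ioo y0 y', g z = 0 := by
      intro z hz
      have hzm : z ∈ Set.Ioo y1 y2 := hsub ⟨hz.1.le, hz.2.le⟩
      have hev : h =ᶠ[nhds z] fun _ => (0 : ℝ) := by
        filter_upwards [Ioo_mem_nhds hz.1 hz.2] with x hx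
        exact hzero x hx
      have hd0 : HasDerivAt h 0 z := by
        rw [hev.hasDerivAt_iff]
        exact hasDerivAt_const z 0
      have hh'z : h' z = 0 := (hh z hzm).unique hd0
      rcases lt_trichotomy (g z) 0 with hc | hc | hc
      · exact absurd hh'z (ne_of_gt ((hsign z hzm).2.1 hc))
      · exact hc
      · exact absurd hh'z (ne_of_lt ((hsign z hzm).1 hc))
    have hlim : Filter.Tendsto g (nhdsWithin y' (Set.Iio y')) (nhds (g y')) :=
      ((hgc y' hy').continuousWithinAt)
    have hlim0 : Filter.Tendsto g (nhdsWithin y' (Set.Iio y')) (nhds 0) := by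
      have hev : g =ᶠ[nhdsWithin y' (Set.Iio y')] fun _ => (0 : ℝ) := by
        filter_upwards [Ioo_mem_nhdsLT_of_mem ⟨hlt, le_refl y'⟩] with x hx
        exact hgzero x hx
      rw [Filter.tendsto_congr' hev]
      exact tendsto_const_nhds
    have : g y' = 0 := tendsto_nhds_unique hlim hlim0
    exact absurd this (ne_of_gt hposg)
  -- conclusion
  intro y hy
  rcases lt_trichotomy y y0 with hc | hc | hc
  · rcases lt_trichotomy (g y) 0 with hc' | hc' | hc'
    · exact absurd hc' (claim3 y hy hc)
    · exact hc'
    · exact absurd hc' (claim1 y hy hc)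
  · rw [hc]; exact hg0
  · rcases lt_trichotomy (g y) 0 with hc' | hc' | hc'
    · exact absurd hc' (claim2 y hy hc)
    · exact hc'
    · exact absurd hc' (claim4 y hy hc)

open Set

lemma LN.local_eq (K Kp Kq : ℝ → ℝ → ℝ → ℝ)
    (hKp : ∀ s p q : ℝ, HasDerivAt (fun p' => K s p' q) (Kp s p q) p)
    (hKq : ∀ s p q : ℝ, HasDerivAt (fun q' => K s p q') (Kq s p q) q)
    (hKpc : Continuous fun x : ℝ × ℝ × ℝ => Kp x.1 x.2.1 x.2.2)
    (hKqc : Continuous fun x : ℝ × ℝ × ℝ => Kq x.1 x.2.1 x.2.2)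
    (hKqpos : ∀ s p q : ℝ, 0 < Kq s p q)
    (b : ℝ) (hb : 0 < b) (u v : ℝ → ℝ)
    (hu2 : ContDiffOn ℝ 2 u (Set.Ioo 0 b)) (hv2 : ContDiffOn ℝ 2 v (Set.Ioo 0 b))
    (huv : ∀ t ∈ Set.Ioo 0 b, v t ≤ u t)
    (hmono : ∀ t ∈ Set.Ioo 0 b, 0 < max (deriv u t) (deriv v t))
    (hmain : ∀ t s : ℝ, 0 < t → t < s → s < b → u t = v s →
      K (u t) (deriv u t) (deriv (deriv u) t) ≤ K (v s) (deriv v s) (deriv (deriv v) s))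
    (tb : ℝ) (htb : tb ∈ Set.Ioo 0 b) (heq : u tb = v tb) :
    ∀ᶠ t in nhds tb, u t = v t := by
  -- derivative infrastructure
  have hud : ∀ t ∈ Set.Ioo 0 b, HasDerivAt u (deriv u t) t := fun t ht =>
    ((hu2.differentiableOn (by norm_num)).differentiableAt (isOpen_Ioo.mem_nhds ht)).hasDerivAt
  have hvd : ∀ t ∈ Set.Ioo 0 b, HasDerivAt v (deriv v t) t := fun t ht =>
    ((hv2.differentiableOn (by norm_num)).differentiableAt (isOpen_Ioo.mem_nhds ht)).hasDerivAt
  have hu1 : ContDiffOn ℝ 1 (deriv u) (Set.Ioo 0 b) :=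
    hu2.deriv_of_isOpen isOpen_Ioo (by norm_num)
  have hv1 : ContDiffOn ℝ 1 (deriv v) (Set.Ioo 0 b) :=
    hv2.deriv_of_isOpen isOpen_Ioo (by norm_num)
  have hud2 : ∀ t ∈ Set.Ioo 0 b, HasDerivAt (deriv u) (deriv (deriv u) t) t := fun t ht =>
    ((hu1.differentiableOn one_ne_zero).differentiableAt (isOpen_Ioo.mem_nhds ht)).hasDerivAt
  have hvd2 : ∀ t ∈ Set.Ioo 0 b, HasDerivAt (deriv v) (deriv (deriv v) t) t := fun t ht =>
    ((hv1.differentiableOn one_ne_zero).differentiableAt (isOpen_Ioo.mem_nhds ht)).hasDerivAt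
  have hucont : ContinuousOn (deriv u) (Set.Ioo 0 b) :=
    hu2.continuousOn_deriv_of_isOpen isOpen_Ioo (by norm_num)
  have hvcont : ContinuousOn (deriv v) (Set.Ioo 0 b) :=
    hv2.continuousOn_deriv_of_isOpen isOpen_Ioo (by norm_num)
  have hucont2 : ContinuousOn (deriv (deriv u)) (Set.Ioo 0 b) :=
    hu1.continuousOn_deriv_of_isOpen isOpen_Ioo le_rfl
  have hvcont2 : ContinuousOn (deriv (deriv v)) (Set.Ioo 0 b) :=
    hv1.continuousOn_deriv_of_isOpen isOpen_Ioo le_rfl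
  -- equal positive derivative at the touching point
  have hp0 : deriv u tb = deriv v tb := LN.touch_deriv_eq hud hvd huv htb heq
  have hp0pos : 0 < deriv u tb := by
    have := hmono tb htb
    rwa [← hp0, max_self] at this
  set m : ℝ := deriv u tb / 2 with hm
  have hmpos : 0 < m := by positivity
  -- a compact interval around tb on which both derivatives exceed m
  have hFct : ContinuousAt (fun t => min (deriv u t) (deriv v t)) tb :=
    ((hucont.continuousAt (isOpen_Ioo.mem_nhds htb)).min
      (hvcont.continuousAt (isOpen_Ioo.mem_nhds htb)))
  have hFpos : m < min (deriv u tb) (deriv v tb) := by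
    rw [← hp0, min_self, hm]; linarith
  have hev : ∀ᶠ t in nhds tb, t ∈ Set.Ioo 0 b ∧ m < min (deriv u t) (deriv v t) :=
    (isOpen_Ioo.eventually_mem htb).and (hFct.eventually_mem (Ioi_mem_nhds hFpos))
  obtain ⟨ε, hε, hball⟩ := Metric.eventually_nhds_iff.1 hev
  set a : ℝ := tb - ε / 2 with ha
  set c : ℝ := tb + ε / 2 with hc
  have hac : a < c := by rw [ha, hc]; linarith
  have hIcc : ∀ t ∈ Set.Icc a c, t ∈ Set.Ioo 0 b ∧ m < min (deriv u t) (deriv v t) := by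
    intro t ht
    apply hball
    rw [Real.dist_eq, abs_sub_lt_iff]
    have h1 := ht.1; have h2 := ht.2
    rw [ha] at h1; rw [hc] at h2
    constructor <;> linarith
  have hsub : Set.Icc a c ⊆ Set.Ioo 0 b := fun t ht => (hIcc t ht).1
  have hdu : ∀ t ∈ Set.Icc a c, m < deriv u t := fun t ht =>
    lt_of_lt_of_le (hIcc t ht).2 (min_le_left _ _)
  have hdv : ∀ t ∈ Set.Icc a c, m < deriv v t := fun t ht =>
    lt_of_lt_of_le (hIcc t ht).2 (min_le_right _ _)
  have htbm : tb ∈ Set.Ioo a c := by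
    rw [Set.mem_Ioo, ha, hc]; constructor <;> linarith
  -- strict monotonicity on [a,c]
  have hucontI : ContinuousOn u (Set.Icc a c) := hu2.continuousOn.mono hsub
  have hvcontI : ContinuousOn v (Set.Icc a c) := hv2.continuousOn.mono hsub
  have hum : StrictMonoOn u (Set.Icc a c) := by
    apply strictMonoOn_of_deriv_pos (convex_Icc a c) hucontI
    rw [interior_Icc]
    exact fun t ht => lt_trans hmpos (hdu t (Ioo_subset_Icc_self ht))
  have hvm : StrictMonoOn v (Set.Icc a c) := by
    apply strictMonoOn_of_deriv_pos (convex_Icc a c) hvcontI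
    rw [interior_Icc]
    exact fun t ht => lt_trans hmpos (hdv t (Ioo_subset_Icc_self ht))
  -- inverse functions
  obtain ⟨ρ, hρ1, hρ2, hρ3⟩ := LN.inv_package u hac hucontI hum
  obtain ⟨σ, hσ1, hσ2, hσ3⟩ := LN.inv_package v hac hvcontI hvm
  -- value interval
  set y0 : ℝ := u tb with hy0
  set z1 : ℝ := max (u a) (v a) with hz1
  set z2 : ℝ := min (u c) (v c) with hz2
  have haI : a ∈ Set.Icc a c := left_mem_Icc.2 hac.le
  have hcI : c ∈ Set.Icc a c := right_mem_Icc.2 hac.le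
  have htbI : tb ∈ Set.Icc a c := Ioo_subset_Icc_self htbm
  have hz1y0 : z1 < y0 := by
    apply max_lt
    · exact hum haI htbI htbm.1
    · exact lt_of_lt_of_eq (hvm haI htbI htbm.1) heq.symm
  have hy0z2 : y0 < z2 := by
    apply lt_min
    · exact hum htbI hcI htbm.2
    · exact lt_of_eq_of_lt heq (hvm htbI hcI htbm.2)
  -- membership lemmas for y ∈ Ioo z1 z2
  have hyu : ∀ y ∈ Set.Ioo z1 z2, y ∈ Set.Ioo (u a) (u c) := fun y hy =>
    ⟨lt_of_le_of_lt (le_max_left _ _) hy.1, lt_of_lt_of_le hy.2 (min_le_left _ _)⟩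
  have hyv : ∀ y ∈ Set.Ioo z1 z2, y ∈ Set.Ioo (v a) (v c) := fun y hy =>
    ⟨lt_of_le_of_lt (le_max_right _ _) hy.1, lt_of_lt_of_le hy.2 (min_le_right _ _)⟩
  have hρmem : ∀ y ∈ Set.Ioo z1 z2, ρ y ∈ Set.Icc a c := fun y hy =>
    (hρ1 y (Ioo_subset_Icc_self (hyu y hy))).1
  have hσmem : ∀ y ∈ Set.Ioo z1 z2, σ y ∈ Set.Icc a c := fun y hy =>
    (hσ1 y (Ioo_subset_Icc_self (hyv y hy))).1
  have hρval : ∀ y ∈ Set.Ioo z1 z2, u (ρ y) = y := fun y hy =>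
    (hρ1 y (Ioo_subset_Icc_self (hyu y hy))).2
  have hσval : ∀ y ∈ Set.Ioo z1 z2, v (σ y) = y := fun y hy =>
    (hσ1 y (Ioo_subset_Icc_self (hyv y hy))).2
  have hρσ : ∀ y ∈ Set.Ioo z1 z2, ρ y ≤ σ y := by
    intro y hy
    by_contra hlt
    push_neg at hlt
    have h1 : v (σ y) < v (ρ y) := hvm (hσmem y hy) (hρmem y hy) hlt
    have h2 : v (ρ y) ≤ u (ρ y) := huv (ρ y) (hsub (hρmem y hy))
    rw [hσval y hy] at h1
    rw [hρval y hy] at h2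
    linarith
  -- derivatives of the inverse functions
  have hρd : ∀ y ∈ Set.Ioo z1 z2, HasDerivAt ρ (deriv u (ρ y))⁻¹ y := by
    intro y hy
    apply HasDerivAt.of_local_left_inverse (hρ3 y (hyu y hy))
      (hud (ρ y) (hsub (hρmem y hy))) (ne_of_gt (lt_trans hmpos (hdu _ (hρmem y hy))))
    filter_upwards [Ioo_mem_nhds (hyu y hy).1 (hyu y hy).2] with z hz
    exact (hρ1 z (Ioo_subset_Icc_self hz)).2
  have hσd : ∀ y ∈ Set.Ioo z1 z2, HasDerivAt σ (deriv v (σ y))⁻¹ y := by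
    intro y hy
    apply HasDerivAt.of_local_left_inverse (hσ3 y (hyv y hy))
      (hvd (σ y) (hsub (hσmem y hy))) (ne_of_gt (lt_trans hmpos (hdv _ (hσmem y hy))))
    filter_upwards [Ioo_mem_nhds (hyv y hy).1 (hyv y hy).2] with z hz
    exact (hσ1 z (Ioo_subset_Icc_self hz)).2
  -- P and Q
  set P : ℝ → ℝ := fun y => deriv u (ρ y) with hP
  set Q : ℝ → ℝ := fun y => deriv v (σ y) with hQ
  have hPpos : ∀ y ∈ Set.Ioo z1 z2, m < P y := fun y hy => hdu _ (hρmem y hy)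
  have hQpos : ∀ y ∈ Set.Ioo z1 z2, m < Q y := fun y hy => hdv _ (hσmem y hy)
  have hPd : ∀ y ∈ Set.Ioo z1 z2,
      HasDerivAt P (deriv (deriv u) (ρ y) * (P y)⁻¹) y := by
    intro y hy
    have := HasDerivAt.comp y (hud2 (ρ y) (hsub (hρmem y hy))) (hρd y hy)
    exact this
  have hQd : ∀ y ∈ Set.Ioo z1 z2,
      HasDerivAt Q (deriv (deriv v) (σ y) * (Q y)⁻¹) y := by
    intro y hy
    have := HasDerivAt.comp y (hvd2 (σ y) (hsub (hσmem y hy))) (hσd y hy)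
    exact this
  -- the functions g and h of the ODE lemma
  set gf : ℝ → ℝ := fun y => (Q y) ^ 2 - (P y) ^ 2 with hgf
  set gf' : ℝ → ℝ := fun y => 2 * deriv (deriv v) (σ y) - 2 * deriv (deriv u) (ρ y) with hgf'
  set hf : ℝ → ℝ := fun y => σ y - ρ y with hhf
  set hf' : ℝ → ℝ := fun y => (Q y)⁻¹ - (P y)⁻¹ with hhf'
  have hgd : ∀ y ∈ Set.Ioo z1 z2, HasDerivAt gf (gf' y) y := by
    intro y hy
    have h1 := ((hQd y hy).pow 2).sub ((hPd y hy).pow 2)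
    refine h1.congr_deriv ?_
    have hPne : P y ≠ 0 := ne_of_gt (lt_trans hmpos (hPpos y hy))
    have hQne : Q y ≠ 0 := ne_of_gt (lt_trans hmpos (hQpos y hy))
    field_simp [hgf']
    ring
  have hhd : ∀ y ∈ Set.Ioo z1 z2, HasDerivAt hf (hf' y) y := fun y hy =>
    (hσd y hy).sub (hρd y hy)
  -- g y = 0 whenever ρ y = σ y (touching points)
  have htouch : ∀ y ∈ Set.Ioo z1 z2, ρ y = σ y → P y = Q y := by
    intro y hy he
    have h1 : u (ρ y) = v (ρ y) := by
      rw [hρval y hy]; conv_rhs => rw [he]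
      exact (hσval y hy).symm
    have h2 := LN.touch_deriv_eq hud hvd huv (hsub (hρmem y hy)) h1
    show deriv u (ρ y) = deriv v (σ y)
    rw [← he]; exact h2
  -- compact bounds
  obtain ⟨Mu, hMu⟩ := isCompact_Icc.exists_bound_of_continuousOn (hucont.mono hsub)
  obtain ⟨Mv, hMv⟩ := isCompact_Icc.exists_bound_of_continuousOn (hvcont.mono hsub)
  obtain ⟨Ru, hRu⟩ := isCompact_Icc.exists_bound_of_continuousOn (hucont2.mono hsub)
  obtain ⟨Rv, hRv⟩ := isCompact_Icc.exists_bound_of_continuousOn (hvcont2.mono hsub)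
  set M : ℝ := max Mu Mv with hM
  set R : ℝ := max Ru Rv with hR
  have hRnn : 0 ≤ R := le_trans (abs_nonneg _) (le_trans (hRu a haI) (le_max_left _ _))
  have hmM : m ≤ M := by
    have := hdu a haI
    have h2 := hMu a haI
    rw [Real.norm_eq_abs] at h2
    have := le_abs_self (deriv u a)
    calc m ≤ deriv u a := (hdu a haI).le
    _ ≤ |deriv u a| := le_abs_self _
    _ ≤ Mu := h2
    _ ≤ M := le_max_left _ _
  have hPmem : ∀ y ∈ Set.Ioo z1 z2, P y ∈ Set.Icc m M := by
    intro y hy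
    refine ⟨(hPpos y hy).le, ?_⟩
    have := hMu (ρ y) (hρmem y hy)
    rw [Real.norm_eq_abs] at this
    exact le_trans (le_abs_self _) (this.trans (le_max_left _ _))
  have hQmem : ∀ y ∈ Set.Ioo z1 z2, Q y ∈ Set.Icc m M := by
    intro y hy
    refine ⟨(hQpos y hy).le, ?_⟩
    have := hMv (σ y) (hσmem y hy)
    rw [Real.norm_eq_abs] at this
    exact le_trans (le_abs_self _) (this.trans (le_max_right _ _))
  have hq1mem : ∀ y ∈ Set.Ioo z1 z2, deriv (deriv u) (ρ y) ∈ Set.Icc (-R) R := by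
    intro y hy
    have := hRu (ρ y) (hρmem y hy)
    rw [Real.norm_eq_abs] at this
    have h2 : |deriv (deriv u) (ρ y)| ≤ R := this.trans (le_max_left _ _)
    exact abs_le.1 h2
  have hq2mem : ∀ y ∈ Set.Ioo z1 z2, deriv (deriv v) (σ y) ∈ Set.Icc (-R) R := by
    intro y hy
    have := hRv (σ y) (hσmem y hy)
    rw [Real.norm_eq_abs] at this
    have h2 : |deriv (deriv v) (σ y)| ≤ R := this.trans (le_max_right _ _)
    exact abs_le.1 h2
  -- bounds for Kp and Kq on the compact box
  set Box : Set (ℝ × ℝ × ℝ) := Set.Icc z1 z2 ×ˢ (Set.Icc m M ×ˢ Set.Icc (-R) R) with hBox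
  have hBoxc : IsCompact Box := (isCompact_Icc.prod (isCompact_Icc.prod isCompact_Icc))
  have hBoxne : Box.Nonempty :=
    ⟨(y0, m, 0), ⟨⟨hz1y0.le, hy0z2.le⟩, ⟨le_rfl, hmM⟩, neg_nonpos_of_nonneg hRnn, hRnn⟩⟩
  obtain ⟨C, hC⟩ := hBoxc.exists_bound_of_continuousOn hKpc.continuousOn
  have hCnn : 0 ≤ C := le_trans (norm_nonneg _) (hC _ hBoxne.choose_spec)
  obtain ⟨x0, hx0, hminKq⟩ := hBoxc.exists_isMinOn hBoxne hKqc.continuousOn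
  set c0 : ℝ := Kq x0.1 x0.2.1 x0.2.2 with hc0
  have hc0pos : 0 < c0 := hKqpos _ _ _
  have hc0le : ∀ x ∈ Box, c0 ≤ Kq x.1 x.2.1 x.2.2 := fun x hx => hminKq hx
  set M0 : ℝ := C / (c0 * m) with hM0
  have hM0nn : 0 ≤ M0 := by positivity
  -- the key differential inequality
  have hkey : ∀ y ∈ Set.Ioo z1 z2, gf y ≠ 0 → -(M0 * |gf y|) ≤ gf' y := by
    intro y hy hne
    -- strict inequality ρ y < σ y
    have hlt : ρ y < σ y := by
      rcases (hρσ y hy).lt_or_eq with h | h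
      · exact h
      · refine absurd ?_ hne
        have hpq := htouch y hy h
        simp only [hgf]
        rw [hpq]; ring
    set q1 : ℝ := deriv (deriv u) (ρ y) with hq1
    set q2 : ℝ := deriv (deriv v) (σ y) with hq2
    have hKin : K y (P y) q1 ≤ K y (Q y) q2 := by
      have := hmain (ρ y) (σ y) (hsub (hρmem y hy)).1 hlt (hsub (hσmem y hy)).2
        (by rw [hρval y hy, hσval y hy])
      rwa [hρval y hy, hσval y hy] at this
    -- mean value theorem in q
    obtain ⟨η, hη, hηeq⟩ := LN.mvt_eq (fun q => K y (Q y) q) (fun q => Kq y (Q y) q)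
      (fun q => hKq y (Q y) q) q1 q2
    -- mean value theorem in p
    obtain ⟨ξ, hξ, hξeq⟩ := LN.mvt_eq (fun p => K y p q1) (fun p => Kp y p q1)
      (fun p => hKp y p q1) (P y) (Q y)
    have hyIcc : y ∈ Set.Icc z1 z2 := Ioo_subset_Icc_self hy
    have hξmem : ξ ∈ Set.Icc m M := by
      refine ⟨le_trans ?_ hξ.1, le_trans hξ.2 ?_⟩
      · exact le_min (hPmem y hy).1 (hQmem y hy).1
      · exact max_le (hPmem y hy).2 (hQmem y hy).2
    have hηmem : η ∈ Set.Icc (-R) R := by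
      refine ⟨le_trans ?_ hη.1, le_trans hη.2 ?_⟩
      · exact le_min (hq1mem y hy).1 (hq2mem y hy).1
      · exact max_le (hq1mem y hy).2 (hq2mem y hy).2
    have hKpbd : |Kp y ξ q1| ≤ C := by
      have := hC (y, ξ, q1) ⟨hyIcc, hξmem, hq1mem y hy⟩
      rwa [Real.norm_eq_abs] at this
    have hKqbd : c0 ≤ Kq y (Q y) η := hc0le (y, Q y, η) ⟨hyIcc, hQmem y hy, hηmem⟩
    -- combine
    have hsum : 0 ≤ Kq y (Q y) η * (q2 - q1) + Kp y ξ q1 * (Q y - P y) := by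
      have e1 : K y (Q y) q2 - K y (Q y) q1 = Kq y (Q y) η * (q2 - q1) := hηeq
      have e2 : K y (Q y) q1 - K y (P y) q1 = Kp y ξ q1 * (Q y - P y) := hξeq
      linarith
    set d : ℝ := |Q y - P y| with hd
    have hstep : c0 * (q1 - q2) ≤ C * d := by
      have h1 : Kq y (Q y) η * (q1 - q2) ≤ Kp y ξ q1 * (Q y - P y) := by linarith
      have h2 : Kp y ξ q1 * (Q y - P y) ≤ C * d := by
        calc Kp y ξ q1 * (Q y - P y) ≤ |Kp y ξ q1 * (Q y - P y)| := le_abs_self _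
        _ = |Kp y ξ q1| * d := by rw [abs_mul]
        _ ≤ C * d := mul_le_mul_of_nonneg_right hKpbd (abs_nonneg _)
      rcases le_or_gt (q1 - q2) 0 with h3 | h3
      · calc c0 * (q1 - q2) ≤ 0 := mul_nonpos_of_nonneg_of_nonpos hc0pos.le h3
        _ ≤ C * d := by positivity
      · calc c0 * (q1 - q2) ≤ Kq y (Q y) η * (q1 - q2) :=
            mul_le_mul_of_nonneg_right hKqbd h3.le
        _ ≤ Kp y ξ q1 * (Q y - P y) := h1
        _ ≤ C * d := h2
    have habs : d * (2 * m) ≤ |gf y| := by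
      have hfac : gf y = (Q y - P y) * (Q y + P y) := by simp only [hgf]; ring
      have hQP : 0 < Q y + P y := by
        have := hPpos y hy; have := hQpos y hy; linarith
      have h2m : 2 * m ≤ Q y + P y := by
        have := hPpos y hy; have := hQpos y hy; linarith
      rw [hfac, abs_mul, abs_of_pos hQP]
      exact mul_le_mul_of_nonneg_left h2m (abs_nonneg _)
    -- final arithmetic
    have hfin : 2 * (q1 - q2) * (c0 * m) ≤ C * |gf y| := by
      calc 2 * (q1 - q2) * (c0 * m) = 2 * m * (c0 * (q1 - q2)) := by ring
      _ ≤ 2 * m * (C * d) := mul_le_mul_of_nonneg_left hstep (by positivity)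
      _ = C * (d * (2 * m)) := by ring
      _ ≤ C * |gf y| := mul_le_mul_of_nonneg_left habs hCnn
    have hgoal : 2 * (q1 - q2) ≤ M0 * |gf y| := by
      rw [hM0, div_mul_eq_mul_div, le_div_iff₀ (by positivity)]
      linarith
    have h5 : gf' y = 2 * q2 - 2 * q1 := by
      rw [hq1, hq2]
    rw [h5]
    linarith
  -- the sign conditions
  have hsign : ∀ y ∈ Set.Ioo z1 z2,
      (0 < gf y → hf' y < 0) ∧ (gf y < 0 → 0 < hf' y) ∧ (gf y = 0 → hf' y = 0) := by
    intro y hy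
    have hP1 : 0 < P y := lt_trans hmpos (hPpos y hy)
    have hQ1 : 0 < Q y := lt_trans hmpos (hQpos y hy)
    refine ⟨?_, ?_, ?_⟩
    · intro h
      have h' : (P y) ^ 2 < (Q y) ^ 2 := by
        have h2 := h; simp only [hgf] at h2; linarith
      have hPQ : P y < Q y := by nlinarith
      have : (Q y)⁻¹ < (P y)⁻¹ := by
        rw [inv_lt_inv₀ hQ1 hP1]; exact hPQ
      simp only [hhf']; linarith
    · intro h
      have h' : (Q y) ^ 2 < (P y) ^ 2 := by
        have h2 := h; simp only [hgf] at h2; linarith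
      have hPQ : Q y < P y := by nlinarith
      have : (P y)⁻¹ < (Q y)⁻¹ := by
        rw [inv_lt_inv₀ hP1 hQ1]; exact hPQ
      simp only [hhf']; linarith
    · intro h
      have hPQ : P y = Q y := by
        have hfac : (Q y - P y) * (Q y + P y) = 0 := by
          have h3 : gf y = (Q y - P y) * (Q y + P y) := by simp only [hgf]; ring
          rw [← h3]; exact h
        rcases mul_eq_zero.1 hfac with h1 | h1
        · linarith [sub_eq_zero.1 h1]
        · linarith
      simp only [hhf', hPQ]
      exact sub_self _
  -- base point values
  have hρy0 : ρ y0 = tb := by rw [hy0]; exact hρ2 tb htbI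
  have hσy0 : σ y0 = tb := by rw [heq]; exact hσ2 tb htbI
  have hgf0 : gf y0 = 0 := by
    have e1 : P y0 = deriv u tb := by simp only [hP, hρy0]
    have e2 : Q y0 = deriv v tb := by simp only [hQ, hσy0]
    simp only [hgf]
    rw [e1, e2, hp0]; ring
  have hhf0 : hf y0 = 0 := by simp only [hhf, hρy0, hσy0]; exact sub_self tb
  have hhpos : ∀ y ∈ Set.Ioo z1 z2, 0 ≤ hf y := fun y hy =>
    sub_nonneg.2 (hρσ y hy)
  -- apply the ODE lemma
  have hzero : ∀ y ∈ Set.Ioo z1 z2, gf y = 0 :=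
    LN.ode_zero hz1y0 hy0z2 hM0nn gf gf' hf hf' hgd hhd hkey hhpos hsign hgf0 hhf0
  -- hence hf' = 0 and hf = 0 on the interval
  have hhf'zero : ∀ y ∈ Set.Ioo z1 z2, hf' y = 0 := fun y hy =>
    ((hsign y hy).2.2 (hzero y hy))
  have hhfzero : ∀ y ∈ Set.Ioo z1 z2, hf y = 0 := by
    intro y hy
    rcases lt_trichotomy y y0 with hcmp | hcmp | hcmp
    · obtain ⟨w, hw, hweq⟩ := exists_hasDerivAt_eq_slope hf hf' hcmp
        (fun x hx => (hhd x ⟨lt_of_lt_of_le hy.1 hx.1, lt_of_le_of_lt hx.2 hy0z2⟩)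
          |>.continuousAt.continuousWithinAt)
        (fun x hx => hhd x ⟨lt_trans hy.1 hx.1, lt_trans hx.2 hy0z2⟩)
      have hwmem : w ∈ Set.Ioo z1 z2 := ⟨lt_trans hy.1 hw.1, lt_trans hw.2 hy0z2⟩
      have hz := hhf'zero w hwmem
      rw [hz] at hweq
      have h9 : hf y0 - hf y = 0 := by
        rcases div_eq_zero_iff.1 hweq.symm with h | h
        · exact h
        · exact absurd h (sub_ne_zero.2 (ne_of_gt hcmp))
      rw [hhf0] at h9; linarith
    · rw [hcmp]; exact hhf0
    · obtain ⟨w, hw, hweq⟩ := exists_hasDerivAt_eq_slope hf hf' hcmp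
        (fun x hx => (hhd x ⟨lt_of_lt_of_le hz1y0 hx.1, lt_of_le_of_lt hx.2 hy.2⟩)
          |>.continuousAt.continuousWithinAt)
        (fun x hx => hhd x ⟨lt_trans hz1y0 hx.1, lt_trans hx.2 hy.2⟩)
      have hwmem : w ∈ Set.Ioo z1 z2 := ⟨lt_trans hz1y0 hw.1, lt_trans hw.2 hy.2⟩
      have hz := hhf'zero w hwmem
      rw [hz] at hweq
      have h9 : hf y - hf y0 = 0 := by
        rcases div_eq_zero_iff.1 hweq.symm with h | h
        · exact h
        · exact absurd h (sub_ne_zero.2 (ne_of_gt hcmp))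
      rw [hhf0] at h9; linarith
  -- conclude equality on an open neighbourhood
  have hO : IsOpen (Set.Ioo a c ∩ u ⁻¹' Set.Ioo z1 z2) :=
    (hu2.continuousOn.mono (fun t ht => hsub (Ioo_subset_Icc_self ht))).isOpen_inter_preimage
      isOpen_Ioo isOpen_Ioo
  have htbO : tb ∈ Set.Ioo a c ∩ u ⁻¹' Set.Ioo z1 z2 :=
    ⟨htbm, by rw [Set.mem_preimage, ← hy0]; exact ⟨hz1y0, hy0z2⟩⟩
  filter_upwards [hO.mem_nhds htbO] with t ht
  have htIcc : t ∈ Set.Icc a c := Ioo_subset_Icc_self ht.1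
  have hyt : u t ∈ Set.Ioo z1 z2 := ht.2
  have h1 : ρ (u t) = t := hρ2 t htIcc
  have h2 : σ (u t) = ρ (u t) := by
    have h5 := hhfzero (u t) hyt
    simp only [hhf] at h5
    linarith
  have h3 : v (σ (u t)) = u t := hσval (u t) hyt
  rw [h2, h1] at h3
  exact h3.symm

/-- Lemma 5.1 of Li–Nirenberg, extending Lemma 2.1 to general second order operators. -/
theorem stmt_10 (K Kp Kq : ℝ → ℝ → ℝ → ℝ)
    (hK : Continuous fun x : ℝ × ℝ × ℝ => K x.1 x.2.1 x.2.2)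
    (hKp : ∀ s p q : ℝ, HasDerivAt (fun p' => K s p' q) (Kp s p q) p)
    (hKq : ∀ s p q : ℝ, HasDerivAt (fun q' => K s p q') (Kq s p q) q)
    (hKpc : Continuous fun x : ℝ × ℝ × ℝ => Kp x.1 x.2.1 x.2.2)
    (hKqc : Continuous fun x : ℝ × ℝ × ℝ => Kq x.1 x.2.1 x.2.2)
    (hKqpos : ∀ s p q : ℝ, 0 < Kq s p q)
    (b : ℝ) (hb : 0 < b) (u v : ℝ → ℝ)
    (hu2 : ContDiffOn ℝ 2 u (Set.Ioo 0 b)) (hv2 : ContDiffOn ℝ 2 v (Set.Ioo 0 b))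
    (huv : ∀ t ∈ Set.Ioo 0 b, v t ≤ u t)
    (hmono : ∀ t ∈ Set.Ioo 0 b, 0 < max (deriv u t) (deriv v t))
    (hmain : ∀ t s : ℝ, 0 < t → t < s → s < b → u t = v s →
      K (u t) (deriv u t) (deriv (deriv u) t) ≤ K (v s) (deriv v s) (deriv (deriv v) s)) :
    (∀ t ∈ Set.Ioo 0 b, v t < u t) ∨ (∀ t ∈ Set.Ioo 0 b, u t = v t) := by
  by_cases hex : ∃ t0 ∈ Set.Ioo 0 b, u t0 = v t0
  · right
    obtain ⟨t0, ht0, ht0eq⟩ := hex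
    have hloc : ∀ t ∈ Set.Ioo 0 b, u t = v t → ∀ᶠ s in nhds t, u s = v s := fun t ht h =>
      LN.local_eq K Kp Kq hKp hKq hKpc hKqc hKqpos b hb u v hu2 hv2 huv hmono hmain t ht h
    set S : Set (Set ℝ) := {O | IsOpen O ∧ ∀ s ∈ O, u s = v s} with hS
    set W : Set ℝ := ⋃₀ S with hW
    have hWopen : IsOpen W := isOpen_sUnion fun O hO => hO.1
    have hWeq : ∀ t ∈ W, u t = v t := by
      intro t ht
      obtain ⟨O, hO, htO⟩ := ht
      exact hO.2 t htO
    have hmemW : ∀ t ∈ Set.Ioo 0 b, u t = v t → t ∈ W := by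
      intro t ht h
      obtain ⟨E, hE, hEeq⟩ := Filter.eventually_iff_exists_mem.1 (hloc t ht h)
      refine ⟨interior E, ⟨isOpen_interior, fun s hs => hEeq s (interior_subset hs)⟩, ?_⟩
      exact mem_interior_iff_mem_nhds.2 hE
    set U : Set ℝ := Set.Ioo 0 b ∩ (fun t => u t - v t) ⁻¹' Set.Ioi 0 with hU
    have hUopen : IsOpen U :=
      (hu2.continuousOn.sub hv2.continuousOn).isOpen_inter_preimage isOpen_Ioo isOpen_Ioi
    intro t ht
    by_contra hne
    have htU : t ∈ U := ⟨ht, by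
      have h1 := huv t ht
      have h2 : v t < u t := lt_of_le_of_ne h1 (fun h => hne h.symm)
      simpa using sub_pos.2 h2⟩
    have ht0W : t0 ∈ W := hmemW t0 ht0 ht0eq
    have hcover : Set.Ioo 0 b ⊆ U ∪ W := by
      intro s hs
      by_cases h : u s = v s
      · exact Or.inr (hmemW s hs h)
      · refine Or.inl ⟨hs, ?_⟩
        have h2 : v s < u s := lt_of_le_of_ne (huv s hs) (Ne.symm h)
        simpa using sub_pos.2 h2
    obtain ⟨x, hx1, hx2, hx3⟩ := isPreconnected_Ioo (a := (0:ℝ)) (b := b) U W hUopen hWopen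
      hcover ⟨t, ht, htU⟩ ⟨t0, ht0, ht0W⟩
    have h1 : u x = v x := hWeq x hx3
    have h2 : 0 < u x - v x := hx2.2
    rw [h1] at h2
    simp at h2
  · left
    intro t ht
    refine lt_of_le_of_ne (huv t ht) (fun h => hex ⟨t, ht, h.symm⟩)
end

section
/- Let K : ℝ → ℝ be C¹ with K'(p) > 0 for all p ∈ ℝ and with K' an even function. Let f : (0,∞) → ℝ be locally Lipschitz on (0,∞) (not necessarily up to 0). Let c > 0 and let u, w be real functions on [0,c) that are continuously differentiable on [0,c) and positive on (0,c), such that the functions t ↦ K(u'(t)) and t ↦ K(w'(t)) are differentiable on (0,c) with (d/dt) K(u'(t)) = f(u(t)) and (d/dt) K(w'(t)) = f(w(t)) for all t ∈ (0,c). Assume u(0) = w(0) = 0 and u'(0) = w'(0). Then u(t) = w(t) for all t ∈ [0,c). -/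
open Set Filter Topology

/-- Constancy from zero derivative on an open interval. -/
lemma aux_const {a b : ℝ} {g : ℝ → ℝ} (hg : ∀ t ∈ Set.Ioo a b, HasDerivAt g 0 t) :
    ∀ t₁ ∈ Set.Ioo a b, ∀ t₂ ∈ Set.Ioo a b, g t₁ = g t₂ := by
  have key : ∀ s t : ℝ, s ∈ Set.Ioo a b → t ∈ Set.Ioo a b → s ≤ t → g t = g s := by
    intro s t hs ht hst
    have sub : Set.Icc s t ⊆ Set.Ioo a b := fun x hx =>
      ⟨lt_of_lt_of_le hs.1 hx.1, lt_of_le_of_lt hx.2 ht.2⟩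
    exact constant_of_has_deriv_right_zero
      (fun x hx => (hg x (sub hx)).continuousAt.continuousWithinAt)
      (fun x hx => (hg x (sub (Set.Ico_subset_Icc_self hx))).hasDerivWithinAt)
      t ⟨hst, le_rfl⟩
  intro t₁ h₁ t₂ h₂
  rcases le_total t₁ t₂ with h | h
  · exact (key t₁ t₂ h₁ h₂ h).symm
  · exact key t₂ t₁ h₂ h₁ h

/-- Clopen propagation of equality of two continuous curves on an open interval,
given local uniqueness at points of agreement. -/
lemma aux_clopen {a b : ℝ} {X Y : ℝ → ℝ × ℝ}
    (hcX : ContinuousOn X (Set.Ioo a b)) (hcY : ContinuousOn Y (Set.Ioo a b))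
    (hloc : ∀ t ∈ Set.Ioo a b, X t = Y t → X =ᶠ[nhds t] Y)
    {t₀ : ℝ} (ht₀ : t₀ ∈ Set.Ioo a b) (h0 : X t₀ = Y t₀) :
    Set.EqOn X Y (Set.Ioo a b) := by
  haveI : PreconnectedSpace (Set.Ioo a b) :=
    Subtype.preconnectedSpace (isPreconnected_Ioo (a := a) (b := b))
  set A : Set (Set.Ioo a b) := Subtype.val ⁻¹' {s | X s = Y s} with hA
  have hA_cl : IsClosed A := by
    apply isClosed_eq
    · exact (hcX.restrict).fst.prodMk (hcX.restrict).snd |>.congr (fun x => rfl) |>.congr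
        (fun x => rfl) |>.congr (fun x => rfl)
    · exact hcY.restrict
  have hA_op : IsOpen A := by
    rw [isOpen_iff_mem_nhds]
    rintro ⟨t, ht⟩ htA
    exact continuous_subtype_val.continuousAt.preimage_mem_nhds
      (by filter_upwards [hloc t ht htA] with s hs using hs)
  have : A = Set.univ := (IsClopen.eq_univ ⟨hA_cl, hA_op⟩ ⟨⟨t₀, ht₀⟩, h0⟩)
  intro t ht
  have : (⟨t, ht⟩ : Set.Ioo a b) ∈ A := this ▸ Set.mem_univ _
  exact this

noncomputable def auxPhi (K : ℝ → ℝ) : ℝ → ℝ := fun p => ∫ s in (0:ℝ)..p, s * deriv K s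
noncomputable def auxF (f : ℝ → ℝ) : ℝ → ℝ := fun x => ∫ s in (1:ℝ)..x, f s

section
variable {K : ℝ → ℝ} (hK : ContDiff ℝ 1 K)

lemma auxPhi_hasDerivAt (hK : ContDiff ℝ 1 K) (p : ℝ) :
    HasDerivAt (auxPhi K) (p * deriv K p) p := by
  have hcont : Continuous (fun s : ℝ => s * deriv K s) :=
    continuous_id.mul (hK.continuous_deriv le_rfl)
  exact intervalIntegral.integral_hasDerivAt_right
    (hcont.intervalIntegrable _ _)
    (hcont.stronglyMeasurableAtFilter _ _)
    hcont.continuousAt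

lemma auxPhi_even (hK : ContDiff ℝ 1 K) (hKeven : ∀ p : ℝ, deriv K (-p) = deriv K p) (p : ℝ) :
    auxPhi K (-p) = auxPhi K p := by
  have h1 : (∫ s in (0:ℝ)..p, (-s) * deriv K (-s)) = ∫ s in (-p)..(0:ℝ), s * deriv K s := by
    simpa using intervalIntegral.integral_comp_neg (fun s => s * deriv K s) (a := (0:ℝ)) (b := p)
  have h2 : (∫ s in (0:ℝ)..p, (-s) * deriv K (-s)) = -(auxPhi K p) := by
    unfold auxPhi
    rw [← intervalIntegral.integral_neg]
    apply intervalIntegral.integral_congr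
    intro s _
    simp [hKeven s]
  have h3 : auxPhi K (-p) = -∫ s in (-p)..(0:ℝ), s * deriv K s := by
    unfold auxPhi
    rw [intervalIntegral.integral_symm]
  rw [h3, ← h1, h2, neg_neg]
lemma auxPhi_zero : auxPhi K 0 = 0 := intervalIntegral.integral_same

lemma auxPhi_strictMonoOn (hK : ContDiff ℝ 1 K) (hK' : ∀ p : ℝ, 0 < deriv K p) :
    StrictMonoOn (auxPhi K) (Set.Ici 0) := by
  apply strictMonoOn_of_deriv_pos (convex_Ici 0)
    (fun x _ => (auxPhi_hasDerivAt hK x).continuousAt.continuousWithinAt)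
  intro x hx
  rw [interior_Ici] at hx
  rw [(auxPhi_hasDerivAt hK x).deriv]
  exact mul_pos hx (hK' x)

lemma auxPhi_pos (hK : ContDiff ℝ 1 K) (hK' : ∀ p : ℝ, 0 < deriv K p)
    (hKeven : ∀ p : ℝ, deriv K (-p) = deriv K p) {p : ℝ} (hp : p ≠ 0) :
    0 < auxPhi K p := by
  rcases hp.lt_or_gt with h | h
  · have := auxPhi_strictMonoOn hK hK' (Set.self_mem_Ici) (by simp [le_of_lt (neg_pos.2 h)] : (-p) ∈ Set.Ici (0:ℝ)) (neg_pos.2 h)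
    rw [auxPhi_zero, auxPhi_even hK hKeven] at this
    exact this
  · have := auxPhi_strictMonoOn hK hK' (Set.self_mem_Ici) (le_of_lt h) h
    rwa [auxPhi_zero] at this

lemma aux_Ksum (hK : ContDiff ℝ 1 K) (hKeven : ∀ p : ℝ, deriv K (-p) = deriv K p) (p : ℝ) :
    K p + K (-p) = 2 * K 0 := by
  have hg : ∀ q : ℝ, HasDerivAt (fun x => K x + K (-x)) 0 q := by
    intro q
    have h1 : HasDerivAt K (deriv K q) q := (hK.differentiable one_ne_zero q).hasDerivAt
    have h2 : HasDerivAt (fun x : ℝ => K (-x)) (deriv K (-q) * (-1)) q :=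
      ((hK.differentiable one_ne_zero (-q)).hasDerivAt).comp q ((hasDerivAt_id q).neg)
    have := h1.add h2
    rw [hKeven] at this
    have h3 : deriv K q + deriv K q * -1 = 0 := by ring
    rw [h3] at this
    exact this
  have hco : (fun x => K x + K (-x)) p = (fun x => K x + K (-x)) 0 :=
    is_const_of_deriv_eq_zero (fun x => (hg x).differentiableAt) (fun x => (hg x).deriv) p 0
  simpa [two_mul] using hco

end

section
variable {f : ℝ → ℝ}
  (hf : ∀ s : Set ℝ, s ⊆ Set.Ioi 0 → IsCompact s → ∃ L : NNReal, LipschitzOnWith L f s)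

include hf

lemma aux_fcont : ContinuousOn f (Set.Ioi 0) := by
  intro x hx
  have hx0 : (0:ℝ) < x := hx
  obtain ⟨L, hL⟩ := hf (Set.Icc (x/2) (x+1))
    (fun y hy => lt_of_lt_of_le (by linarith) hy.1) isCompact_Icc
  have : ContinuousAt f x := by
    apply (hL.continuousOn.continuousAt (Icc_mem_nhds (by linarith) (by linarith)))
  exact this.continuousWithinAt

lemma auxF_hasDerivAt {x : ℝ} (hx : 0 < x) : HasDerivAt (auxF f) (f x) x := by
  have hcont := aux_fcont hf
  apply intervalIntegral.integral_hasDerivAt_right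
  · apply ContinuousOn.intervalIntegrable
    apply hcont.mono
    intro y hy
    have : min (1:ℝ) x ≤ y := hy.1
    have h0 : (0:ℝ) < min 1 x := lt_min one_pos hx
    exact lt_of_lt_of_le h0 this
  · exact hcont.stronglyMeasurableAtFilter isOpen_Ioi x hx
  · exact hcont.continuousAt (Ioi_mem_nhds hx)
end

/-- Construct a local inverse of `K` near `p1` and a Lipschitz vector field for the
first-order system, on a neighborhood of `(x1, K p1)` with `x1 > 0`. -/
lemma aux_mk_lip {K f : ℝ → ℝ} (hK : ContDiff ℝ 1 K) (hK' : ∀ p : ℝ, 0 < deriv K p)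
    (hf : ∀ s : Set ℝ, s ⊆ Set.Ioi 0 → IsCompact s → ∃ L : NNReal, LipschitzOnWith L f s)
    (p1 x1 : ℝ) (hx1 : 0 < x1) :
    ∃ (ψ : ℝ → ℝ) (S : Set (ℝ × ℝ)) (L : NNReal),
      S ∈ nhds ((x1, K p1) : ℝ × ℝ) ∧ (∀ᶠ p in nhds p1, ψ (K p) = p) ∧
      LipschitzOnWith L (fun q : ℝ × ℝ => (ψ q.2, f q.1)) S := by
  have hsd : HasStrictDerivAt K (deriv K p1) p1 :=
    (hK.contDiffAt).hasStrictDerivAt one_ne_zero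
  have hne : deriv K p1 ≠ 0 := (hK' p1).ne'
  set Kfd := hsd.hasStrictFDerivAt_equiv hne with hKfd
  set ψ : ℝ → ℝ := hsd.localInverse K (deriv K p1) p1 hne with hψdef
  have hleft : ∀ᶠ p in nhds p1, ψ (K p) = p := Kfd.eventually_left_inverse
  have hψd : HasStrictDerivAt ψ (deriv K p1)⁻¹ (K p1) := hsd.to_localInverse hne
  obtain ⟨L1, t, ht, hlip1⟩ := hψd.hasStrictFDerivAt.exists_lipschitzOnWith
  obtain ⟨L2, hlip2⟩ := hf (Set.Icc (x1/2) (x1 + x1))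
    (fun y hy => lt_of_lt_of_le (by linarith) hy.1) isCompact_Icc
  have hx_nhds : Set.Ioo (x1/2) (x1 + x1) ∈ nhds x1 :=
    Ioo_mem_nhds (by linarith) (by linarith)
  refine ⟨ψ, (Set.Ioo (x1/2) (x1 + x1)) ×ˢ t, max (L1 * 1) (L2 * 1), ?_, hleft, ?_⟩
  · exact prod_mem_nhds hx_nhds ht
  · apply LipschitzOnWith.prodMk
    · exact hlip1.comp ((LipschitzWith.prod_snd (α := ℝ) (β := ℝ)).lipschitzOnWith)
        (fun q hq => hq.2)
    · exact hlip2.comp ((LipschitzWith.prod_fst (α := ℝ) (β := ℝ)).lipschitzOnWith)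
        (fun q hq => Set.mem_Icc.2 ⟨le_of_lt hq.1.1, le_of_lt hq.1.2⟩)

section Sol
variable {K f : ℝ → ℝ} {c : ℝ} {u : ℝ → ℝ}

lemma sol_hasDeriv (hu1 : ContDiffOn ℝ 1 u (Set.Ico 0 c)) {t : ℝ} (ht : t ∈ Set.Ioo 0 c) :
    HasDerivAt u (deriv u t) t :=
  ((hu1.contDiffAt (Ico_mem_nhds ht.1 ht.2)).differentiableAt one_ne_zero).hasDerivAt

lemma sol_derivContAt (hu1 : ContDiffOn ℝ 1 u (Set.Ico 0 c)) {t : ℝ} (ht : t ∈ Set.Ioo 0 c) :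
    ContinuousAt (deriv u) t := by
  have hdw : ContinuousOn (derivWithin u (Set.Ico 0 c)) (Set.Ico 0 c) :=
    (hu1.continuousOn_derivWithin (uniqueDiffOn_Ico 0 c) le_rfl)
  have h1 : ContinuousAt (derivWithin u (Set.Ico 0 c)) t :=
    hdw.continuousAt (Ico_mem_nhds ht.1 ht.2)
  have he : derivWithin u (Set.Ico 0 c) =ᶠ[nhds t] deriv u := by
    filter_upwards [Ioo_mem_nhds ht.1 ht.2] with s hs
    exact (derivWithin_of_mem_nhds (Ico_mem_nhds hs.1 hs.2))
  exact h1.congr he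

lemma sol_deriv_tendsto (hc : 0 < c) (hu1 : ContDiffOn ℝ 1 u (Set.Ico 0 c)) :
    Tendsto (deriv u) (nhdsWithin 0 (Set.Ioi 0)) (nhds (derivWithin u (Set.Ico 0 c) 0)) := by
  have hdw : ContinuousOn (derivWithin u (Set.Ico 0 c)) (Set.Ico 0 c) :=
    hu1.continuousOn_derivWithin (uniqueDiffOn_Ico 0 c) le_rfl
  have h0 : Tendsto (derivWithin u (Set.Ico 0 c)) (nhdsWithin 0 (Set.Ico 0 c))
      (nhds (derivWithin u (Set.Ico 0 c) 0)) := hdw.continuousWithinAt ⟨le_rfl, hc⟩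
  have h1 : Tendsto (derivWithin u (Set.Ico 0 c)) (nhdsWithin 0 (Set.Ioo 0 c))
      (nhds (derivWithin u (Set.Ico 0 c) 0)) :=
    h0.mono_left (nhdsWithin_mono 0 Set.Ioo_subset_Ico_self)
  rw [nhdsWithin_Ioo_eq_nhdsGT hc] at h1
  apply h1.congr'
  filter_upwards [Ioo_mem_nhdsGT_of_mem ⟨le_rfl, hc⟩] with t ht
  exact (derivWithin_of_mem_nhds (Ico_mem_nhds ht.1 ht.2))

lemma sol_tendsto0 (hc : 0 < c) (hu1 : ContDiffOn ℝ 1 u (Set.Ico 0 c)) (hu0 : u 0 = 0) :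
    Tendsto u (nhdsWithin 0 (Set.Ioi 0)) (nhds 0) := by
  have h0 : Tendsto u (nhdsWithin 0 (Set.Ico 0 c)) (nhds (u 0)) :=
    hu1.continuousOn.continuousWithinAt ⟨le_rfl, hc⟩
  have h1 := h0.mono_left (nhdsWithin_mono 0 Set.Ioo_subset_Ico_self)
  rw [nhdsWithin_Ioo_eq_nhdsGT hc, hu0] at h1
  exact h1

lemma sol_energy (hK : ContDiff ℝ 1 K) (hK' : ∀ p : ℝ, 0 < deriv K p)
    (hf : ∀ s : Set ℝ, s ⊆ Set.Ioi 0 → IsCompact s → ∃ L : NNReal, LipschitzOnWith L f s)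
    (hu1 : ContDiffOn ℝ 1 u (Set.Ico 0 c))
    (hupos : ∀ t ∈ Set.Ioo 0 c, 0 < u t)
    (hueq : ∀ t ∈ Set.Ioo 0 c, HasDerivAt (fun τ => K (deriv u τ)) (f (u t)) t) :
    ∀ t₁ ∈ Set.Ioo 0 c, ∀ t₂ ∈ Set.Ioo 0 c,
      auxPhi K (deriv u t₁) - auxF f (u t₁) = auxPhi K (deriv u t₂) - auxF f (u t₂) := by
  apply aux_const
  intro t ht
  set p1 := deriv u t with hp1
  have hsd : HasStrictDerivAt K (deriv K p1) p1 := (hK.contDiffAt).hasStrictDerivAt one_ne_zero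
  have hne : deriv K p1 ≠ 0 := (hK' p1).ne'
  set ψ : ℝ → ℝ := hsd.localInverse K (deriv K p1) p1 hne with hψdef
  have hleft : ∀ᶠ p in nhds p1, ψ (K p) = p :=
    (hsd.hasStrictFDerivAt_equiv hne).eventually_left_inverse
  have hψd : HasStrictDerivAt ψ (deriv K p1)⁻¹ (K p1) := hsd.to_localInverse hne
  have hψK : ψ (K p1) = p1 := hleft.self_of_nhds
  have hKv : HasDerivAt (fun τ => K (deriv u τ)) (f (u t)) t := hueq t ht
  have hPhiAt : HasDerivAt (auxPhi K) (p1 * deriv K p1) (ψ (K p1)) := by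
    rw [hψK]; exact auxPhi_hasDerivAt hK p1
  have hA : HasDerivAt (fun y => auxPhi K (ψ y)) ((p1 * deriv K p1) * (deriv K p1)⁻¹) (K p1) :=
    hPhiAt.comp (K p1) hψd.hasDerivAt
  have hB : HasDerivAt (fun τ => auxPhi K (ψ (K (deriv u τ))))
      (((p1 * deriv K p1) * (deriv K p1)⁻¹) * f (u t)) t := HasDerivAt.comp (h₂ := fun y => auxPhi K (ψ y)) t hA hKv
  have hC : (fun τ => auxPhi K (deriv u τ)) =ᶠ[nhds t]
      (fun τ => auxPhi K (ψ (K (deriv u τ)))) := by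
    filter_upwards [(sol_derivContAt hu1 ht).eventually hleft] with τ hτ
    rw [hτ]
  have hD : HasDerivAt (fun τ => auxPhi K (deriv u τ))
      (((p1 * deriv K p1) * (deriv K p1)⁻¹) * f (u t)) t := hB.congr_of_eventuallyEq hC
  have hE : HasDerivAt (fun τ => auxF f (u τ)) (f (u t) * p1) t :=
    (auxF_hasDerivAt hf (hupos t ht)).comp t (sol_hasDeriv hu1 ht)
  have := hD.sub hE
  refine this.congr_deriv ?_
  field_simp
  ring

lemma sol_nocrit (hK : ContDiff ℝ 1 K) (hK' : ∀ p : ℝ, 0 < deriv K p)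
    (hKeven : ∀ p : ℝ, deriv K (-p) = deriv K p)
    (hf : ∀ s : Set ℝ, s ⊆ Set.Ioi 0 → IsCompact s → ∃ L : NNReal, LipschitzOnWith L f s)
    (hc : 0 < c) (hu1 : ContDiffOn ℝ 1 u (Set.Ico 0 c))
    (hupos : ∀ t ∈ Set.Ioo 0 c, 0 < u t)
    (hueq : ∀ t ∈ Set.Ioo 0 c, HasDerivAt (fun τ => K (deriv u τ)) (f (u t)) t)
    (hu0 : u 0 = 0) :
    ∀ t ∈ Set.Ioo 0 (c/2), deriv u t ≠ 0 := by
  have hKmono : StrictMono K :=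
    strictMono_of_deriv_pos hK'
  have hKsum := aux_Ksum hK hKeven
  intro tb htb heq0
  have htb0 : 0 < tb := htb.1
  have h2tb : 2 * tb < c := by linarith [htb.2]
  set X : ℝ → ℝ × ℝ := fun t => (u t, K (deriv u t)) with hX
  set Y : ℝ → ℝ × ℝ := fun t => (u (2*tb - t), 2*K 0 - K (deriv u (2*tb - t))) with hY
  have hIsub : ∀ {t : ℝ}, t ∈ Set.Ioo 0 (2*tb) → t ∈ Set.Ioo 0 c :=
    fun ht => ⟨ht.1, by linarith [ht.2]⟩
  have hrefl : ∀ {t : ℝ}, t ∈ Set.Ioo 0 (2*tb) → (2*tb - t) ∈ Set.Ioo 0 (2*tb) := by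
    intro t ht
    exact ⟨by linarith [ht.2], by linarith [ht.1]⟩
  have hcu : ∀ {t : ℝ}, t ∈ Set.Ioo 0 c → ContinuousAt u t :=
    fun ht => (sol_hasDeriv hu1 ht).continuousAt
  have hcXat : ∀ {t : ℝ}, t ∈ Set.Ioo 0 c → ContinuousAt X t := by
    intro t ht
    exact (hcu ht).prodMk ((hK.continuous.continuousAt).comp (sol_derivContAt hu1 ht))
  have haff : ∀ t : ℝ, ContinuousAt (fun s : ℝ => 2*tb - s) t :=
    fun t => (continuous_const.sub continuous_id).continuousAt
  have hcYat : ∀ {t : ℝ}, t ∈ Set.Ioo 0 (2*tb) → ContinuousAt Y t := by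
    intro t ht
    have h' : (2*tb - t) ∈ Set.Ioo 0 c := hIsub (hrefl ht)
    exact ((hcu h').comp (haff t)).prodMk
      (continuousAt_const.sub ((hK.continuous.continuousAt).comp
        ((sol_derivContAt hu1 h').comp (haff t))))
  have hcX : ContinuousOn X (Set.Ioo 0 (2*tb)) :=
    fun t ht => (hcXat (hIsub ht)).continuousWithinAt
  have hcY : ContinuousOn Y (Set.Ioo 0 (2*tb)) :=
    fun t ht => (hcYat ht).continuousWithinAt
  have haffd : ∀ t : ℝ, HasDerivAt (fun s : ℝ => 2*tb - s) (-1) t := by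
    intro t
    simpa using (hasDerivAt_id t).const_sub (2*tb)
  -- local uniqueness
  have hloc : ∀ t1 ∈ Set.Ioo 0 (2*tb), X t1 = Y t1 → X =ᶠ[nhds t1] Y := by
    intro t1 ht1 heq
    have ht1c : t1 ∈ Set.Ioo 0 c := hIsub ht1
    have ht1c' : (2*tb - t1) ∈ Set.Ioo 0 c := hIsub (hrefl ht1)
    set p1 := deriv u t1 with hp1
    have heq1 : u (2*tb - t1) = u t1 := (Prod.ext_iff.1 heq).1.symm
    have heq2 : K (deriv u (2*tb - t1)) = K (-p1) := by
      have h2 := (Prod.ext_iff.1 heq).2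
      have : K (-p1) = 2*K 0 - K p1 := by have := hKsum p1; linarith
      simp only [hX, hY] at h2
      rw [this]
      linarith [h2]
    have hd2 : deriv u (2*tb - t1) = -p1 := hKmono.injective heq2
    obtain ⟨ψ, S, L, hS, hleft, hlip⟩ := aux_mk_lip hK hK' hf p1 (u t1) (hupos t1 ht1c)
    have hXev : ∀ᶠ t in nhds t1,
        HasDerivAt X ((fun q : ℝ × ℝ => (ψ q.2, f q.1)) (X t)) t ∧ X t ∈ S := by
      have hSX : S ∈ nhds (X t1) := hS
      filter_upwards [(sol_derivContAt hu1 ht1c).eventually hleft,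
        isOpen_Ioo.mem_nhds ht1c, (hcXat ht1c).preimage_mem_nhds hSX] with t hψt htio htS
      refine ⟨?_, htS⟩
      have := (sol_hasDeriv hu1 htio).prodMk (hueq t htio)
      simpa [hX, hψt] using this
    have hYev : ∀ᶠ t in nhds t1,
        HasDerivAt Y ((fun q : ℝ × ℝ => (ψ q.2, f q.1)) (Y t)) t ∧ Y t ∈ S := by
      have hSY : S ∈ nhds (Y t1) := by rw [← heq]; exact hS
      have hcont2 : ContinuousAt (fun t => -(deriv u (2*tb - t))) t1 := by
        exact ((sol_derivContAt hu1 ht1c').comp (haff t1)).neg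
      have hval : -(deriv u (2*tb - t1)) = p1 := by rw [hd2]; ring
      have htd : Tendsto (fun t => -(deriv u (2*tb - t))) (nhds t1) (nhds p1) := by
        rw [← hval]; exact hcont2
      have hev1 : ∀ᶠ t in nhds t1, ψ (K (-(deriv u (2*tb - t)))) = -(deriv u (2*tb - t)) :=
        htd.eventually hleft
      filter_upwards [hev1,
        (haff t1).eventually (isOpen_Ioo.mem_nhds ht1c'),
        (hcYat ht1).preimage_mem_nhds hSY] with t hψt htio htS
      refine ⟨?_, htS⟩
      have hY1 : HasDerivAt (fun s => u (2*tb - s)) (deriv u (2*tb - t) * (-1)) t :=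
        (sol_hasDeriv hu1 htio).comp t (haffd t)
      have hY2 : HasDerivAt (fun s => 2*K 0 - K (deriv u (2*tb - s)))
          (0 - (f (u (2*tb - t)) * (-1))) t :=
        (hasDerivAt_const t (2*K 0)).sub ((hueq _ htio).comp t (haffd t))
      have hpair := hY1.prodMk hY2
      have hv2 : 2*K 0 - K (deriv u (2*tb - t)) = K (-(deriv u (2*tb - t))) := by
        have := hKsum (deriv u (2*tb - t))
        have h2 := hKsum (-(deriv u (2*tb - t)))
        linarith [hKsum (deriv u (2*tb - t))]
      have : ψ ((Y t).2) = deriv u (2*tb - t) * (-1) := by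
        simp only [hY]
        rw [hv2, hψt]
        ring
      simp only [hY] at hpair ⊢
      rw [this]
      convert hpair using 2
      ring
    exact ODE_solution_unique_of_eventually (Filter.Eventually.of_forall fun _ => hlip) hXev hYev heq
  -- starting point
  have hstart : X tb = Y tb := by
    have harg : 2*tb - tb = tb := by ring
    simp only [hX, hY, harg, heq0, Prod.mk.injEq]
    exact ⟨trivial, by ring⟩
  have hEq : Set.EqOn X Y (Set.Ioo 0 (2*tb)) :=
    aux_clopen hcX hcY hloc ⟨htb0, by linarith⟩ hstart
  -- contradiction by taking limits t → (2 tb)⁻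
  have h2tbIoo : (2*tb) ∈ Set.Ioo 0 c := ⟨by linarith, h2tb⟩
  have hA : Tendsto u (nhdsWithin (2*tb) (Set.Iio (2*tb))) (nhds (u (2*tb))) :=
    (hcu h2tbIoo).continuousWithinAt
  have hmaps : Tendsto (fun t => 2*tb - t) (nhdsWithin (2*tb) (Set.Iio (2*tb)))
      (nhdsWithin 0 (Set.Ioi 0)) := by
    apply tendsto_nhdsWithin_of_tendsto_nhds_of_eventually_within
    · have : Tendsto (fun t => 2*tb - t) (nhds (2*tb)) (nhds (2*tb - 2*tb)) :=
        (haff (2*tb)).tendsto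
      rw [sub_self] at this
      exact this.mono_left nhdsWithin_le_nhds
    · filter_upwards [self_mem_nhdsWithin] with t ht
      exact sub_pos.2 (Set.mem_Iio.1 ht)
  have hB : Tendsto (fun t => u (2*tb - t)) (nhdsWithin (2*tb) (Set.Iio (2*tb))) (nhds 0) :=
    (sol_tendsto0 hc hu1 hu0).comp hmaps
  have heqf : u =ᶠ[nhdsWithin (2*tb) (Set.Iio (2*tb))] (fun t => u (2*tb - t)) := by
    filter_upwards [Ioo_mem_nhdsLT_of_mem (show (2*tb) ∈ Set.Ioc (0:ℝ) (2*tb) from ⟨by linarith, le_rfl⟩)] with t ht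
    exact congrArg Prod.fst (hEq ht)
  have : u (2*tb) = 0 := tendsto_nhds_unique (hA.congr' heqf) hB
  exact absurd this (ne_of_gt (hupos _ h2tbIoo))

lemma sol_derivpos (hK : ContDiff ℝ 1 K) (hK' : ∀ p : ℝ, 0 < deriv K p)
    (hKeven : ∀ p : ℝ, deriv K (-p) = deriv K p)
    (hf : ∀ s : Set ℝ, s ⊆ Set.Ioi 0 → IsCompact s → ∃ L : NNReal, LipschitzOnWith L f s)
    (hc : 0 < c) (hu1 : ContDiffOn ℝ 1 u (Set.Ico 0 c))
    (hupos : ∀ t ∈ Set.Ioo 0 c, 0 < u t)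
    (hueq : ∀ t ∈ Set.Ioo 0 c, HasDerivAt (fun τ => K (deriv u τ)) (f (u t)) t)
    (hu0 : u 0 = 0) :
    ∀ t ∈ Set.Ioo 0 (c/2), 0 < deriv u t := by
  have hnc := sol_nocrit hK hK' hKeven hf hc hu1 hupos hueq hu0
  have hc4 : (0:ℝ) < c/4 := by linarith
  obtain ⟨ξ, hξ, hslope⟩ := exists_hasDerivAt_eq_slope u (deriv u) hc4
    (hu1.continuousOn.mono (fun x hx => ⟨hx.1, lt_of_le_of_lt hx.2 (by linarith)⟩))
    (fun x hx => sol_hasDeriv hu1 ⟨hx.1, hx.2.trans (by linarith)⟩)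
  have hξpos : 0 < deriv u ξ := by
    rw [hslope, hu0, sub_zero, sub_zero]
    exact div_pos (hupos _ ⟨by linarith [hξ.1], by linarith⟩) hc4
  have hξmem : ξ ∈ Set.Ioo 0 (c/2) := ⟨hξ.1, by linarith [hξ.2]⟩
  intro t ht
  rcases (hnc t ht).lt_or_gt with hlt | hgt
  · exfalso
    have hsub : Set.uIcc ξ t ⊆ Set.Ioo 0 (c/2) :=
      Set.ordConnected_Ioo.uIcc_subset hξmem ht
    have hcont : ContinuousOn (deriv u) (Set.uIcc ξ t) := by
      intro x hx
      exact (sol_derivContAt hu1 (let h := hsub hx; ⟨h.1, by linarith [h.2]⟩)).continuousWithinAt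
    have h0mem : (0:ℝ) ∈ Set.uIcc (deriv u ξ) (deriv u t) :=
      Set.mem_uIcc.2 (Or.inr ⟨hlt.le, hξpos.le⟩)
    obtain ⟨x, hx, hx0⟩ := intermediate_value_uIcc hcont h0mem
    exact hnc x (hsub hx) hx0
  · exact hgt

lemma sol_F_tendsto (hK : ContDiff ℝ 1 K) (hK' : ∀ p : ℝ, 0 < deriv K p)
    (hf : ∀ s : Set ℝ, s ⊆ Set.Ioi 0 → IsCompact s → ∃ L : NNReal, LipschitzOnWith L f s)
    (hc : 0 < c) (hu1 : ContDiffOn ℝ 1 u (Set.Ico 0 c))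
    (hupos : ∀ t ∈ Set.Ioo 0 c, 0 < u t)
    (hueq : ∀ t ∈ Set.Ioo 0 c, HasDerivAt (fun τ => K (deriv u τ)) (f (u t)) t)
    (hu0 : u 0 = 0) :
    Tendsto (auxF f) (nhdsWithin 0 (Set.Ioi 0))
      (nhds (auxPhi K (derivWithin u (Set.Ico 0 c) 0)
        - (auxPhi K (deriv u (c/2)) - auxF f (u (c/2))))) := by
  set a := derivWithin u (Set.Ico 0 c) 0 with ha
  set E := auxPhi K (deriv u (c/2)) - auxF f (u (c/2)) with hE
  have hcmem : c/2 ∈ Set.Ioo 0 c := ⟨by linarith, by linarith⟩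
  have hEconst : ∀ t ∈ Set.Ioo 0 c, auxPhi K (deriv u t) - auxF f (u t) = E :=
    fun t ht => sol_energy hK hK' hf hu1 hupos hueq t ht (c/2) hcmem
  have hPhiTend : Tendsto (fun t => auxPhi K (deriv u t)) (nhdsWithin 0 (Set.Ioi 0))
      (nhds (auxPhi K a)) :=
    ((auxPhi_hasDerivAt hK a).continuousAt).tendsto.comp (sol_deriv_tendsto hc hu1)
  have hFu : Tendsto (fun t => auxF f (u t)) (nhdsWithin 0 (Set.Ioi 0))
      (nhds (auxPhi K a - E)) := by
    have hev : (fun t => auxPhi K (deriv u t) - E) =ᶠ[nhdsWithin 0 (Set.Ioi 0)]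
        (fun t => auxF f (u t)) := by
      filter_upwards [Ioo_mem_nhdsGT_of_mem (Set.mem_Ico.2 ⟨le_rfl, hc⟩)] with t ht
      have := hEconst t ht; linarith
    exact Tendsto.congr' hev (hPhiTend.sub_const E)
  intro s hs
  have hmem : {t : ℝ | auxF f (u t) ∈ s} ∩ Set.Ioo 0 c ∈ nhdsWithin 0 (Set.Ioi 0) :=
    Filter.inter_mem (hFu hs) (Ioo_mem_nhdsGT_of_mem (Set.mem_Ico.2 ⟨le_rfl, hc⟩))
  obtain ⟨t₁, ht₁, hsub⟩ := mem_nhdsGT_iff_exists_Ioo_subset.1 hmem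
  have ht₁0 : (0:ℝ) < t₁ := ht₁
  set τ := t₁/2 with hτdef
  have hτmem : τ ∈ Set.Ioo (0:ℝ) t₁ := ⟨by positivity, by linarith⟩
  have hτc : τ ∈ Set.Ioo 0 c := (hsub hτmem).2
  have huτ : 0 < u τ := hupos τ hτc
  apply Filter.mem_of_superset (Ioo_mem_nhdsGT_of_mem (Set.mem_Ico.2 ⟨le_rfl, huτ⟩))
  intro y hy
  have hIVT : Set.Ioo (u 0) (u τ) ⊆ u '' Set.Ioo 0 τ := by
    apply intermediate_value_Ioo (le_of_lt hτmem.1)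
    exact hu1.continuousOn.mono (fun x hx => ⟨hx.1, lt_of_le_of_lt hx.2 hτc.2⟩)
  rw [hu0] at hIVT
  obtain ⟨x, hx, hxy⟩ := hIVT hy
  have hxt₁ : x ∈ Set.Ioo 0 t₁ := ⟨hx.1, by linarith [hx.2]⟩
  have hmem2 := (hsub hxt₁).1
  simp only [Set.mem_setOf_eq, hxy] at hmem2
  exact hmem2

end Sol

lemma aux_ext {c : ℝ} (hc : 0 < c) {w : ℝ → ℝ} (hw1 : ContDiffOn ℝ 1 w (Set.Ico 0 c))
    (hw0 : w 0 = 0) (hwpos : ∀ t ∈ Set.Ioo 0 c, 0 < w t)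
    (hmono : StrictMonoOn w (Set.Icc 0 (c/4))) :
    ∃ g : ℝ → ℝ, StrictMono g ∧ Continuous g ∧ Function.Surjective g ∧
      (∀ t ∈ Set.Icc 0 (c/4), g t = w t) ∧ g 0 = 0 := by
  classical
  set q : ℝ → ℝ := fun t => w (min t (c/4)) + max (t - c/4) 0 with hq
  set g : ℝ → ℝ := (Set.Iic (0:ℝ)).piecewise id q with hg
  have hc4 : (0:ℝ) < c/4 := by linarith
  have hc4c : c/4 < c := by linarith
  have hIccIco : Set.Icc (0:ℝ) (c/4) ⊆ Set.Ico 0 c :=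
    fun x hx => ⟨hx.1, lt_of_le_of_lt hx.2 hc4c⟩
  have hq0 : q 0 = 0 := by
    simp only [hq]
    rw [min_eq_left hc4.le, hw0, max_eq_right (by linarith)]
    ring
  have hgq : ∀ t : ℝ, 0 < t → g t = q t := by
    intro t ht
    simp only [hg]
    rw [Set.piecewise_eq_of_notMem]
    simpa using ht
  have hgid : ∀ t : ℝ, t ≤ 0 → g t = t := by
    intro t ht
    simp only [hg]
    rw [Set.piecewise_eq_of_mem]
    · rfl
    · exact ht
  have hgw : ∀ t ∈ Set.Icc (0:ℝ) (c/4), g t = w t := by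
    intro t ht
    rcases eq_or_lt_of_le ht.1 with h | h
    · rw [hgid t (le_of_eq h.symm), ← h, hw0]
    · rw [hgq t h]
      simp only [hq]
      rw [min_eq_left ht.2, max_eq_right (by linarith [ht.2])]
      ring
  have hqcont : ContinuousOn q (Set.Ici (0:ℝ)) := by
    apply ContinuousOn.add
    · apply ContinuousOn.comp (hw1.continuousOn.mono hIccIco)
        ((continuous_id.min continuous_const).continuousOn)
      intro x hx
      exact ⟨le_min hx (le_of_lt hc4), min_le_right _ _⟩
    · exact ((continuous_id.sub continuous_const).max continuous_const).continuousOn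
  have hgcont : Continuous g := by
    apply continuous_piecewise
    · intro a ha
      rw [frontier_Iic] at ha
      simp only [Set.mem_singleton_iff] at ha
      subst ha
      simp [hq0]
    · exact continuous_id.continuousOn
    · rw [compl_Iic, closure_Ioi]
      exact hqcont
  have hqpos : ∀ t : ℝ, 0 < t → 0 < q t := by
    intro t ht
    have h1 : 0 < w (min t (c/4)) := hwpos _ ⟨lt_min ht hc4, lt_of_le_of_lt (min_le_right _ _) hc4c⟩
    have h2 : (0:ℝ) ≤ max (t - c/4) 0 := le_max_right _ _
    simp only [hq]; linarith
  have hmono' : StrictMono g := by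
    intro x y hxy
    rcases le_or_gt x 0 with hx | hx
    · rcases le_or_gt y 0 with hy | hy
      · rw [hgid x hx, hgid y hy]; exact hxy
      · rw [hgid x hx, hgq y hy]
        exact lt_of_le_of_lt hx (hqpos y hy)
    · have hy : 0 < y := hx.trans hxy
      rw [hgq x hx, hgq y hy]
      simp only [hq]
      rcases le_or_gt y (c/4) with hyle | hygt
      · rw [min_eq_left (by linarith : x ≤ c/4), min_eq_left hyle,
          max_eq_right (by linarith : x - c/4 ≤ 0), max_eq_right (by linarith : y - c/4 ≤ 0)]
        have := hmono ⟨hx.le, by linarith⟩ ⟨hy.le, hyle⟩ hxy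
        linarith
      · rcases le_or_gt x (c/4) with hxle | hxgt
        · rw [min_eq_left hxle, min_eq_right (by linarith : c/4 ≤ y),
            max_eq_right (by linarith : x - c/4 ≤ 0), max_eq_left (by linarith : (0:ℝ) ≤ y - c/4)]
          have h1 : w x ≤ w (c/4) := by
            rcases eq_or_lt_of_le hxle with h | h
            · rw [h]
            · exact (hmono ⟨hx.le, hxle⟩ ⟨hc4.le, le_rfl⟩ h).le
          linarith
        · rw [min_eq_right (by linarith : c/4 ≤ x), min_eq_right (by linarith : c/4 ≤ y),
            max_eq_left (by linarith : (0:ℝ) ≤ x - c/4), max_eq_left (by linarith : (0:ℝ) ≤ y - c/4)]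
          linarith
  have hsurj : Function.Surjective g := by
    apply Continuous.surjective hgcont
    · have hbase : Tendsto (fun t : ℝ => w (c/4) + (t - c/4)) atTop atTop := by
        apply tendsto_atTop_add_const_left
        exact tendsto_atTop_add_const_right _ _ tendsto_id
      apply Tendsto.congr' _ hbase
      filter_upwards [eventually_gt_atTop (c/4)] with t ht
      rw [hgq t (hc4.trans ht)]
      simp only [hq]
      rw [min_eq_right ht.le, max_eq_left (by linarith : (0:ℝ) ≤ t - c/4)]
    · apply Tendsto.congr' _ (tendsto_id (x := atBot))
      filter_upwards [eventually_le_atBot (0:ℝ)] with t ht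
      rw [hgid t ht]; rfl
  exact ⟨g, hmono', hgcont, hsurj, hgw, by rw [hgid 0 le_rfl]⟩

/-- Lemma 5.3 of Li–Nirenberg, extending Lemma 2.3. -/
theorem stmt_12 (K : ℝ → ℝ) (hK : ContDiff ℝ 1 K) (hK' : ∀ p : ℝ, 0 < deriv K p)
    (hKeven : ∀ p : ℝ, deriv K (-p) = deriv K p)
    (f : ℝ → ℝ)
    (hf : ∀ s : Set ℝ, s ⊆ Set.Ioi 0 → IsCompact s → ∃ L : NNReal, LipschitzOnWith L f s)
    (c : ℝ) (hc : 0 < c) (u w : ℝ → ℝ)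
    (hu1 : ContDiffOn ℝ 1 u (Set.Ico 0 c)) (hw1 : ContDiffOn ℝ 1 w (Set.Ico 0 c))
    (hupos : ∀ t ∈ Set.Ioo 0 c, 0 < u t) (hwpos : ∀ t ∈ Set.Ioo 0 c, 0 < w t)
    (hueq : ∀ t ∈ Set.Ioo 0 c, HasDerivAt (fun τ => K (deriv u τ)) (f (u t)) t)
    (hweq : ∀ t ∈ Set.Ioo 0 c, HasDerivAt (fun τ => K (deriv w τ)) (f (w t)) t)
    (hu0 : u 0 = 0) (hw0 : w 0 = 0)
    (h'0 : derivWithin u (Set.Ico 0 c) 0 = derivWithin w (Set.Ico 0 c) 0) :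
    ∀ t ∈ Set.Ico 0 c, u t = w t := by
  have hc2 : (0:ℝ) < c/2 := by linarith
  have hc4 : (0:ℝ) < c/4 := by linarith
  have hcmem : c/2 ∈ Set.Ioo 0 c := ⟨hc2, by linarith⟩
  have hKmono : StrictMono K := strictMono_of_deriv_pos hK'
  have hup : ∀ t ∈ Set.Ioo 0 (c/2), 0 < deriv u t :=
    sol_derivpos hK hK' hKeven hf hc hu1 hupos hueq hu0
  have hwp : ∀ t ∈ Set.Ioo 0 (c/2), 0 < deriv w t :=
    sol_derivpos hK hK' hKeven hf hc hw1 hwpos hweq hw0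
  set Eu := auxPhi K (deriv u (c/2)) - auxF f (u (c/2)) with hEudef
  set Ew := auxPhi K (deriv w (c/2)) - auxF f (w (c/2)) with hEwdef
  have hEuconst : ∀ t ∈ Set.Ioo 0 c, auxPhi K (deriv u t) - auxF f (u t) = Eu :=
    fun t ht => sol_energy hK hK' hf hu1 hupos hueq t ht _ hcmem
  have hEwconst : ∀ t ∈ Set.Ioo 0 c, auxPhi K (deriv w t) - auxF f (w t) = Ew :=
    fun t ht => sol_energy hK hK' hf hw1 hwpos hweq t ht _ hcmem
  have hF_u := sol_F_tendsto hK hK' hf hc hu1 hupos hueq hu0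
  have hF_w := sol_F_tendsto hK hK' hf hc hw1 hwpos hweq hw0
  rw [← h'0] at hF_w
  have hE_eq : Eu = Ew := by
    have huniq := tendsto_nhds_unique hF_u hF_w
    rw [← hEudef, ← hEwdef] at huniq
    linarith
  have hmonou : StrictMonoOn u (Set.Icc 0 (c/4)) := by
    apply strictMonoOn_of_deriv_pos (convex_Icc _ _)
      (hu1.continuousOn.mono (fun x hx => ⟨hx.1, lt_of_le_of_lt hx.2 (by linarith)⟩))
    intro x hx
    rw [interior_Icc] at hx
    exact hup x ⟨hx.1, by linarith [hx.2]⟩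
  have hmonow : StrictMonoOn w (Set.Icc 0 (c/4)) := by
    apply strictMonoOn_of_deriv_pos (convex_Icc _ _)
      (hw1.continuousOn.mono (fun x hx => ⟨hx.1, lt_of_le_of_lt hx.2 (by linarith)⟩))
    intro x hx
    rw [interior_Icc] at hx
    exact hwp x ⟨hx.1, by linarith [hx.2]⟩
  obtain ⟨g, hgmono, hgcont, hgsurj, hgw, hg0⟩ := aux_ext hc hw1 hw0 hwpos hmonow
  set e := StrictMono.orderIsoOfSurjective g hgmono hgsurj with hedef
  have hsymm_cont : Continuous (⇑e.symm) := OrderIso.continuous e.symm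
  have happly : ∀ x : ℝ, e x = g x := fun x => rfl
  have hsymm_g : ∀ y : ℝ, g (e.symm y) = y := fun y => e.apply_symm_apply y
  have hsymm_left : ∀ x : ℝ, e.symm (g x) = x := fun x => e.symm_apply_apply x
  set m := min (u (c/4)) (w (c/4)) with hmdef
  have hmpos : 0 < m :=
    lt_min (hupos _ ⟨hc4, by linarith⟩) (hwpos _ ⟨hc4, by linarith⟩)
  have hev : ∀ᶠ t in nhdsWithin 0 (Set.Ioi 0), u t < m :=
    (sol_tendsto0 hc hu1 hu0).eventually_lt_const hmpos
  obtain ⟨δ₀, hδ₀pos, hδsub⟩ := mem_nhdsGT_iff_exists_Ioo_subset.1 hev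
  set δ := min δ₀ (c/4) with hδdef
  have hδpos : 0 < δ := lt_min hδ₀pos hc4
  have hδle : δ ≤ c/4 := min_le_right _ _
  have key : ∀ t ∈ Set.Ioo 0 δ, HasDerivAt (fun s => e.symm (u s)) 1 t := by
    intro t ht
    have htc2 : t ∈ Set.Ioo 0 (c/2) := ⟨ht.1, by linarith [ht.2, hδle]⟩
    have htc : t ∈ Set.Ioo 0 c := ⟨ht.1, by linarith [htc2.2]⟩
    have hty1 : 0 < u t := hupos t htc
    have hty2 : u t < m := hδsub ⟨ht.1, lt_of_lt_of_le ht.2 (min_le_left _ _)⟩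
    set y0 := u t with hy0def
    set x0 := e.symm y0 with hx0def
    have hgx0 : g x0 = y0 := hsymm_g y0
    have hx0pos : 0 < x0 := by
      by_contra h
      push_neg at h
      have h1 : g x0 ≤ g 0 := hgmono.monotone h
      rw [hg0, hgx0] at h1
      linarith
    have hx0lt : x0 < c/4 := by
      by_contra h
      push_neg at h
      have h1 : g (c/4) ≤ g x0 := hgmono.monotone h
      rw [hgx0] at h1
      have h2 : g (c/4) = w (c/4) := hgw (c/4) ⟨hc4.le, le_rfl⟩
      have h3 : m ≤ w (c/4) := min_le_right _ _
      rw [h2] at h1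
      linarith
    have hx0c : x0 ∈ Set.Ioo 0 c := ⟨hx0pos, by linarith⟩
    have hx0c2 : x0 ∈ Set.Ioo 0 (c/2) := ⟨hx0pos, by linarith⟩
    have hgev : g =ᶠ[nhds x0] w := by
      filter_upwards [Ioo_mem_nhds hx0pos hx0lt] with s hs
      exact hgw s ⟨hs.1.le, hs.2.le⟩
    have hdg : HasDerivAt g (deriv w x0) x0 :=
      (sol_hasDeriv hw1 hx0c).congr_of_eventuallyEq hgev
    have hwx0pos : 0 < deriv w x0 := hwp x0 hx0c2
    have hinv : HasDerivAt (⇑e.symm) (deriv w x0)⁻¹ y0 :=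
      HasDerivAt.of_local_left_inverse hsymm_cont.continuousAt hdg hwx0pos.ne'
        (Filter.Eventually.of_forall hsymm_g)
    have hchain : HasDerivAt (fun s => e.symm (u s)) ((deriv w x0)⁻¹ * deriv u t) t :=
      hinv.comp t (sol_hasDeriv hu1 htc)
    have hwx0 : w x0 = u t := by
      rw [← hgw x0 ⟨hx0pos.le, hx0lt.le⟩]
      exact hgx0
    have hPhieq : auxPhi K (deriv u t) = auxPhi K (deriv w x0) := by
      have h1 := hEuconst t htc
      have h2 := hEwconst x0 hx0c
      rw [hwx0] at h2
      rw [hE_eq] at h1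
      linarith
    have hdeq : deriv u t = deriv w x0 :=
      (auxPhi_strictMonoOn hK hK').injOn (hup t htc2).le hwx0pos.le hPhieq
    rw [hdeq, inv_mul_cancel₀ hwx0pos.ne'] at hchain
    exact hchain
  have hconstθ : ∀ t₁ ∈ Set.Ioo 0 δ, ∀ t₂ ∈ Set.Ioo 0 δ,
      e.symm (u t₁) - t₁ = e.symm (u t₂) - t₂ := by
    apply aux_const
    intro t ht
    exact ((key t ht).sub (hasDerivAt_id' t)).congr_deriv (sub_self 1)
  have hθlim : Tendsto (fun t => e.symm (u t) - t) (nhdsWithin 0 (Set.Ioi 0)) (nhds 0) := by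
    have h1 : Tendsto (fun t => e.symm (u t)) (nhdsWithin 0 (Set.Ioi 0)) (nhds (e.symm 0)) :=
      (hsymm_cont.continuousAt.tendsto).comp (sol_tendsto0 hc hu1 hu0)
    have h2 : e.symm (0:ℝ) = 0 := by
      conv_lhs => rw [← hg0]
      exact hsymm_left 0
    rw [h2] at h1
    have h3 : Tendsto (fun t : ℝ => t) (nhdsWithin 0 (Set.Ioi 0)) (nhds 0) :=
      (continuous_id.tendsto 0).mono_left nhdsWithin_le_nhds
    simpa using h1.sub h3
  have huw : ∀ t ∈ Set.Ioo 0 δ, u t = w t := by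
    intro t ht
    have hevconst : (fun s => e.symm (u s) - s) =ᶠ[nhdsWithin 0 (Set.Ioi 0)]
        (fun _ => e.symm (u t) - t) := by
      filter_upwards [Ioo_mem_nhdsGT_of_mem (Set.mem_Ico.2 ⟨le_rfl, hδpos⟩)] with s hs
      exact hconstθ s hs t ht
    have hlim2 : Tendsto (fun _ : ℝ => e.symm (u t) - t) (nhdsWithin 0 (Set.Ioi 0)) (nhds 0) :=
      hθlim.congr' hevconst
    have hconst0 : e.symm (u t) - t = 0 :=
      tendsto_nhds_unique tendsto_const_nhds hlim2
    have hsymmut : e.symm (u t) = t := by linarith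
    have hut : u t = g t := by
      conv_lhs => rw [← hsymm_g (u t)]
      rw [hsymmut]
    rw [hut]
    exact hgw t ⟨ht.1.le, by linarith [ht.2, hδle]⟩
  -- propagate to all of Ioo 0 c
  set X : ℝ → ℝ × ℝ := fun t => (u t, K (deriv u t)) with hX
  set Y : ℝ → ℝ × ℝ := fun t => (w t, K (deriv w t)) with hY
  have hcXat : ∀ {t : ℝ}, t ∈ Set.Ioo 0 c → ContinuousAt X t := fun ht =>
    ((sol_hasDeriv hu1 ht).continuousAt).prodMk
      ((hK.continuous.continuousAt).comp (sol_derivContAt hu1 ht))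
  have hcYat : ∀ {t : ℝ}, t ∈ Set.Ioo 0 c → ContinuousAt Y t := fun ht =>
    ((sol_hasDeriv hw1 ht).continuousAt).prodMk
      ((hK.continuous.continuousAt).comp (sol_derivContAt hw1 ht))
  have hloc : ∀ t1 ∈ Set.Ioo 0 c, X t1 = Y t1 → X =ᶠ[nhds t1] Y := by
    intro t1 ht1 heq
    set p1 := deriv u t1 with hp1
    have heq1 : u t1 = w t1 := (Prod.ext_iff.1 heq).1
    have heq2 : deriv w t1 = p1 := by
      have h2 := (Prod.ext_iff.1 heq).2
      exact (hKmono.injective h2.symm)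
    obtain ⟨ψ, S, L, hS, hleft, hlip⟩ := aux_mk_lip hK hK' hf p1 (u t1) (hupos t1 ht1)
    have hXev : ∀ᶠ t in nhds t1,
        HasDerivAt X ((fun q : ℝ × ℝ => (ψ q.2, f q.1)) (X t)) t ∧ X t ∈ S := by
      have hSX : S ∈ nhds (X t1) := hS
      filter_upwards [(sol_derivContAt hu1 ht1).eventually hleft,
        isOpen_Ioo.mem_nhds ht1, (hcXat ht1).preimage_mem_nhds hSX] with t hψt htio htS
      refine ⟨?_, htS⟩
      have := (sol_hasDeriv hu1 htio).prodMk (hueq t htio)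
      simpa [hX, hψt] using this
    have hYev : ∀ᶠ t in nhds t1,
        HasDerivAt Y ((fun q : ℝ × ℝ => (ψ q.2, f q.1)) (Y t)) t ∧ Y t ∈ S := by
      have hSY : S ∈ nhds (Y t1) := by rw [← heq]; exact hS
      have htd : Tendsto (deriv w) (nhds t1) (nhds p1) := by
        rw [← heq2]
        exact sol_derivContAt hw1 ht1
      filter_upwards [htd.eventually hleft,
        isOpen_Ioo.mem_nhds ht1, (hcYat ht1).preimage_mem_nhds hSY] with t hψt htio htS
      refine ⟨?_, htS⟩
      have := (sol_hasDeriv hw1 htio).prodMk (hweq t htio)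
      simpa [hY, hψt] using this
    exact ODE_solution_unique_of_eventually (Filter.Eventually.of_forall fun _ => hlip) hXev hYev heq
  have hδ2 : δ/2 ∈ Set.Ioo 0 c := ⟨by linarith, by linarith [hδle]⟩
  have hstart : X (δ/2) = Y (δ/2) := by
    have h1 : u (δ/2) = w (δ/2) := huw (δ/2) ⟨by linarith, by linarith⟩
    have h2 : deriv u (δ/2) = deriv w (δ/2) := by
      apply Filter.EventuallyEq.deriv_eq
      filter_upwards [Ioo_mem_nhds (by linarith : (0:ℝ) < δ/2) (by linarith : δ/2 < δ)] with s hs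
      exact huw s hs
    simp only [hX, hY, h1, h2, Prod.mk.injEq]
  have hEqXY : Set.EqOn X Y (Set.Ioo 0 c) :=
    aux_clopen (fun t ht => (hcXat ht).continuousWithinAt)
      (fun t ht => (hcYat ht).continuousWithinAt) hloc hδ2 hstart
  intro t ht
  rcases eq_or_lt_of_le ht.1 with h0 | h0
  · rw [← h0, hu0, hw0]
  · exact (Prod.ext_iff.1 (hEqXY ⟨h0, ht.2⟩)).1
end
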